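/- arXiv:2305.19272 — 5 statements merged into one kernel-verified Lean document; each statement's English description precedes it below -/
import Mathlib

section
/- For every integer n ≥ 0, the Hurwitz class number satisfies H(5^4·n + 5^3) ≡ 0 (mod 3). -/
set_option maxHeartbeats 4000000
set_option maxRecDepth 10000



open Classical in
/-- The Hurwitz class number `H(N)`: the number of `SL₂(ℤ)`-classes of positive definite
integral binary quadratic forms of discriminant `-N` (counted via reduced representatives),
weighted by `2 / #Aut`, with `H(0) = -1/12`. -/
noncomputable def hurwitzClassNumber (N : ℕ) : ℚ :=
  if N = 0 then (-1 : ℚ) / 12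
  else
    ∑ t ∈ (Finset.Icc 1 N ×ˢ Finset.Icc (-(N : ℤ)) (N : ℤ) ×ˢ Finset.Icc 1 N).filter
        (fun t =>
          t.2.1 ^ 2 - 4 * (t.1 : ℤ) * (t.2.2 : ℤ) = -(N : ℤ) ∧
          |t.2.1| ≤ (t.1 : ℤ) ∧ t.1 ≤ t.2.2 ∧
          ((|t.2.1| = (t.1 : ℤ) ∨ t.1 = t.2.2) → 0 ≤ t.2.1)),
      (if t.2.1 = (t.1 : ℤ) ∧ t.1 = t.2.2 then (1 : ℚ) / 3
       else if t.2.1 = 0 ∧ t.1 = t.2.2 then (1 : ℚ) / 2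
       else 1)

/-- Extension of the Hurwitz class number to integer arguments (zero for negative arguments). -/
noncomputable def hurwitzClassNumberZ (D : ℤ) : ℚ :=
  if 0 ≤ D then hurwitzClassNumber D.toNat else 0

/-- `x ≡ 0 (mod ℓ)` for a rational `x`: `x` is `ℓ`-integral and `ℓ` divides `x`,
i.e. `x = ℓ * y` with `y` an `ℓ`-integral rational. -/
def RatModZero (ℓ : ℕ) (x : ℚ) : Prop :=
  ∃ y : ℚ, x = (ℓ : ℚ) * y ∧ ¬ (ℓ ∣ y.den)


section HurwitzAux
def act (f : ℤ×ℤ×ℤ) (p q r s : ℤ) : ℤ×ℤ×ℤ :=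
  (f.1*p^2 + f.2.1*p*r + f.2.2*r^2,
   2*f.1*p*q + f.2.1*(p*s+q*r) + 2*f.2.2*r*s,
   f.1*q^2 + f.2.1*q*s + f.2.2*s^2)

lemma act_comp (f : ℤ×ℤ×ℤ) (p q r s p' q' r' s' : ℤ) :
    act (act f p q r s) p' q' r' s' =
      act f (p*p'+q*r') (p*q'+q*s') (r*p'+s*r') (r*q'+s*s') := by
  unfold act; refine Prod.ext ?_ (Prod.ext ?_ ?_) <;> dsimp <;> ring

lemma act_disc (f : ℤ×ℤ×ℤ) (p q r s : ℤ) :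
    (act f p q r s).2.1^2 - 4*(act f p q r s).1*(act f p q r s).2.2
      = (p*s-q*r)^2 * (f.2.1^2 - 4*f.1*f.2.2) := by
  unfold act; dsimp; ring

lemma act_id (f : ℤ×ℤ×ℤ) : act f 1 0 0 1 = f := by
  unfold act; refine Prod.ext ?_ (Prod.ext ?_ ?_) <;> dsimp <;> ring

def Red (N : ℤ) (f : ℤ×ℤ×ℤ) : Prop :=
  f.2.1^2 - 4*f.1*f.2.2 = -N ∧ |f.2.1| ≤ f.1 ∧ f.1 ≤ f.2.2 ∧
    ((|f.2.1| = f.1 ∨ f.1 = f.2.2) → 0 ≤ f.2.1)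


lemma sq_one_le {x : ℤ} (hx : x ≠ 0) : 1 ≤ x^2 := by
  have h2 : 1 ≤ |x| := abs_pos.mpr hx
  calc (1:ℤ) = 1^2 := by ring
  _ ≤ |x|^2 := by nlinarith
  _ = x^2 := sq_abs x

lemma red_pos {N a b c : ℤ} (hN : 1 ≤ N) (h : Red N (a,b,c)) : 1 ≤ a := by
  obtain ⟨hd, h1, h2, _⟩ := h
  simp only at hd h1 h2
  by_contra hc
  push_neg at hc
  have h0 : 0 ≤ a := le_trans (abs_nonneg b) h1
  have ha : a = 0 := by omega
  have hb : b = 0 := by subst ha; exact abs_nonpos_iff.mp h1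
  subst ha; subst hb; simp at hd; omega

private lemma key_e1 {a b c : ℤ} (h1 : |b| ≤ a) (x y : ℤ) :
    a*(|x|^2) - a*(|x| * |y|) + c*(|y|^2) ≤ a*x^2 + b*x*y + c*y^2 := by
  have hbxy : -(a * (|x| * |y|)) ≤ b*x*y := by
    have h3 : |b*x*y| ≤ a * (|x| * |y|) := by
      rw [abs_mul, abs_mul, mul_assoc]
      have h4 : (0:ℤ) ≤ |x| * |y| := by positivity
      nlinarith [abs_nonneg b]
    have := neg_abs_le (b*x*y); omega
  have hxx : |x|^2 = x^2 := sq_abs x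
  have hyy : |y|^2 = y^2 := sq_abs y
  rw [hxx, hyy]; linarith

/-- minimum of a reduced form is a -/
lemma red_min {N a b c : ℤ} (hN : 1 ≤ N) (h : Red N (a,b,c)) (x y : ℤ)
    (hxy : ¬(x = 0 ∧ y = 0)) : a ≤ a*x^2 + b*x*y + c*y^2 := by
  have ha : 1 ≤ a := red_pos hN h
  obtain ⟨hd, h1, h2, _⟩ := h
  simp only at hd h1 h2
  have hb1 : -a ≤ b := by have := abs_le.mp h1; omega
  have hb2 : b ≤ a := by have := abs_le.mp h1; omega
  rcases eq_or_ne y 0 with hy | hy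
  · subst hy; have hx : x ≠ 0 := by tauto
    have := sq_one_le hx; nlinarith
  rcases eq_or_ne x 0 with hx | hx
  · subst hx; have := sq_one_le hy; nlinarith
  have e1 := key_e1 (c := c) h1 x y
  have hxx : |x|^2 = x^2 := sq_abs x
  have hyy : |y|^2 = y^2 := sq_abs y
  have hxa : 1 ≤ |x| := abs_pos.mpr hx
  have hya : 1 ≤ |y| := abs_pos.mpr hy
  have hx2 := sq_one_le hx
  have hy2 := sq_one_le hy
  have hy1 : 1 ≤ |y|^2 := by nlinarith
  have hx1 : 1 ≤ |x|^2 := by nlinarith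
  rcases le_or_gt |y| |x| with hc | hc
  · have t1 : 0 ≤ a * |x| * (|x| - |y|) :=
      mul_nonneg (mul_nonneg (by omega) (by omega)) (by omega)
    have t2 : c ≤ c * |y|^2 := le_mul_of_one_le_right (by omega) hy1
    nlinarith [e1, t1, t2]
  · have t3 : a * |x| ≤ c * (|y| - 1) := by
      have u1 : a * |x| ≤ c * |x| := by nlinarith
      have u2 : c * |x| ≤ c * (|y| - 1) := by nlinarith
      linarith
    have t4 : c ≤ c * |y| - a * |x| := by nlinarith
    have t5 : c * |y| - a * |x| ≤ |y| * (c * |y| - a * |x|) :=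
      le_mul_of_one_le_left (by linarith) hya
    have t6 : a ≤ a * |x|^2 := le_mul_of_one_le_right (by omega) hx1
    nlinarith [e1, t4, t5, t6]

/-- if y ≠ 0 the value is at least c -/
lemma red_min2 {N a b c : ℤ} (hN : 1 ≤ N) (h : Red N (a,b,c)) (x y : ℤ)
    (hy : y ≠ 0) : c ≤ a*x^2 + b*x*y + c*y^2 := by
  have ha : 1 ≤ a := red_pos hN h
  obtain ⟨hd, h1, h2, _⟩ := h
  simp only at hd h1 h2
  have hb1 : -a ≤ b := by have := abs_le.mp h1; omega
  have hb2 : b ≤ a := by have := abs_le.mp h1; omega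
  have hy2 := sq_one_le hy
  rcases eq_or_ne x 0 with hx | hx
  · subst hx; nlinarith
  have hx2 := sq_one_le hx
  have e1 := key_e1 (c := c) h1 x y
  have hxx : |x|^2 = x^2 := sq_abs x
  have hyy : |y|^2 = y^2 := sq_abs y
  have hxa : 1 ≤ |x| := abs_pos.mpr hx
  have hya : 1 ≤ |y| := abs_pos.mpr hy
  have hy1 : 1 ≤ |y|^2 := by nlinarith
  have hx1 : 1 ≤ |x|^2 := by nlinarith
  rcases le_or_gt |y| |x| with hc | hc
  · have t1 : 0 ≤ a * |x| * (|x| - |y|) :=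
      mul_nonneg (mul_nonneg (by omega) (by omega)) (by omega)
    have t2 : c ≤ c * |y|^2 := le_mul_of_one_le_right (by omega) hy1
    nlinarith [e1, t1, t2]
  · have t3 : a * |x| ≤ c * (|y| - 1) := by
      have u1 : a * |x| ≤ c * |x| := by nlinarith
      have u2 : c * |x| ≤ c * (|y| - 1) := by nlinarith
      linarith
    have t4 : c ≤ c * |y| - a * |x| := by nlinarith
    have t5 : c * |y| - a * |x| ≤ |y| * (c * |y| - a * |x|) :=
      le_mul_of_one_le_left (by linarith) hya
    have t6 : 0 ≤ a * |x|^2 := by positivity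
    nlinarith [e1, t4, t5, t6]

/-- both coordinates nonzero -/
lemma red_min3 {N a b c : ℤ} (hN : 1 ≤ N) (h : Red N (a,b,c)) (x y : ℤ)
    (hx : x ≠ 0) (hy : y ≠ 0) : a - |b| + c ≤ a*x^2 + b*x*y + c*y^2 := by
  have ha : 1 ≤ a := red_pos hN h
  obtain ⟨hd, h1, h2, _⟩ := h
  simp only at hd h1 h2
  have hy2 := sq_one_le hy
  have hx2 := sq_one_le hx
  have hbxy : -(|b| * (|x| * |y|)) ≤ b*x*y := by
    have h3 : |b*x*y| = |b| * (|x| * |y|) := by rw [abs_mul, abs_mul, mul_assoc]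
    have := neg_abs_le (b*x*y); omega
  have hxx : |x|^2 = x^2 := sq_abs x
  have hyy : |y|^2 = y^2 := sq_abs y
  have hxa : 1 ≤ |x| := abs_pos.mpr hx
  have hya : 1 ≤ |y| := abs_pos.mpr hy
  have hba : |b| ≤ a := h1
  have hb0 : 0 ≤ |b| := abs_nonneg b
  have huv : 1 ≤ |x| * |y| := by nlinarith
  have hy1 : 1 ≤ |y|^2 := by nlinarith
  have t1 : 0 ≤ (a - |b|) * (|x| * |y| - 1) := mul_nonneg (by omega) (by linarith)
  have t2 : 0 ≤ (c - a) * (|y|^2 - 1) := mul_nonneg (by omega) (by linarith)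
  nlinarith [sq_nonneg (|x| - |y|), t1, t2, hbxy]

def Equl (f g : ℤ×ℤ×ℤ) : Prop := ∃ p q r s, p*s - q*r = 1 ∧ act f p q r s = g

lemma equl_refl (f : ℤ×ℤ×ℤ) : Equl f f := ⟨1,0,0,1, by norm_num, act_id f⟩

lemma equl_trans {f g h : ℤ×ℤ×ℤ} (h1 : Equl f g) (h2 : Equl g h) : Equl f h := by
  obtain ⟨p,q,r,s,hd,he⟩ := h1
  obtain ⟨p',q',r',s',hd',he'⟩ := h2
  refine ⟨p*p'+q*r', p*q'+q*s', r*p'+s*r', r*q'+s*s', ?_, ?_⟩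
  · have : (p*p'+q*r')*(r*q'+s*s') - (p*q'+q*s')*(r*p'+s*r')
        = (p*s-q*r)*(p'*s'-q'*r') := by ring
    rw [this, hd, hd']; ring
  · rw [← act_comp, he, he']

lemma equl_symm {f g : ℤ×ℤ×ℤ} (h : Equl f g) : Equl g f := by
  obtain ⟨p,q,r,s,hd,he⟩ := h
  refine ⟨s, -q, -r, p, by linarith [hd]; , ?_⟩
  · rw [← he, act_comp]
    have e1 : p*s+q*(-r) = 1 := by linarith
    have e2 : p*(-q)+q*p = 0 := by ring
    have e3 : r*s+s*(-r) = 0 := by ring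
    have e4 : r*(-q)+s*p = 1 := by linarith
    rw [e1, e2, e3, e4, act_id]

lemma red_exists {N : ℤ} (hN : 1 ≤ N) :
    ∀ f : ℤ×ℤ×ℤ, f.2.1^2 - 4*f.1*f.2.2 = -N → 1 ≤ f.1 →
      ∃ g, Red N g ∧ Equl f g := by
  suffices H : ∀ k : ℕ, ∀ f : ℤ×ℤ×ℤ, f.1.toNat = k →
      f.2.1^2 - 4*f.1*f.2.2 = -N → 1 ≤ f.1 → ∃ g, Red N g ∧ Equl f g by
    intro f hd hp; exact H f.1.toNat f rfl hd hp
  intro k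
  induction k using Nat.strong_induction_on with
  | _ k IH =>
    rintro ⟨a, b, c⟩ hk hd ha
    simp only at hk hd ha
    -- translation step
    set t : ℤ := -((b+a) / (2*a)) with ht
    have h2a : (0:ℤ) < 2*a := by omega
    have hr0 : 0 ≤ (b+a) % (2*a) := Int.emod_nonneg _ (by omega)
    have hr1 : (b+a) % (2*a) < 2*a := Int.emod_lt_of_pos _ h2a
    have hb' : b + 2*a*t = (b+a) % (2*a) - a := by
      have := Int.emod_add_mul_ediv (b+a) (2*a)
      rw [ht]; linarith
    set b' : ℤ := b + 2*a*t with hb'def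
    have hb'1 : -a ≤ b' := by omega
    have hb'2 : b' < a := by omega
    set c' : ℤ := a*t^2 + b*t + c with hc'
    have hg1 : act (a,b,c) 1 t 0 1 = (a, b', c') := by
      unfold act; simp only [Prod.mk.injEq]
      refine ⟨by ring, by rw [hb'def]; ring, by rw [hc']; ring⟩
    have hdisc' : b'^2 - 4*a*c' = -N := by
      have := act_disc (a,b,c) 1 t 0 1
      rw [hg1] at this; simp only at this
      simpa [hd] using this
    have hc'pos : 1 ≤ c' := by nlinarith [sq_nonneg b']
    have hEg1 : Equl (a,b,c) (a, b', c') := ⟨1, t, 0, 1, by ring, hg1⟩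
    rcases lt_or_ge c' a with hlt | hge
    · -- flip and recurse
      have hg2 : act (a, b', c') 0 (-1) 1 0 = (c', -b', a) := by
        unfold act; simp only [Prod.mk.injEq]; refine ⟨by ring, by ring, by ring⟩
      have hE2 : Equl (a,b,c) (c', -b', a) :=
        equl_trans hEg1 ⟨0, -1, 1, 0, by ring, hg2⟩
      have hdisc2 : (-b')^2 - 4*c'*a = -N := by rw [← hdisc']; ring
      obtain ⟨g, hgred, hgE⟩ := IH c'.toNat (by omega) (c', -b', a) rfl (by simpa using hdisc2) (by simp; omega)
      exact ⟨g, hgred, equl_trans hE2 hgE⟩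
    · rcases eq_or_ne b' (-a) with hba | hba
      · -- b' = -a : translate once more to (a, a, c')
        have hg2 : act (a, b', c') 1 1 0 1 = (a, b' + 2*a, a + b' + c') := by
          unfold act; simp only [Prod.mk.injEq]; refine ⟨by ring, by ring, by ring⟩
        rw [hba] at hg2
        have e1 : -a + 2*a = a := by ring
        have e2 : a + -a + c' = c' := by ring
        rw [e1, e2] at hg2
        refine ⟨(a, a, c'), ⟨?_, ?_, ?_, ?_⟩, equl_trans hEg1 ⟨1,1,0,1, by ring, by rw [← hba] at hg2; exact hg2⟩⟩
        · simp only; rw [← hdisc', hba]; ring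
        · simp only; rw [abs_of_pos (by omega : (0:ℤ) < a)]
        · simp only; omega
        · simp only; intro; omega
      · have hb'abs : |b'| < a := by rw [abs_lt]; omega
        rcases lt_or_ge b' 0 with hbneg | hbpos
        · rcases eq_or_ne a c' with hac | hac
          · -- a = c', b' < 0 : flip
            have hg2 : act (a, b', c') 0 (-1) 1 0 = (c', -b', a) := by
              unfold act; simp only [Prod.mk.injEq]; refine ⟨by ring, by ring, by ring⟩
            refine ⟨(c', -b', a), ⟨?_, ?_, ?_, ?_⟩, equl_trans hEg1 ⟨0,-1,1,0, by ring, hg2⟩⟩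
            · simp only; rw [← hdisc']; ring
            · simp only; rw [abs_of_pos (by omega : (0:ℤ) < -b')]; omega
            · simp only; omega
            · simp only; intro; omega
          · -- a < c' strictly, b' may be negative: fine
            refine ⟨(a, b', c'), ⟨hdisc', le_of_lt hb'abs, hge, ?_⟩, hEg1⟩
            simp only; intro hor
            rcases hor with h | h
            · omega
            · exact absurd h hac
        · refine ⟨(a, b', c'), ⟨hdisc', le_of_lt hb'abs, hge, fun _ => hbpos⟩, hEg1⟩

lemma unit_pair {q r : ℤ} (h : q * r = -1) :
    (q = 1 ∧ r = -1) ∨ (q = -1 ∧ r = 1) := by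
  have h1 : q ∣ 1 := ⟨-r, by linarith [h]⟩
  have := Int.isUnit_iff.mp (isUnit_of_dvd_one h1)
  rcases this with h2 | h2 <;> subst h2 <;> [left; right] <;> constructor <;> linarith

lemma unit_pair' {p s : ℤ} (h : p * s = 1) :
    (p = 1 ∧ s = 1) ∨ (p = -1 ∧ s = -1) := by
  have h1 : p ∣ 1 := ⟨s, h.symm⟩
  have := Int.isUnit_iff.mp (isUnit_of_dvd_one h1)
  rcases this with h2 | h2 <;> subst h2 <;> [left; right] <;> constructor <;> linarith


/-- Uniqueness: two equivalent reduced forms are equal. -/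
theorem red_uniq {N a b c A B C p q r s : ℤ} (hN : 1 ≤ N)
    (hg : Red N (a,b,c)) (hf : Red N (A,B,C)) (hdet : p*s - q*r = 1)
    (hact : act (a,b,c) p q r s = (A,B,C)) : a = A ∧ b = B ∧ c = C := by
  have h' := hact
  unfold act at h'; simp only [Prod.mk.injEq] at h'
  obtain ⟨hA, hB, hC⟩ := h'
  have hinv : act (A,B,C) s (-q) (-r) p = (a,b,c) := by
    rw [← hact, act_comp]
    have e1 : p*s+q*(-r) = 1 := by linarith
    have e2 : p*(-q)+q*p = 0 := by ring
    have e3 : r*s+s*(-r) = 0 := by ring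
    have e4 : r*(-q)+s*p = 1 := by linarith
    rw [e1, e2, e3, e4, act_id]
  unfold act at hinv; simp only [Prod.mk.injEq] at hinv
  obtain ⟨hA', hB', hC'⟩ := hinv
  have ha1 : 1 ≤ a := red_pos hN hg
  have hA1 : 1 ≤ A := red_pos hN hf
  have hac : a ≤ c := hg.2.2.1
  have hAC : A ≤ C := hf.2.2.1
  have hba : |b| ≤ a := hg.2.1
  have hBA : |B| ≤ A := hf.2.1
  have htg := hg.2.2.2
  have htf := hf.2.2.2
  simp only at hac hAC hba hBA htg htf
  have hb1 : -a ≤ b := by have := abs_le.mp hba; omega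
  have hb2 : b ≤ a := by have := abs_le.mp hba; omega
  have hB1 : -A ≤ B := by have := abs_le.mp hBA; omega
  have hB2 : B ≤ A := by have := abs_le.mp hBA; omega
  -- Step 1 : A = a
  have hpr : ¬(p = 0 ∧ r = 0) := by rintro ⟨rfl, rfl⟩; simp at hdet
  have hsr : ¬(s = 0 ∧ -r = 0) := by rintro ⟨rfl, hr⟩; simp at hr; subst hr; simp at hdet
  have hAa : A = a := by
    have u1 := red_min hN hg p r hpr
    have u2 := red_min hN hf s (-r) hsr
    have : a ≤ A := by linarith
    have : A ≤ a := by nlinarith [u2, hA']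
    omega
  -- Step 2 : C = c
  have hCc : C = c := by
    rcases eq_or_ne s 0 with hs | hs
    · -- s = 0 : q*r = -1
      subst hs
      have hqr : q * r = -1 := by linarith
      have hrne : r ≠ 0 := by rintro rfl; simp at hqr
      have h1 : c ≤ A := by
        have := red_min2 hN hg p r hrne; linarith
      have hca : c = a := by omega
      rcases unit_pair hqr with ⟨hq1, hr1⟩ | ⟨hq1, hr1⟩ <;> subst hq1 <;> subst hr1 <;>
        · norm_num at hC; omega
    · rcases eq_or_ne p 0 with hp | hp
      · -- p = 0
        subst hp
        have hqr : q * r = -1 := by linarith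
        have habsb := abs_cases b
        have habsB := abs_cases B
        rcases unit_pair hqr with ⟨hq1, hr1⟩ | ⟨hq1, hr1⟩ <;> subst hq1 <;> subst hr1 <;>
          norm_num at hA hB hC
        · -- q = 1, r = -1 : hA : c = A, hB : -b - 2*c*s... check via linarith
          have hca : c = a := by omega
          have h1 : 2*(c*s) = -(B+b) := by linarith
          have h2 : |2*(c*s)| ≤ 2*a := by
            rw [h1, abs_neg]
            calc |B + b| ≤ |B| + |b| := abs_add_le _ _
            _ ≤ 2*a := by omega
          have h3 : |2*(c*s)| = 2*(c*|s|) := by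
            rw [abs_mul, abs_mul, abs_of_nonneg (by norm_num : (0:ℤ) ≤ 2),
              abs_of_nonneg (by omega : (0:ℤ) ≤ c)]
          have h4 : c*|s| ≤ c*1 := by omega
          have h5 : |s| ≤ 1 := le_of_mul_le_mul_left h4 (by omega)
          have h6 : s = 1 ∨ s = -1 := by
            have := abs_cases s; omega
          rcases h6 with rfl | rfl <;> norm_num at hB hC <;> omega
        · have hca : c = a := by omega
          have h1 : 2*(c*s) = B+b := by linarith
          have h2 : |2*(c*s)| ≤ 2*a := by
            rw [h1]
            calc |B + b| ≤ |B| + |b| := abs_add_le _ _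
            _ ≤ 2*a := by omega
          have h3 : |2*(c*s)| = 2*(c*|s|) := by
            rw [abs_mul, abs_mul, abs_of_nonneg (by norm_num : (0:ℤ) ≤ 2),
              abs_of_nonneg (by omega : (0:ℤ) ≤ c)]
          have h4 : c*|s| ≤ c*1 := by omega
          have h5 : |s| ≤ 1 := le_of_mul_le_mul_left h4 (by omega)
          have h6 : s = 1 ∨ s = -1 := by
            have := abs_cases s; omega
          rcases h6 with rfl | rfl <;> norm_num at hB hC <;> omega
      · -- generic: s ≠ 0 and p ≠ 0
        have h1 : c ≤ C := by have := red_min2 hN hg q s hs; linarith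
        have h2 : C ≤ c := by have := red_min2 hN hf (-q) p hp; nlinarith [hC']
        omega
  -- Step 3 : B = b
  have hdd := act_disc (a,b,c) p q r s
  rw [hact, hdet] at hdd
  simp only at hdd
  rw [hAa, hCc] at hdd
  have hBb2 : B^2 = b^2 := by linarith
  rcases eq_or_ne B b with hBb | hBb
  · exact ⟨hAa.symm, hBb.symm, hCc.symm⟩
  · exfalso
    have hBnb : B = -b := by
      have h0 : (B - b) * (B + b) = 0 := by linear_combination hBb2
      rcases mul_eq_zero.mp h0 with h | h
      · exfalso; exact hBb (by omega)
      · omega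
    have hbne : b ≠ 0 := by rintro rfl; norm_num at hBnb; exact hBb (by omega)
    have hblt : |b| < a := by
      rcases lt_or_eq_of_le hba with h | h
      · exact h
      · exfalso
        have u1 : 0 ≤ b := htg (Or.inl h)
        have u2 : 0 ≤ B := htf (Or.inl (by rw [hBnb, hAa]; rw [abs_neg]; omega))
        omega
    have haclt : a < c := by
      rcases lt_or_eq_of_le hac with h | h
      · exact h
      · exfalso
        have u1 : 0 ≤ b := htg (Or.inr h)
        have u2 : 0 ≤ B := htf (Or.inr (by omega))
        omega
    have hr0 : r = 0 := by
      by_contra hr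
      have := red_min2 hN hg p r hr
      linarith
    subst hr0
    have hps : p * s = 1 := by linarith
    rcases unit_pair' hps with ⟨hp1, hs1⟩ | ⟨hp1, hs1⟩ <;> subst hp1 <;> subst hs1
    · have h1 : q * (a*q + b) = 0 := by linear_combination hC + hCc
      rcases mul_eq_zero.mp h1 with h2 | h2
      · subst h2; norm_num at hB; omega
      · have h3 : a * q = -b := by linarith
        have h4 : a * |q| = |b| := by
          calc a * |q| = |a*q| := by rw [abs_mul, abs_of_pos (by omega : (0:ℤ) < a)]
          _ = |(-b)| := by rw [h3]
          _ = |b| := abs_neg b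
        have hq0 : q = 0 := by
          rcases eq_or_ne q 0 with h | h
          · exact h
          · exfalso; have h5 : 1 ≤ |q| := abs_pos.mpr h; nlinarith
        subst hq0; norm_num at hB; omega
    · have h1 : q * (a*q - b) = 0 := by linear_combination hC + hCc
      rcases mul_eq_zero.mp h1 with h2 | h2
      · subst h2; norm_num at hB; omega
      · have h3 : a * q = b := by linarith
        have h4 : a * |q| = |b| := by
          calc a * |q| = |a*q| := by rw [abs_mul, abs_of_pos (by omega : (0:ℤ) < a)]
          _ = |b| := by rw [h3]
        have hq0 : q = 0 := by
          rcases eq_or_ne q 0 with h | h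
          · exact h
          · exfalso; have h5 : 1 ≤ |q| := abs_pos.mpr h; nlinarith
        subst hq0; norm_num at hB; omega

/-- Trivial automorphisms. -/
theorem red_stab {N a b c p q r s : ℤ} (hN : 1 ≤ N) (hg : Red N (a,b,c))
    (hna : ¬(b = a ∧ a = c)) (hnb : ¬(b = 0 ∧ a = c))
    (hdet : p*s - q*r = 1) (hact : act (a,b,c) p q r s = (a,b,c)) :
    (p = 1 ∧ q = 0 ∧ r = 0 ∧ s = 1) ∨ (p = -1 ∧ q = 0 ∧ r = 0 ∧ s = -1) := by
  have h' := hact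
  unfold act at h'; simp only [Prod.mk.injEq] at h'
  obtain ⟨hA, hB, hC⟩ := h'
  have ha1 : 1 ≤ a := red_pos hN hg
  have hac : a ≤ c := hg.2.2.1
  have hba : |b| ≤ a := hg.2.1
  have htg := hg.2.2.2
  simp only at hac hba htg
  have habsb := abs_cases b
  rcases eq_or_ne r 0 with hr | hr
  · -- r = 0
    subst hr
    have hps : p * s = 1 := by linarith
    have hq0 : q = 0 := by
      rcases unit_pair' hps with ⟨hp1, hs1⟩ | ⟨hp1, hs1⟩ <;> subst hp1 <;> subst hs1 <;>
        norm_num at hB hC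
      · -- p = s = 1 ; hC : a*q^2 + b*q + c = c
        have h1 : q * (a*q + b) = 0 := by linear_combination hC
        rcases mul_eq_zero.mp h1 with h2 | h2
        · exact h2
        · rcases eq_or_ne q 0 with hq | hqne
          · exact hq
          exfalso
          have h3 : a * q = -b := by linarith
          have h4 : a * |q| = |b| := by
            calc a * |q| = |a*q| := by rw [abs_mul, abs_of_pos (by omega : (0:ℤ) < a)]
            _ = |(-b)| := by rw [h3]
            _ = |b| := abs_neg b
          have hq1 : 1 ≤ |q| := abs_pos.mpr hqne
          have hq2 : a*1 ≤ a*|q| := by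
            have := mul_le_mul_of_nonneg_left hq1 (by omega : (0:ℤ) ≤ a); linarith
          have hbeq : |b| = a := by omega
          have hbb : b = a := by have := htg (Or.inl hbeq); omega
          have haq : a*|q| = a*1 := by omega
          have hqabs : |q| = 1 := by
            have := mul_left_cancel₀ (by omega : a ≠ 0) haq; omega
          have habsq := abs_cases q
          -- q = ±1 and a*q = -b = -a
          have hq : q = -1 := by
            rcases (by omega : q = 1 ∨ q = -1) with rfl | rfl
            · exfalso; norm_num at h3; omega
            · rfl
          subst hq
          -- hB : 2*a*p*q + b = b → 2*a*(-1) = 0, contradiction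
          norm_num at hB
          omega
      · have h1 : q * (a*q - b) = 0 := by linear_combination hC
        rcases mul_eq_zero.mp h1 with h2 | h2
        · exact h2
        · rcases eq_or_ne q 0 with hq | hqne
          · exact hq
          exfalso
          have h3 : a * q = b := by linarith
          have h4 : a * |q| = |b| := by
            calc a * |q| = |a*q| := by rw [abs_mul, abs_of_pos (by omega : (0:ℤ) < a)]
            _ = |b| := by rw [h3]
          have hq1 : 1 ≤ |q| := abs_pos.mpr hqne
          have hq2 : a*1 ≤ a*|q| := by
            have := mul_le_mul_of_nonneg_left hq1 (by omega : (0:ℤ) ≤ a); linarith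
          have hbeq : |b| = a := by omega
          have hbb : b = a := by have := htg (Or.inl hbeq); omega
          have haq : a*|q| = a*1 := by omega
          have hqabs : |q| = 1 := by
            have := mul_left_cancel₀ (by omega : a ≠ 0) haq; omega
          have habsq := abs_cases q
          have hq : q = 1 := by
            rcases (by omega : q = 1 ∨ q = -1) with rfl | rfl
            · rfl
            · exfalso; norm_num at h3; omega
          subst hq
          norm_num at hB
          omega
    subst hq0
    rcases unit_pair' hps with ⟨hp1, hs1⟩ | ⟨hp1, hs1⟩
    · left; exact ⟨hp1, rfl, rfl, hs1⟩
    · right; exact ⟨hp1, rfl, rfl, hs1⟩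
  · -- r ≠ 0 : leads to contradiction
    exfalso
    have h1 : c ≤ a := by have := red_min2 hN hg p r hr; linarith
    have hca : a = c := by omega
    rcases eq_or_ne p 0 with hp | hp
    · subst hp
      have hqr : q * r = -1 := by linarith
      rcases unit_pair hqr with ⟨hq1, hr1⟩ | ⟨hq1, hr1⟩ <;> subst hq1 <;> subst hr1 <;>
        norm_num at hA hB hC
      · -- q = 1, r = -1 : hB gives -b - 2*c*s = b → b = -c*s
        have hbv : b = -(c*s) := by linarith
        rcases eq_or_ne s 0 with hs | hs
        · subst hs; norm_num at hbv; exact hnb ⟨hbv, hca⟩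
        · have hs1 : 1 ≤ |s| := abs_pos.mpr hs
          have h2 : |b| = c * |s| := by
            rw [hbv, abs_neg, abs_mul, abs_of_pos (by omega : (0:ℤ) < c)]
          have h3 : c*1 ≤ c*|s| := by
            have := mul_le_mul_of_nonneg_left hs1 (by omega : (0:ℤ) ≤ c); linarith
          have hbeq : |b| = a := by omega
          have hbb : b = a := by have := htg (Or.inl hbeq); omega
          exact hna ⟨hbb, hca⟩
      · have hbv : b = c*s := by linarith
        rcases eq_or_ne s 0 with hs | hs
        · subst hs; norm_num at hbv; exact hnb ⟨hbv, hca⟩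
        · have hs1 : 1 ≤ |s| := abs_pos.mpr hs
          have h2 : |b| = c * |s| := by
            rw [hbv, abs_mul, abs_of_pos (by omega : (0:ℤ) < c)]
          have h3 : c*1 ≤ c*|s| := by
            have := mul_le_mul_of_nonneg_left hs1 (by omega : (0:ℤ) ≤ c); linarith
          have hbeq : |b| = a := by omega
          have hbb : b = a := by have := htg (Or.inl hbeq); omega
          exact hna ⟨hbb, hca⟩
    · have h2 := red_min3 hN hg p r hp hr
      have hbeq : |b| = a := by
        have h3 : c ≤ |b| := by linarith
        omega
      have hbb : b = a := by have := htg (Or.inl hbeq); omega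
      exact hna ⟨hbb, hca⟩

lemma fermat5 {u : ℤ} (hu : ¬ (5:ℤ) ∣ u) : (5:ℤ) ∣ u^4 - 1 := by
  haveI : Fact (Nat.Prime 5) := ⟨by norm_num⟩
  have h2 : (u : ZMod 5) ≠ 0 := by
    rw [Ne, ZMod.intCast_zmod_eq_zero_iff_dvd]; exact hu
  have h3 := ZMod.pow_card_sub_one_eq_one h2
  norm_num at h3
  have h1 : ((u^4 - 1 : ℤ) : ZMod 5) = 0 := by push_cast [h3]; ring
  exact (ZMod.intCast_zmod_eq_zero_iff_dvd _ 5).mp h1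

lemma choose_t {u : ℤ} (v : ℤ) (hu : ¬ (5:ℤ) ∣ u) :
    ∃ t : ℤ, 0 ≤ t ∧ t < 5 ∧ (5:ℤ) ∣ v - t*u := by
  refine ⟨(v*u^3) % 5, Int.emod_nonneg _ (by norm_num), Int.emod_lt_of_pos _ (by norm_num), ?_⟩
  obtain ⟨k, hk⟩ : (5:ℤ) ∣ v*u^3 - (v*u^3) % 5 := Int.dvd_self_sub_of_emod_eq rfl
  obtain ⟨l, hl⟩ := fermat5 hu
  exact ⟨k*u - v*l, by linear_combination u*hk - v*hl⟩

lemma prime5 : Prime (5:ℤ) := by norm_num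

lemma not_dvd_2c {c : ℤ} (hc : ¬ (5:ℤ) ∣ c) : ¬ (5:ℤ) ∣ 2*c := by
  intro h
  rcases (prime5.dvd_mul).mp h with h | h
  · norm_num at h
  · exact hc h

/-- key mod-25 lemma -/
lemma mod5_col {a b c m x y : ℤ} (hm : ¬ (5:ℤ) ∣ m) (hd : b^2 - 4*a*c = -(5*m))
    (h25 : (25:ℤ) ∣ a*x^2 + b*x*y + c*y^2) : 5 ∣ x ∧ 5 ∣ y := by
  have h5Q : (5:ℤ) ∣ a*x^2 + b*x*y + c*y^2 := dvd_trans (by norm_num) h25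
  rcases em ((5:ℤ) ∣ a) with ha | ha
  · -- 5 ∣ a hence 5 ∣ b and ¬ 5 ∣ c
    have hb : (5:ℤ) ∣ b := by
      apply prime5.dvd_of_dvd_pow (n := 2)
      have h1 : b^2 = 4*a*c - 5*m := by linarith
      rw [h1]
      exact dvd_sub ((ha.mul_left 4).mul_right c) (dvd_mul_right 5 m)
    have hc : ¬ (5:ℤ) ∣ c := by
      intro hcd
      obtain ⟨a', rfl⟩ := ha
      obtain ⟨c', rfl⟩ := hcd
      obtain ⟨b', rfl⟩ := hb
      have h5 : 5*m = 5*(5*(4*a'*c' - b'^2)) := by linear_combination hd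
      have : m = 5*(4*a'*c' - b'^2) := by omega
      exact hm ⟨_, this⟩
    have key : (b*x + 2*c*y)^2 = 4*c*(a*x^2 + b*x*y + c*y^2) - 5*(m*x^2) := by
      linear_combination (x^2)*hd
    have h5u : (5:ℤ) ∣ (b*x + 2*c*y) := by
      apply prime5.dvd_of_dvd_pow (n := 2)
      rw [key]
      exact dvd_sub (h5Q.mul_left _) (dvd_mul_right 5 _)
    have h25u : (25:ℤ) ∣ (b*x+2*c*y)^2 := by
      obtain ⟨u', hu'⟩ := h5u
      exact ⟨u'^2, by rw [hu']; ring⟩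
    have h25mx : (25:ℤ) ∣ 5*(m*x^2) := by
      have : 5*(m*x^2) = 4*c*(a*x^2 + b*x*y + c*y^2) - (b*x + 2*c*y)^2 := by
        rw [key]; ring
      rw [this]
      exact dvd_sub (h25.mul_left _) h25u
    have h5mx : (5:ℤ) ∣ m*x^2 := by
      obtain ⟨k, hk⟩ := h25mx
      exact ⟨k, by omega⟩
    have hx : (5:ℤ) ∣ x := by
      rcases (prime5.dvd_mul).mp h5mx with h | h
      · exact absurd h hm
      · exact prime5.dvd_of_dvd_pow h
    refine ⟨hx, ?_⟩
    have h2cy : (5:ℤ) ∣ 2*c*y := by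
      have : 2*c*y = (b*x + 2*c*y) - b*x := by ring
      rw [this]
      exact dvd_sub h5u (hb.mul_right x)
    rcases (prime5.dvd_mul).mp h2cy with h | h
    · exact absurd h (not_dvd_2c hc)
    · exact h
  · -- ¬ 5 ∣ a
    have key : (2*a*x + b*y)^2 = 4*a*(a*x^2 + b*x*y + c*y^2) - 5*(m*y^2) := by
      linear_combination (y^2)*hd
    have h5u : (5:ℤ) ∣ (2*a*x + b*y) := by
      apply prime5.dvd_of_dvd_pow (n := 2)
      rw [key]
      exact dvd_sub (h5Q.mul_left _) (dvd_mul_right 5 _)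
    have h25u : (25:ℤ) ∣ (2*a*x+b*y)^2 := by
      obtain ⟨u', hu'⟩ := h5u
      exact ⟨u'^2, by rw [hu']; ring⟩
    have h25my : (25:ℤ) ∣ 5*(m*y^2) := by
      have : 5*(m*y^2) = 4*a*(a*x^2 + b*x*y + c*y^2) - (2*a*x + b*y)^2 := by
        rw [key]; ring
      rw [this]
      exact dvd_sub (h25.mul_left _) h25u
    have h5my : (5:ℤ) ∣ m*y^2 := by
      obtain ⟨k, hk⟩ := h25my
      exact ⟨k, by omega⟩
    have hy : (5:ℤ) ∣ y := by
      rcases (prime5.dvd_mul).mp h5my with h | h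
      · exact absurd h hm
      · exact prime5.dvd_of_dvd_pow h
    refine ⟨?_, hy⟩
    have h2ax : (5:ℤ) ∣ 2*a*x := by
      have : 2*a*x = (2*a*x + b*y) - b*y := by ring
      rw [this]
      exact dvd_sub h5u (hy.mul_left b)
    rcases (prime5.dvd_mul).mp h2ax with h | h
    · exact absurd h (not_dvd_2c ha)
    · exact h

/-- Descent -/
lemma descend {m A B C : ℤ} (hm5 : ¬(5:ℤ) ∣ m) (hm : 1 ≤ m)
    (hd : B^2 - 4*A*C = -(125*m)) (hA : 1 ≤ A) :
    ∃ a b c P Q R S : ℤ, b^2 - 4*a*c = -(5*m) ∧ 1 ≤ a ∧ P*S - Q*R = 5 ∧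
      act (a,b,c) P Q R S = (A,B,C) := by
  have hC : 1 ≤ C := by nlinarith [sq_nonneg B]
  rcases em ((5:ℤ) ∣ A) with h5A | h5A
  · rcases em ((5:ℤ) ∣ C) with h5C | h5C
    · -- case 3 : 5 ∣ A, 5 ∣ C (hence 5 ∣ B)
      obtain ⟨a1, rfl⟩ := h5A
      obtain ⟨c1, rfl⟩ := h5C
      have hB5 : (5:ℤ) ∣ B := by
        apply prime5.dvd_of_dvd_pow (n := 2)
        exact ⟨20*a1*c1 - 25*m, by linear_combination hd⟩
      obtain ⟨b1, rfl⟩ := hB5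
      have ha1 : 1 ≤ a1 := by omega
      have hc1 : 1 ≤ c1 := by omega
      have hd1 : b1^2 - 4*a1*c1 = -(5*m) := by linarith [hd]
      rcases em ((5:ℤ) ∣ a1) with h5a1 | h5a1
      · obtain ⟨a2, rfl⟩ := h5a1
        refine ⟨a2, b1, 5*c1, 5, 0, 0, 1, by linarith, by omega, by ring, ?_⟩
        unfold act; simp only [Prod.mk.injEq]
        refine ⟨by ring, by ring, by ring⟩
      · obtain ⟨t, ht0, ht5, hdv⟩ := choose_t (-b1) (not_dvd_2c h5a1)
        obtain ⟨e, he⟩ := hdv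
        have he2 : 2*a1*t + b1 = -(5*e) := by linarith
        set X1 : ℤ := a1*t^2 + b1*t + c1 with hX1
        have hkey : 4*a1*X1 = 25*e^2 + 5*m := by
          linear_combination (-1)*hd1 + (2*a1*t + b1 - 5*e)*he2
        have h5X1 : (5:ℤ) ∣ X1 := by
          have h1 : (5:ℤ) ∣ 4*a1*X1 := ⟨5*e^2 + m, by linarith⟩
          rcases (prime5.dvd_mul).mp h1 with h | h
          · exfalso
            rcases (prime5.dvd_mul).mp h with h' | h'
            · norm_num at h'
            · exact h5a1 h'
          · exact h
        obtain ⟨X2, hX2⟩ := h5X1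
        have hX2pos : 1 ≤ X2 := by nlinarith [sq_nonneg e]
        refine ⟨X2, 5*e, 5*a1, 0, 5, -1, t, ?_, hX2pos, by ring, ?_⟩
        · have h6 : 4*a1*(5*X2) = 25*e^2 + 5*m := by rw [← hX2]; exact hkey
          linarith
        · unfold act; simp only [Prod.mk.injEq]
          refine ⟨by ring, by linarith, ?_⟩
          linear_combination (-5)*hX2 + 5*hX1 + 5*t*he2
    · -- case 2 : 5 ∣ A, ¬ 5 ∣ C
      obtain ⟨t, ht0, ht5, hdv⟩ := choose_t (-B) (not_dvd_2c h5C)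
      obtain ⟨e, he⟩ := hdv
      have he2 : B + 2*C*t = -(5*e) := by linarith
      set X : ℤ := A + B*t + C*t^2 with hX
      have hkey : 4*C*X = 25*e^2 + 125*m := by
        linear_combination (-1)*hd + (B + 2*C*t - 5*e)*he2
      have h5X : (5:ℤ) ∣ X := by
        have h1 : (5:ℤ) ∣ 4*C*X := ⟨5*e^2 + 25*m, by linarith⟩
        rcases (prime5.dvd_mul).mp h1 with h | h
        · exfalso
          rcases (prime5.dvd_mul).mp h with h' | h'
          · norm_num at h'
          · exact h5C h'
        · exact h
      obtain ⟨X1, hX1⟩ := h5X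
      have h5X1 : (5:ℤ) ∣ X1 := by
        have h1 : (5:ℤ) ∣ 4*C*X1 := by
          have h2 : 4*C*X1*5 = (25*e^2 + 125*m) := by rw [← hkey, hX1]; ring
          exact ⟨e^2 + 5*m, by linarith⟩
        rcases (prime5.dvd_mul).mp h1 with h | h
        · exfalso
          rcases (prime5.dvd_mul).mp h with h' | h'
          · norm_num at h'
          · exact h5C h'
        · exact h
      obtain ⟨X2, hX2⟩ := h5X1
      have hXX : X = 25*X2 := by omega
      have hX2pos : 1 ≤ X2 := by nlinarith [sq_nonneg e]
      refine ⟨X2, -e, C, 5, 0, -t, 1, ?_, hX2pos, by ring, ?_⟩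
      · have h6 : 4*C*(25*X2) = 25*e^2 + 125*m := by rw [← hXX]; exact hkey
        linarith
      · unfold act; simp only [Prod.mk.injEq]
        refine ⟨?_, by linarith, by ring⟩
        linear_combination (-1)*hXX + hX + t*he2
  · -- case 1 : ¬ 5 ∣ A
    obtain ⟨t, ht0, ht5, hdv⟩ := choose_t (-B) (not_dvd_2c h5A)
    obtain ⟨e, he⟩ := hdv
    have he2 : 2*A*t + B = -(5*e) := by linarith
    set X : ℤ := A*t^2 + B*t + C with hX
    have hkey : 4*A*X = 25*e^2 + 125*m := by
      linear_combination (-1)*hd + (2*A*t + B - 5*e)*he2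
    have h5X : (5:ℤ) ∣ X := by
      have h1 : (5:ℤ) ∣ 4*A*X := ⟨5*e^2 + 25*m, by linarith⟩
      rcases (prime5.dvd_mul).mp h1 with h | h
      · exfalso
        rcases (prime5.dvd_mul).mp h with h' | h'
        · norm_num at h'
        · exact h5A h'
      · exact h
    obtain ⟨X1, hX1⟩ := h5X
    have h5X1 : (5:ℤ) ∣ X1 := by
      have h1 : (5:ℤ) ∣ 4*A*X1 := by
        have h2 : 4*A*X1*5 = (25*e^2 + 125*m) := by rw [← hkey, hX1]; ring
        exact ⟨e^2 + 5*m, by linarith⟩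
      rcases (prime5.dvd_mul).mp h1 with h | h
      · exfalso
        rcases (prime5.dvd_mul).mp h with h' | h'
        · norm_num at h'
        · exact h5A h'
      · exact h
    obtain ⟨X2, hX2⟩ := h5X1
    have hXX : X = 25*X2 := by omega
    have hX2pos : 1 ≤ X2 := by nlinarith [sq_nonneg e]
    refine ⟨X2, e, A, 0, 5, -1, t, ?_, hX2pos, by ring, ?_⟩
    · have h6 : 4*A*(25*X2) = 25*e^2 + 125*m := by rw [← hXX]; exact hkey
      linarith
    · unfold act; simp only [Prod.mk.injEq]
      refine ⟨by ring, by linarith, ?_⟩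
      linear_combination (-1)*hXX + hX + t*he2

def Rmat (x : Fin 6) : ℤ×ℤ×ℤ×ℤ :=
  if x.val < 5 then (1, 0, (x.val:ℤ), 5) else (5, 0, 0, 1)

/-- existence of the right-coset decomposition: every integer matrix of
determinant 5 is Rmat x * (unimodular). -/
lemma coset_exists (P Q R S : ℤ) (hdet : P*S - Q*R = 5) :
    ∃ (x : Fin 6) (p q r s : ℤ), p*s - q*r = 1 ∧
      P = (Rmat x).1*p + (Rmat x).2.1*r ∧ Q = (Rmat x).1*q + (Rmat x).2.1*s ∧
      R = (Rmat x).2.2.1*p + (Rmat x).2.2.2*r ∧ S = (Rmat x).2.2.1*q + (Rmat x).2.2.2*s := by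
  rcases em ((5:ℤ) ∣ P) with h5P | h5P
  · rcases em ((5:ℤ) ∣ Q) with h5Q | h5Q
    · -- x = 5
      obtain ⟨P', rfl⟩ := h5P
      obtain ⟨Q', rfl⟩ := h5Q
      refine ⟨⟨5, by norm_num⟩, P', Q', R, S, by linarith, ?_, ?_, ?_, ?_⟩ <;>
        simp [Rmat] <;> ring
    · -- 5 ∣ R, use t with 5 ∣ S - t*Q
      have h5R : (5:ℤ) ∣ R := by
        have h1 : (5:ℤ) ∣ Q*R := by
          obtain ⟨P', rfl⟩ := h5P
          exact ⟨P'*S - 1, by linarith⟩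
        rcases (prime5.dvd_mul).mp h1 with h | h
        · exact absurd h h5Q
        · exact h
      obtain ⟨t, ht0, ht5, hdv⟩ := choose_t S h5Q
      obtain ⟨l, hl⟩ := hdv
      obtain ⟨k0, hk0⟩ := h5R
      obtain ⟨p0, hp0⟩ := h5P
      have hk : R - t*P = 5*(k0 - t*p0) := by rw [hk0, hp0]; ring
      refine ⟨⟨t.toNat, by omega⟩, P, Q, k0 - t*p0, l, ?_, ?_, ?_, ?_, ?_⟩
      · -- det
        have e1 : P*(5*l) = P*S - t*(P*Q) := by rw [← hl]; ring
        have e2 : Q*(5*(k0 - t*p0)) = Q*R - t*(P*Q) := by rw [← hk]; ring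
        nlinarith [e1, e2]
      · simp only [Rmat]
        rw [if_pos (by simpa using (by omega : t.toNat < 5))]
        simp
      · simp only [Rmat]
        rw [if_pos (by simpa using (by omega : t.toNat < 5))]
        simp
      · simp only [Rmat]
        rw [if_pos (by simpa using (by omega : t.toNat < 5))]
        simp only
        have h2 : (t.toNat : ℤ) = t := by omega
        rw [h2]; linarith [hk]
      · simp only [Rmat]
        rw [if_pos (by simpa using (by omega : t.toNat < 5))]
        simp only
        have h2 : (t.toNat : ℤ) = t := by omega
        rw [h2]; linarith [hl]
  · -- ¬ 5 ∣ P : t with 5 ∣ R - t*P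
    obtain ⟨t, ht0, ht5, hdv⟩ := choose_t R h5P
    obtain ⟨k, hk⟩ := hdv
    have h5S : (5:ℤ) ∣ P*(S - t*Q) := by
      have h1 : P*(S - t*Q) = 5 + Q*(R - t*P) := by linarith [hdet]; 
      rw [h1, hk]
      exact ⟨1 + Q*k, by ring⟩
    have h5S' : (5:ℤ) ∣ S - t*Q := by
      rcases (prime5.dvd_mul).mp h5S with h | h
      · exact absurd h h5P
      · exact h
    obtain ⟨l, hl⟩ := h5S'
    refine ⟨⟨t.toNat, by omega⟩, P, Q, k, l, ?_, ?_, ?_, ?_, ?_⟩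
    · have e1 : P*(5*l) = P*S - t*(P*Q) := by rw [← hl]; ring
      have e2 : Q*(5*k) = Q*R - t*(P*Q) := by rw [← hk]; ring
      nlinarith [e1, e2]
    · simp only [Rmat]
      rw [if_pos (by simpa using (by omega : t.toNat < 5))]
      simp
    · simp only [Rmat]
      rw [if_pos (by simpa using (by omega : t.toNat < 5))]
      simp
    · simp only [Rmat]
      rw [if_pos (by simpa using (by omega : t.toNat < 5))]
      simp only
      have h2 : (t.toNat : ℤ) = t := by omega
      rw [h2]; linarith [hk]
    · simp only [Rmat]
      rw [if_pos (by simpa using (by omega : t.toNat < 5))]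
      simp only
      have h2 : (t.toNat : ℤ) = t := by omega
      rw [h2]; linarith [hl]

/-- uniqueness of the coset representative -/
lemma coset_unique (x y : Fin 6) (p q r s : ℤ) (hdet : p*s - q*r = 1)
    (h1 : (Rmat y).1 = (Rmat x).1*p + (Rmat x).2.1*r)
    (h2 : (Rmat y).2.1 = (Rmat x).1*q + (Rmat x).2.1*s)
    (h3 : (Rmat y).2.2.1 = (Rmat x).2.2.1*p + (Rmat x).2.2.2*r)
    (h4 : (Rmat y).2.2.2 = (Rmat x).2.2.1*q + (Rmat x).2.2.2*s) : x = y := by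
  rcases Nat.lt_or_ge x.val 5 with hx | hx <;> rcases Nat.lt_or_ge y.val 5 with hy | hy
  · simp only [Rmat, if_pos hx, if_pos hy] at h1 h2 h3 h4
    have hp : p = 1 := by linarith
    have hq : q = 0 := by linarith
    subst hp; subst hq
    have hs : s = 1 := by linarith
    subst hs
    have : (y.val : ℤ) = (x.val : ℤ) + 5*r := by linarith
    have hxy : x.val = y.val := by omega
    exact Fin.ext hxy
  · exfalso
    simp only [Rmat, if_pos hx, if_neg (by omega : ¬ y.val < 5)] at h1 h2
    have hp : p = 5 := by linarith
    have hq : q = 0 := by linarith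
    subst hp; subst hq
    omega
  · exfalso
    simp only [Rmat, if_neg (by omega : ¬ x.val < 5), if_pos hy] at h1 h2 h3 h4
    omega
  · have : x.val = 5 := by omega
    have : y.val = 5 := by omega
    apply Fin.ext; omega

lemma Rdet (x : Fin 6) :
    (Rmat x).1*(Rmat x).2.2.2 - (Rmat x).2.1*(Rmat x).2.2.1 = 5 := by
  unfold Rmat; split <;> simp

lemma det_mul4 (p q r s p' q' r' s' : ℤ) :
    (p*p'+q*r')*(r*q'+s*s') - (p*q'+q*s')*(r*p'+s*r')
      = (p*s-q*r)*(p'*s'-q'*r') := by ring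

lemma equl_symm' {f g : ℤ×ℤ×ℤ} {p q r s : ℤ} (hdet : p*s - q*r = 1)
    (h : act f p q r s = g) : act g s (-q) (-r) p = f := by
  rw [← h, act_comp]
  have e1 : p*s+q*(-r) = 1 := by linarith
  have e2 : p*(-q)+q*p = 0 := by ring
  have e3 : r*s+s*(-r) = 0 := by ring
  have e4 : r*(-q)+s*p = 1 := by linarith
  rw [e1, e2, e3, e4, act_id]

lemma act_scale5 (f : ℤ×ℤ×ℤ) (p q r s : ℤ) :
    act f (5*p) (5*q) (5*r) (5*s)
      = (25*(act f p q r s).1, 25*(act f p q r s).2.1, 25*(act f p q r s).2.2) := by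
  unfold act; refine Prod.ext ?_ (Prod.ext ?_ ?_) <;> dsimp <;> ring

lemma act_five (f : ℤ×ℤ×ℤ) : act f 5 0 0 5 = (25*f.1, 25*f.2.1, 25*f.2.2) := by
  unfold act; refine Prod.ext ?_ (Prod.ext ?_ ?_) <;> dsimp <;> ring

lemma red_uniq' {N : ℤ} (hN : 1 ≤ N) {f g : ℤ×ℤ×ℤ} {p q r s : ℤ}
    (hf : Red N f) (hg : Red N g)
    (hdet : p*s - q*r = 1) (hact : act f p q r s = g) : f = g := by
  obtain ⟨fa, fb, fc⟩ := f
  obtain ⟨ga, gb, gc⟩ := g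
  obtain ⟨h1, h2, h3⟩ := red_uniq hN hf hg hdet hact
  simp only [Prod.mk.injEq]
  exact ⟨h1, h2, h3⟩

lemma shape5 {m a b c : ℤ} (hm5 : ¬(5:ℤ) ∣ m) (hd : b^2 - 4*a*c = -(5*m)) :
    ¬(b = a ∧ a = c) ∧ ¬(b = 0 ∧ a = c) := by
  constructor
  · rintro ⟨rfl, rfl⟩
    have h1 : (5:ℤ) ∣ 3*b^2 := ⟨m, by linarith⟩
    have h2 : (5:ℤ) ∣ b := by
      rcases (prime5.dvd_mul).mp h1 with h | h
      · norm_num at h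
      · exact prime5.dvd_of_dvd_pow h
    obtain ⟨b', rfl⟩ := h2
    exact hm5 ⟨3*b'^2, by linarith⟩
  · rintro ⟨rfl, rfl⟩
    have h1 : (5:ℤ) ∣ 4*a^2 := ⟨m, by linarith⟩
    have h2 : (5:ℤ) ∣ a := by
      rcases (prime5.dvd_mul).mp h1 with h | h
      · norm_num at h
      · exact prime5.dvd_of_dvd_pow h
    obtain ⟨a', rfl⟩ := h2
    exact hm5 ⟨4*a'^2, by linarith⟩

open scoped Classical in
noncomputable def redSet (N : ℤ) : Finset (ℤ×ℤ×ℤ) :=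
  ((Finset.Icc (1:ℤ) N) ×ˢ (Finset.Icc (-N) N) ×ˢ (Finset.Icc (1:ℤ) N)).filter
    (fun f => Red N f)

lemma mem_redSet {N : ℤ} (hN : 1 ≤ N) (f : ℤ×ℤ×ℤ) :
    f ∈ redSet N ↔ Red N f := by
  classical
  unfold redSet
  constructor
  · intro h
    exact (Finset.mem_filter.mp h).2
  · intro h
    refine Finset.mem_filter.mpr ⟨?_, h⟩
    obtain ⟨a, b, c⟩ := f
    have ha : 1 ≤ a := red_pos hN h
    obtain ⟨hd, h1, h2, _⟩ := h
    simp only at hd h1 h2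
    have hb := abs_le.mp h1
    have hb2 : b^2 ≤ a*c := by nlinarith [sq_abs b]
    have hcN : 3*(a*c) ≤ N := by nlinarith
    have hc : c ≤ N := by nlinarith
    refine Finset.mem_product.mpr ⟨?_, Finset.mem_product.mpr ⟨?_, ?_⟩⟩ <;>
      simp only [Finset.mem_Icc] <;> constructor <;> omega

lemma red_unique2 {N : ℤ} (hN : 1 ≤ N) {F f h : ℤ×ℤ×ℤ} (hf : Red N f) (hh : Red N h)
    (h1 : Equl F f) (h2 : Equl F h) : f = h := by
  obtain ⟨p1, q1, r1, s1, hd1, ha1⟩ := h1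
  obtain ⟨p2, q2, r2, s2, hd2, ha2⟩ := h2
  have hback := equl_symm' hd1 ha1
  rw [← hback, act_comp] at ha2
  refine red_uniq' hN hf hh ?_ ha2
  have hd := det_mul4 s1 (-q1) (-r1) p1 p2 q2 r2 s2
  rw [hd]
  nlinarith [hd1, hd2]

/-- injectivity of the Hecke correspondence -/
lemma key_inj {m : ℤ} (hm : 1 ≤ m) (hm5 : ¬(5:ℤ) ∣ m) {x x' : Fin 6} {g g' h : ℤ×ℤ×ℤ}
    (hg : Red (5*m) g) (hg' : Red (5*m) g')
    (hE : Equl (act g (Rmat x).1 (Rmat x).2.1 (Rmat x).2.2.1 (Rmat x).2.2.2) h)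
    (hE' : Equl (act g' (Rmat x').1 (Rmat x').2.1 (Rmat x').2.2.1 (Rmat x').2.2.2) h) :
    g = g' ∧ x = x' := by
  have hN5 : (1:ℤ) ≤ 5*m := by linarith
  obtain ⟨ga, gb, gc⟩ := g
  have hgd : gb^2 - 4*ga*gc = -(5*m) := hg.1
  obtain ⟨p1, q1, r1, s1, hd1, ha1⟩ := hE
  obtain ⟨p2, q2, r2, s2, hd2, ha2⟩ := hE'
  set P : ℤ := (Rmat x).1 with hPdef
  set Q : ℤ := (Rmat x).2.1 with hQdef
  set R : ℤ := (Rmat x).2.2.1 with hRdef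
  set S : ℤ := (Rmat x).2.2.2 with hSdef
  set P' : ℤ := (Rmat x').1 with hP'def
  set Q' : ℤ := (Rmat x').2.1 with hQ'def
  set R' : ℤ := (Rmat x').2.2.1 with hR'def
  set S' : ℤ := (Rmat x').2.2.2 with hS'def
  have hdP : P*S - Q*R = 5 := Rdet x
  have hdP' : P'*S' - Q'*R' = 5 := Rdet x'
  have hb2 := equl_symm' hd2 ha2
  have step1 : act (act (ga,gb,gc) P Q R S)
      (p1*s2+q1*(-r2)) (p1*(-q2)+q1*p2) (r1*s2+s1*(-r2)) (r1*(-q2)+s1*p2)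
      = act g' P' Q' R' S' := by
    rw [← act_comp, ha1, hb2]
  set d1 : ℤ := p1*s2+q1*(-r2) with hd1def
  set d2 : ℤ := p1*(-q2)+q1*p2 with hd2def
  set d3 : ℤ := r1*s2+s1*(-r2) with hd3def
  set d4 : ℤ := r1*(-q2)+s1*p2 with hd4def
  have hdd : d1*d4 - d2*d3 = 1 := by
    rw [hd1def, hd2def, hd3def, hd4def, det_mul4]
    nlinarith [hd1, hd2]
  have step2 : act (ga,gb,gc) (P*d1+Q*d3) (P*d2+Q*d4) (R*d1+S*d3) (R*d2+S*d4)
      = act g' P' Q' R' S' := by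
    rw [← act_comp]; exact step1
  set U1 : ℤ := P*d1+Q*d3 with hU1def
  set U2 : ℤ := P*d2+Q*d4 with hU2def
  set U3 : ℤ := R*d1+S*d3 with hU3def
  set U4 : ℤ := R*d2+S*d4 with hU4def
  have hdU : U1*U4 - U2*U3 = 5 := by
    rw [hU1def, hU2def, hU3def, hU4def, det_mul4, hdP, hdd]; ring
  have step3 : act (ga,gb,gc) (U1*S'+U2*(-R')) (U1*(-Q')+U2*P') (U3*S'+U4*(-R')) (U3*(-Q')+U4*P')
      = (25*g'.1, 25*g'.2.1, 25*g'.2.2) := by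
    rw [← act_comp, step2, act_comp]
    have e1 : P'*S'+Q'*(-R') = 5 := by linarith
    have e2 : P'*(-Q')+Q'*P' = 0 := by ring
    have e3 : R'*S'+S'*(-R') = 0 := by ring
    have e4 : R'*(-Q')+S'*P' = 5 := by nlinarith [hdP']
    rw [e1, e2, e3, e4, act_five]
  have hc1 : (25:ℤ) ∣ ga*(U1*S'+U2*(-R'))^2 + gb*(U1*S'+U2*(-R'))*(U3*S'+U4*(-R'))
      + gc*(U3*S'+U4*(-R'))^2 := by
    refine ⟨g'.1, ?_⟩
    have := congrArg Prod.fst step3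
    unfold act at this; simpa using this
  have hc3 : (25:ℤ) ∣ ga*(U1*(-Q')+U2*P')^2 + gb*(U1*(-Q')+U2*P')*(U3*(-Q')+U4*P')
      + gc*(U3*(-Q')+U4*P')^2 := by
    refine ⟨g'.2.2, ?_⟩
    have := congrArg (fun z => z.2.2) step3
    unfold act at this; simpa using this
  obtain ⟨hW1, hW3⟩ := mod5_col hm5 hgd hc1
  obtain ⟨hW2, hW4⟩ := mod5_col hm5 hgd hc3
  obtain ⟨V1, hV1⟩ := hW1
  obtain ⟨V2, hV2⟩ := hW2
  obtain ⟨V3, hV3⟩ := hW3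
  obtain ⟨V4, hV4⟩ := hW4
  have step4 : act (ga,gb,gc) (5*V1) (5*V2) (5*V3) (5*V4)
      = (25*g'.1, 25*g'.2.1, 25*g'.2.2) := by
    rw [← hV1, ← hV2, ← hV3, ← hV4]; exact step3
  rw [act_scale5] at step4
  rw [Prod.ext_iff, Prod.ext_iff] at step4
  obtain ⟨e1, e2, e3⟩ := step4
  simp only at e1 e2 e3
  have hactV : act (ga,gb,gc) V1 V2 V3 V4 = g' := by
    refine Prod.ext (by omega) (Prod.ext (by omega) (by omega))
  have hdetW : (U1*S'+U2*(-R'))*(U3*(-Q')+U4*P') - (U1*(-Q')+U2*P')*(U3*S'+U4*(-R')) = 25 := by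
    rw [det_mul4, hdU]
    nlinarith [hdP']
  have hdetV : V1*V4 - V2*V3 = 1 := by
    rw [hV1, hV2, hV3, hV4] at hdetW
    nlinarith [hdetW]
  have hgg' : (ga,gb,gc) = g' := red_uniq' hN5 hg hg' hdetV hactV
  refine ⟨hgg', ?_⟩
  -- now the automorphism argument
  have hactV2 : act (ga,gb,gc) V1 V2 V3 V4 = (ga,gb,gc) := by rw [hactV, ← hgg']
  obtain ⟨hsh1, hsh2⟩ := shape5 hm5 hgd
  rcases red_stab hN5 hg hsh1 hsh2 hdetV hactV2 with ⟨hv1, hv2, hv3, hv4⟩ | ⟨hv1, hv2, hv3, hv4⟩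
  · -- V = I : U = Rx' · 1
    subst hv1; subst hv2; subst hv3; subst hv4
    norm_num at hV1 hV2 hV3 hV4
    have u1 : 5*U1 = 5*P' := by linear_combination P'*hV1 + R'*hV2 - U1*hdP'
    have u2 : 5*U2 = 5*Q' := by linear_combination Q'*hV1 + S'*hV2 - U2*hdP'
    have u3 : 5*U3 = 5*R' := by linear_combination P'*hV3 + R'*hV4 - U3*hdP'
    have u4 : 5*U4 = 5*S' := by linear_combination Q'*hV3 + S'*hV4 - U4*hdP'
    refine coset_unique x x' d1 d2 d3 d4 hdd ?_ ?_ ?_ ?_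
    · rw [hU1def] at u1; rw [← hP'def, ← hPdef, ← hQdef]; linarith
    · rw [hU2def] at u2; rw [← hQ'def, ← hPdef, ← hQdef]; linarith
    · rw [hU3def] at u3; rw [← hR'def, ← hRdef, ← hSdef]; linarith
    · rw [hU4def] at u4; rw [← hS'def, ← hRdef, ← hSdef]; linarith
  · subst hv1; subst hv2; subst hv3; subst hv4
    norm_num at hV1 hV2 hV3 hV4
    have u1 : 5*U1 = -(5*P') := by linear_combination P'*hV1 + R'*hV2 - U1*hdP'
    have u2 : 5*U2 = -(5*Q') := by linear_combination Q'*hV1 + S'*hV2 - U2*hdP'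
    have u3 : 5*U3 = -(5*R') := by linear_combination P'*hV3 + R'*hV4 - U3*hdP'
    have u4 : 5*U4 = -(5*S') := by linear_combination Q'*hV3 + S'*hV4 - U4*hdP'
    refine coset_unique x x' (-d1) (-d2) (-d3) (-d4) (by linear_combination hdd) ?_ ?_ ?_ ?_
    · rw [hU1def] at u1; rw [← hP'def, ← hPdef, ← hQdef]; linarith
    · rw [hU2def] at u2; rw [← hQ'def, ← hPdef, ← hQdef]; linarith
    · rw [hU3def] at u3; rw [← hR'def, ← hRdef, ← hSdef]; linarith
    · rw [hU4def] at u4; rw [← hS'def, ← hRdef, ← hSdef]; linarith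

/-- surjectivity of the Hecke correspondence -/
lemma key_surj {m : ℤ} (hm : 1 ≤ m) (hm5 : ¬(5:ℤ) ∣ m) (f : ℤ×ℤ×ℤ)
    (hf : Red (125*m) f) :
    ∃ (x : Fin 6) (g : ℤ×ℤ×ℤ), Red (5*m) g ∧
      Equl (act g (Rmat x).1 (Rmat x).2.1 (Rmat x).2.2.1 (Rmat x).2.2.2) f := by
  have hN5 : (1:ℤ) ≤ 5*m := by linarith
  have hN125 : (1:ℤ) ≤ 125*m := by linarith
  obtain ⟨A, B, C⟩ := f
  have hd : B^2 - 4*A*C = -(125*m) := hf.1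
  have hA : 1 ≤ A := red_pos hN125 hf
  obtain ⟨a, b, c, P0, Q0, R0, S0, hd2, ha, hdet5, hact0⟩ := descend hm5 hm hd hA
  obtain ⟨g2, hg2red, p, q, r, s, hdetg, hactg⟩ := red_exists hN5 (a,b,c) hd2 ha
  have hinv := equl_symm' hdetg hactg
  have step1 : act g2 (s*P0+(-q)*R0) (s*Q0+(-q)*S0) ((-r)*P0+p*R0) ((-r)*Q0+p*S0)
      = (A,B,C) := by
    rw [← act_comp, hinv, hact0]
  have hdet5' : (s*P0+(-q)*R0)*((-r)*Q0+p*S0) - (s*Q0+(-q)*S0)*((-r)*P0+p*R0) = 5 := by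
    rw [det_mul4]
    nlinarith [hdetg, hdet5]
  obtain ⟨x, p', q', r', s', hdet1, he1, he2, he3, he4⟩ :=
    coset_exists _ _ _ _ hdet5'
  refine ⟨x, g2, hg2red, p', q', r', s', hdet1, ?_⟩
  rw [act_comp, ← he1, ← he2, ← he3, ← he4]
  exact step1

/-- The main counting theorem. -/
theorem main_card {m : ℤ} (hm : 1 ≤ m) (hm5 : ¬(5:ℤ) ∣ m) :
    (redSet (125*m)).card = 6 * (redSet (5*m)).card := by
  have hN5 : (1:ℤ) ≤ 5*m := by linarith
  have hN125 : (1:ℤ) ≤ 125*m := by linarith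
  have key : ((Finset.univ : Finset (Fin 6)) ×ˢ redSet (5*m)).card
      = (redSet (125*m)).card := by
    have hsetup : ∀ z : Fin 6 × (ℤ×ℤ×ℤ), z ∈ (Finset.univ : Finset (Fin 6)) ×ˢ redSet (5*m) →
        ((act z.2 (Rmat z.1).1 (Rmat z.1).2.1 (Rmat z.1).2.2.1 (Rmat z.1).2.2.2).2.1^2
          - 4*(act z.2 (Rmat z.1).1 (Rmat z.1).2.1 (Rmat z.1).2.2.1 (Rmat z.1).2.2.2).1
            *(act z.2 (Rmat z.1).1 (Rmat z.1).2.1 (Rmat z.1).2.2.1 (Rmat z.1).2.2.2).2.2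
          = -(125*m))
        ∧ 1 ≤ (act z.2 (Rmat z.1).1 (Rmat z.1).2.1 (Rmat z.1).2.2.1 (Rmat z.1).2.2.2).1 := by
      rintro ⟨x, g⟩ hz
      have hg : Red (5*m) g := (mem_redSet hN5 g).mp (Finset.mem_product.mp hz).2
      obtain ⟨ga, gb, gc⟩ := g
      have hdisc : gb^2 - 4*ga*gc = -(5*m) := hg.1
      have hdR := Rdet x
      constructor
      · have h0 := act_disc (ga, gb, gc) (Rmat x).1 (Rmat x).2.1 (Rmat x).2.2.1 (Rmat x).2.2.2
        rw [hdR] at h0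
        simp only at h0 hdisc ⊢
        rw [h0, hdisc]; ring
      · have hcol : ¬((Rmat x).1 = 0 ∧ (Rmat x).2.2.1 = 0) := by
          rintro ⟨h1, h2⟩; rw [h1, h2] at hdR; simp at hdR
        have h1 := red_min hN5 hg (Rmat x).1 (Rmat x).2.2.1 hcol
        have hpos : 1 ≤ ga := red_pos hN5 hg
        unfold act; simp only
        linarith
    refine Finset.card_bij
      (fun z hz => Classical.choose (red_exists hN125 _ (hsetup z hz).1 (hsetup z hz).2))
      ?_ ?_ ?_
    · intro z hz
      have hspec := Classical.choose_spec (red_exists hN125 _ (hsetup z hz).1 (hsetup z hz).2)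
      exact (mem_redSet hN125 _).mpr hspec.1
    · -- injectivity
      rintro ⟨x, g⟩ hz ⟨x', g'⟩ hz' heq
      dsimp only at heq
      have hspec := Classical.choose_spec
        (red_exists hN125 _ (hsetup (x,g) hz).1 (hsetup (x,g) hz).2)
      have hspec' := Classical.choose_spec
        (red_exists hN125 _ (hsetup (x',g') hz').1 (hsetup (x',g') hz').2)
      rw [← heq] at hspec'
      have hgRed : Red (5*m) g := (mem_redSet hN5 g).mp (Finset.mem_product.mp hz).2
      have hgRed' : Red (5*m) g' := (mem_redSet hN5 g').mp (Finset.mem_product.mp hz').2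
      obtain ⟨hgg', hxx'⟩ := key_inj hm hm5 hgRed hgRed' hspec.2 hspec'.2
      rw [Prod.mk.injEq]
      exact ⟨hxx', hgg'⟩
    · -- surjectivity
      intro f hfmem
      have hf : Red (125*m) f := (mem_redSet hN125 f).mp hfmem
      obtain ⟨x, g, hgred, hequl⟩ := key_surj hm hm5 f hf
      have hzmem : (x, g) ∈ (Finset.univ : Finset (Fin 6)) ×ˢ redSet (5*m) :=
        Finset.mem_product.mpr ⟨Finset.mem_univ x, (mem_redSet hN5 g).mpr hgred⟩
      refine ⟨(x, g), hzmem, ?_⟩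
      dsimp only
      have hspec := Classical.choose_spec
        (red_exists hN125 _ (hsetup (x,g) hzmem).1 (hsetup (x,g) hzmem).2)
      exact red_unique2 hN125 hspec.1 hf hspec.2 hequl
  have h6 : ((Finset.univ : Finset (Fin 6)) ×ˢ redSet (5*m)).card
      = 6 * (redSet (5*m)).card := by
    rw [Finset.card_product]
    simp
  omega

end HurwitzAux
lemma no_shapek {m a k : ℤ} (hk : k = 3 ∨ k = 4) (hm5 : ¬(5:ℤ) ∣ m)
    (h : k*a^2 = 125*m) : False := by
  have hk5 : ¬ (5:ℤ) ∣ k := by rcases hk with rfl | rfl <;> norm_num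
  have h5a : (5:ℤ) ∣ a := by
    have h1 : (5:ℤ) ∣ k*a^2 := ⟨25*m, by linarith⟩
    rcases (prime5.dvd_mul).mp h1 with h2 | h2
    · exact absurd h2 hk5
    · exact prime5.dvd_of_dvd_pow h2
  obtain ⟨a1, rfl⟩ := h5a
  have h2 : k*a1^2 = 5*m := by nlinarith [h]
  have h5a1 : (5:ℤ) ∣ a1 := by
    have h1 : (5:ℤ) ∣ k*a1^2 := ⟨m, by linarith⟩
    rcases (prime5.dvd_mul).mp h1 with h3 | h3
    · exact absurd h3 hk5
    · exact prime5.dvd_of_dvd_pow h3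
  obtain ⟨a2, rfl⟩ := h5a1
  have h3 : m = 5*(k*a2^2) := by nlinarith [h2]
  exact hm5 ⟨_, h3⟩

/-- For every integer n ≥ 0, H(5 ^ 4·n + 5 ^ 3) ≡ 0 (mod 3). -/
theorem hurwitz_congruence_stmt0 :
    ∀ n : ℕ, RatModZero 3 (hurwitzClassNumber (5 ^ 4 * n + 5 ^ 3)) := by
  intro n
  classical
  set N : ℕ := 5 ^ 4 * n + 5 ^ 3 with hNdef
  have hN0 : N ≠ 0 := by omega
  set m : ℤ := 5*(n:ℤ) + 1 with hmdef
  have hm : 1 ≤ m := by omega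
  have hm5 : ¬ (5:ℤ) ∣ m := by omega
  have hNm : (N:ℤ) = 125*m := by rw [hNdef, hmdef]; push_cast; ring
  have hN1 : (1:ℤ) ≤ 125*m := by linarith
  set F := (Finset.Icc 1 N ×ˢ Finset.Icc (-(N : ℤ)) (N : ℤ) ×ˢ Finset.Icc 1 N).filter
        (fun t : ℕ × ℤ × ℕ =>
          t.2.1 ^ 2 - 4 * (t.1 : ℤ) * (t.2.2 : ℤ) = -(N : ℤ) ∧
          |t.2.1| ≤ (t.1 : ℤ) ∧ t.1 ≤ t.2.2 ∧
          ((|t.2.1| = (t.1 : ℤ) ∨ t.1 = t.2.2) → 0 ≤ t.2.1)) with hFdef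
  -- step 1 : the value is the cardinality of F
  have hval : hurwitzClassNumber N = (F.card : ℚ) := by
    rw [hurwitzClassNumber, if_neg hN0]
    have hone : ∀ t ∈ F, (if t.2.1 = (t.1 : ℤ) ∧ t.1 = t.2.2 then (1 : ℚ) / 3
       else if t.2.1 = 0 ∧ t.1 = t.2.2 then (1 : ℚ) / 2
       else 1) = 1 := by
      intro t ht
      obtain ⟨hd, _, _, _⟩ := (Finset.mem_filter.mp ht).2
      rw [if_neg, if_neg]
      · rintro ⟨hb0, hac⟩
        have hcc : (t.2.2 : ℤ) = (t.1 : ℤ) := by exact_mod_cast hac.symm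
        have h1 : 4*((t.1:ℤ))^2 = 125*m := by
          rw [← hNm]
          rw [hb0, hcc] at hd
          linarith [hd]
        exact no_shapek (Or.inr rfl) hm5 h1
      · rintro ⟨hb, hac⟩
        have hcc : (t.2.2 : ℤ) = (t.1 : ℤ) := by exact_mod_cast hac.symm
        have h1 : 3*((t.1:ℤ))^2 = 125*m := by
          rw [← hNm]
          rw [hb, hcc] at hd
          nlinarith [hd]
        exact no_shapek (Or.inl rfl) hm5 h1
    rw [← hFdef, Finset.sum_congr rfl hone, Finset.sum_const, nsmul_eq_mul, mul_one]
  -- step 2 : F.card = (redSet (125*m)).card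
  have hcard : F.card = (redSet (125*m)).card := by
    refine Finset.card_bij (fun t _ => ((t.1 : ℤ), t.2.1, (t.2.2 : ℤ))) ?_ ?_ ?_
    · intro t ht
      obtain ⟨hd, h1, h2, h3⟩ := (Finset.mem_filter.mp ht).2
      refine (mem_redSet hN1 _).mpr ⟨?_, ?_, ?_, ?_⟩
      · simp only; rw [← hNm]; linarith [hd]
      · simpa using h1
      · simp only; exact_mod_cast h2
      · simp only
        intro hor
        apply h3
        rcases hor with h | h
        · exact Or.inl (by exact_mod_cast h)
        · exact Or.inr (by exact_mod_cast h)
    · rintro ⟨a, b, c⟩ ht ⟨a', b', c'⟩ ht' heq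
      simp only [Prod.mk.injEq] at heq ⊢
      obtain ⟨e1, e2, e3⟩ := heq
      exact ⟨by exact_mod_cast e1, e2, by exact_mod_cast e3⟩
    · rintro ⟨a, b, c⟩ hmem
      have hbox := (Finset.mem_filter.mp hmem).1
      obtain ⟨hd, h1, h2, h3⟩ := (Finset.mem_filter.mp hmem).2
      simp only at hd h1 h2 h3
      obtain ⟨hbox1, hbox2⟩ := Finset.mem_product.mp hbox
      obtain ⟨hbox2a, hbox2b⟩ := Finset.mem_product.mp hbox2
      simp only [Finset.mem_Icc] at hbox1 hbox2a hbox2b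
      have e1 : ((a.toNat : ℕ) : ℤ) = a := by omega
      have e2 : ((c.toNat : ℕ) : ℤ) = c := by omega
      refine ⟨(a.toNat, b, c.toNat), ?_, ?_⟩
      · rw [hFdef]
        refine Finset.mem_filter.mpr ⟨?_, ?_, ?_, ?_, ?_⟩
        · refine Finset.mem_product.mpr ⟨?_, Finset.mem_product.mpr ⟨?_, ?_⟩⟩ <;>
            simp only [Finset.mem_Icc] <;> constructor <;> omega
        · simp only
          rw [e1, e2, hNm]
          linarith [hd]
        · simp only
          rw [e1]; exact h1
        · simp only; omega
        · simp only
          rw [e1]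
          intro hor
          apply h3
          rcases hor with h | h
          · exact Or.inl h
          · right; omega
      · simp only [Prod.mk.injEq]
        exact ⟨e1, trivial, e2⟩
  -- step 3 : conclude
  have h6 := main_card hm hm5
  refine ⟨((2 * (redSet (5*m)).card : ℕ) : ℚ), ?_, ?_⟩
  · rw [hval, hcard, h6]
    push_cast
    ring
  · rw [Rat.den_natCast]
    norm_num
end

section
/- For every integer n ≥ 0, the Hurwitz class number satisfies H(3^3·n + 3^2) ≡ 0 (mod 5). -/
namespace HCN
open scoped Classical

/-- A binary quadratic form `(a,b,c)`. -/
abbrev F3 := ℤ × ℤ × ℤ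
/-- A 2×2 integer matrix `(p,q,r,s)` meaning `[[p,q],[r,s]]`. -/
abbrev M4 := ℤ × ℤ × ℤ × ℤ

def mdet (U : M4) : ℤ := U.1 * U.2.2.2 - U.2.1 * U.2.2.1

def mmul (U V : M4) : M4 :=
  (U.1*V.1 + U.2.1*V.2.2.1, U.1*V.2.1 + U.2.1*V.2.2.2,
   U.2.2.1*V.1 + U.2.2.2*V.2.2.1, U.2.2.1*V.2.1 + U.2.2.2*V.2.2.2)

def madj (U : M4) : M4 := (U.2.2.2, -U.2.1, -U.2.2.1, U.1)

def mone : M4 := (1,0,0,1)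

/-- value of the form at (x,y) -/
def fval (f : F3) (x y : ℤ) : ℤ := f.1*x^2 + f.2.1*x*y + f.2.2*y^2

/-- action of a matrix on a form (substitution). -/
def fact (f : F3) (U : M4) : F3 :=
  (fval f U.1 U.2.2.1,
   2*f.1*U.1*U.2.1 + f.2.1*(U.1*U.2.2.2 + U.2.1*U.2.2.1) + 2*f.2.2*U.2.2.1*U.2.2.2,
   fval f U.2.1 U.2.2.2)

def disc (f : F3) : ℤ := f.2.1^2 - 4*f.1*f.2.2

def Equi (f g : F3) : Prop := ∃ U : M4, mdet U = 1 ∧ fact f U = g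

lemma mdet_mmul (U V : M4) : mdet (mmul U V) = mdet U * mdet V := by
  obtain ⟨p,q,r,s⟩ := U; obtain ⟨p',q',r',s'⟩ := V
  simp only [mdet, mmul]; ring

lemma fact_mmul (f : F3) (U V : M4) : fact f (mmul U V) = fact (fact f U) V := by
  obtain ⟨a,b,c⟩ := f; obtain ⟨p,q,r,s⟩ := U; obtain ⟨p',q',r',s'⟩ := V
  simp only [fact, fval, mmul, Prod.mk.injEq]
  refine ⟨by ring, by ring, by ring⟩

lemma fact_mone (f : F3) : fact f mone = f := by
  obtain ⟨a,b,c⟩ := f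
  simp only [fact, fval, mone, Prod.mk.injEq]
  refine ⟨by ring, by ring, by ring⟩

lemma mmul_madj (U : M4) : mmul U (madj U) = (mdet U, 0, 0, mdet U) := by
  obtain ⟨p,q,r,s⟩ := U
  simp only [mmul, madj, mdet, Prod.mk.injEq]
  refine ⟨by ring, by ring, by ring, by ring⟩

lemma madj_mmul (U : M4) : mmul (madj U) U = (mdet U, 0, 0, mdet U) := by
  obtain ⟨p,q,r,s⟩ := U
  simp only [mmul, madj, mdet, Prod.mk.injEq]
  refine ⟨by ring, by ring, by ring, by ring⟩

lemma disc_fact (f : F3) (U : M4) : disc (fact f U) = (mdet U)^2 * disc f := by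
  obtain ⟨a,b,c⟩ := f; obtain ⟨p,q,r,s⟩ := U
  simp only [disc, fact, fval, mdet]; ring

lemma equi_refl (f : F3) : Equi f f := ⟨mone, by simp [mdet, mone], fact_mone f⟩

lemma equi_symm {f g : F3} (h : Equi f g) : Equi g f := by
  obtain ⟨U, hU, hfg⟩ := h
  refine ⟨madj U, ?_, ?_⟩
  · obtain ⟨p,q,r,s⟩ := U; simp only [mdet, madj] at hU ⊢; linarith
  · rw [← hfg, ← fact_mmul, mmul_madj, hU]
    exact fact_mone f

lemma equi_trans {f g h : F3} (h1 : Equi f g) (h2 : Equi g h) : Equi f h := by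
  obtain ⟨U, hU, rfl⟩ := h1; obtain ⟨V, hV, rfl⟩ := h2
  exact ⟨mmul U V, by rw [mdet_mmul, hU, hV, one_mul], fact_mmul f U V⟩

/-- positive definiteness: positivity of values -/
lemma fval_pos {f : F3} {N : ℤ} (hd : disc f = -N) (hN : 0 < N) (ha : 0 < f.1)
    {x y : ℤ} (hxy : ¬(x = 0 ∧ y = 0)) : 0 < fval f x y := by
  obtain ⟨a,b,c⟩ := f
  simp only [disc] at hd
  simp only [fval] at *
  rcases eq_or_ne y 0 with rfl | hy
  · have hx : x ≠ 0 := by tauto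
    have : 1 ≤ x^2 := by rcases lt_or_gt_of_ne hx with h|h <;> nlinarith
    nlinarith
  · have : 1 ≤ y^2 := by rcases lt_or_gt_of_ne hy with h|h <;> nlinarith
    nlinarith [sq_nonneg (2*a*x + b*y)]


def Red (f : F3) : Prop :=
  |f.2.1| ≤ f.1 ∧ f.1 ≤ f.2.2 ∧ ((|f.2.1| = f.1 ∨ f.1 = f.2.2) → 0 ≤ f.2.1)

lemma key_ineq {A B C X Y : ℤ} (hB : 0 ≤ B) (hBA : B ≤ A) (hAC : A ≤ C)
    (hX : 1 ≤ X) (hY : 1 ≤ Y) : A - B + C ≤ A*X^2 - B*(X*Y) + C*Y^2 := by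
  have hA : 0 ≤ A := hB.trans hBA
  have h01 : 0 ≤ X*Y - 1 := by nlinarith
  have h02 : 0 ≤ Y^2 - 1 := by nlinarith
  nlinarith [mul_nonneg (sub_nonneg.2 hBA) h01, mul_nonneg (sub_nonneg.2 hAC) h02,
    mul_nonneg hA (sq_nonneg (X - Y)), mul_nonneg hA h01]

lemma fval_ge3 {f : F3} (hr : Red f) (ha : 0 < f.1) {x y : ℤ} (hx : x ≠ 0) (hy : y ≠ 0) :
    f.1 - |f.2.1| + f.2.2 ≤ fval f x y := by
  obtain ⟨a,b,c⟩ := f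
  obtain ⟨h1, h2, _⟩ := hr
  simp only [fval] at *
  have hX : 1 ≤ |x| := Int.one_le_abs hx
  have hY : 1 ≤ |y| := Int.one_le_abs hy
  have hb : -(|b| * (|x| * |y|)) ≤ b * (x*y) := by
    have h3 : |b * (x*y)| = |b| * (|x| * |y|) := by rw [abs_mul, abs_mul]
    have := neg_abs_le (b * (x*y))
    linarith [this, h3.le, h3.ge]
  have key := key_ineq (abs_nonneg b) h1 h2 hX hY
  have hx2 : |x|^2 = x^2 := sq_abs x
  have hy2 : |y|^2 = y^2 := sq_abs y
  nlinarith [key, hb]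

lemma fval_ge_c {f : F3} (hr : Red f) (ha : 0 < f.1) {x y : ℤ} (hy : y ≠ 0) :
    f.2.2 ≤ fval f x y := by
  rcases eq_or_ne x 0 with rfl | hx
  · obtain ⟨a,b,c⟩ := f
    obtain ⟨h1, h2, _⟩ := hr
    simp only [fval] at *
    have hY : 1 ≤ |y| := Int.one_le_abs hy
    have : 1 ≤ y^2 := by nlinarith [sq_abs y]
    nlinarith
  · have := fval_ge3 hr ha hx hy
    have h1 := hr.1
    linarith [abs_nonneg f.2.1, hr.1]

lemma fval_ge_a {f : F3} (hr : Red f) (ha : 0 < f.1) {x y : ℤ} (hxy : ¬(x = 0 ∧ y = 0)) :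
    f.1 ≤ fval f x y := by
  rcases eq_or_ne y 0 with rfl | hy
  · have hx : x ≠ 0 := by tauto
    obtain ⟨a,b,c⟩ := f
    simp only [fval] at *
    have : 1 ≤ x^2 := by rcases lt_or_gt_of_ne hx with h|h <;> nlinarith
    nlinarith
  · exact le_trans hr.2.1 (fval_ge_c hr ha hy)


lemma equi_disc {f g : F3} (h : Equi f g) : disc g = disc f := by
  obtain ⟨U, hU, rfl⟩ := h
  rw [disc_fact, hU]; ring

lemma equi_pos {N : ℤ} (hN : 0 < N) {f g : F3} (hd : disc f = -N) (ha : 0 < f.1)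
    (h : Equi f g) : 0 < g.1 := by
  obtain ⟨U, hU, rfl⟩ := h
  obtain ⟨p,q,r,s⟩ := U
  have hpr : ¬(p = 0 ∧ r = 0) := by
    rintro ⟨rfl, rfl⟩; simp [mdet] at hU
  exact fval_pos hd hN ha hpr

lemma amin_le {N : ℤ} (hN : 0 < N) {f g : F3} (hd : disc f = -N) (ha : 0 < f.1)
    (hf : Red f) (h : Equi f g) : f.1 ≤ g.1 := by
  obtain ⟨U, hU, rfl⟩ := h
  obtain ⟨p,q,r,s⟩ := U
  have hpr : ¬(p = 0 ∧ r = 0) := by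
    rintro ⟨rfl, rfl⟩; simp [mdet] at hU
  exact fval_ge_a hf ha hpr

lemma c_le {f g : F3} {U : M4} (hf : Red f) (ha : 0 < f.1)
    (hfU : fact f U = g) (hU : mdet U = 1) (hag : g.1 = f.1) : f.2.2 ≤ g.2.2 := by
  obtain ⟨p,q,r,s⟩ := U
  have hc : g.2.2 = fval f q s := by rw [← hfU]; rfl
  rcases eq_or_ne s 0 with rfl | hs
  · have hqr : q * r = -1 := by simp only [mdet] at hU; linarith
    have hq : IsUnit q := IsUnit.of_mul_eq_one (a := q) (-r) (by linarith)
    have hq2 : q = 1 ∨ q = -1 := Int.isUnit_iff.mp hq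
    have hr : r ≠ 0 := by rintro rfl; simp at hqr
    have h1 : fval f p r = f.1 := by rw [← hag, ← hfU]; rfl
    have h2 := fval_ge_c hf ha hr (x := p)
    rw [h1] at h2
    have hval : fval f q 0 = f.1 * q^2 := by simp [fval]
    have : q^2 = 1 := by rcases hq2 with rfl | rfl <;> norm_num
    rw [hc, hval, this, mul_one]
    exact h2
  · rw [hc]; exact fval_ge_c hf ha hs

lemma bneg {f g : F3} {U : M4} (hf : Red f) (hg : Red g) (ha : 0 < f.1)
    (hfU : fact f U = g) (hU : mdet U = 1) (h1 : g.1 = f.1) (h2 : g.2.2 = f.2.2)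
    (h3 : g.2.1 = -f.2.1) (h4 : f.2.1 ≠ 0) (h5 : g.2.1 < 0) : False := by
  obtain ⟨p,q,r,s⟩ := U
  have hnb : ¬(|g.2.1| = g.1 ∨ g.1 = g.2.2) := fun hh => absurd (hg.2.2 hh) (not_le.2 h5)
  push_neg at hnb
  obtain ⟨hb_lt, hac_ne⟩ := hnb
  have hblt : |g.2.1| < g.1 := lt_of_le_of_ne hg.1 hb_lt
  have haclt : g.1 < g.2.2 := lt_of_le_of_ne hg.2.1 hac_ne
  have hbltf : |f.2.1| < f.1 := by
    have h6 : |f.2.1| = |g.2.1| := by rw [h3, abs_neg]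
    rw [h6, ← h1]; exact hblt
  have hacltf : f.1 < f.2.2 := by rw [← h1, ← h2]; exact haclt
  have hfpr : fval f p r = f.1 := by rw [← h1, ← hfU]; rfl
  have hr0 : r = 0 := by
    by_contra hr
    have h6 := fval_ge_c hf ha hr (x := p)
    rw [hfpr] at h6
    linarith
  subst hr0
  have hps : p * s = 1 := by simp only [mdet] at hU; linarith
  have hbeq : g.2.1 = 2*f.1*p*q + f.2.1 := by
    rw [← hfU]
    show 2*f.1*p*q + f.2.1*(p*s + q*0) + 2*f.2.2*0*s = _
    rw [hps]; ring
  have key : f.1 * (p*q) = -f.2.1 := by rw [h3] at hbeq; linarith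
  have habs : |f.1 * (p*q)| = |f.2.1| := by rw [key, abs_neg]
  rw [abs_mul, abs_of_pos ha] at habs
  have hpq0 : |p*q| = 0 := by nlinarith [abs_nonneg (p*q)]
  have : p * q = 0 := abs_eq_zero.1 hpq0
  rw [this, mul_zero] at key
  exact h4 (by linarith)

theorem red_unique {N : ℤ} (hN : 0 < N) {f g : F3} (hd : disc f = -N) (ha : 0 < f.1)
    (hf : Red f) (hg : Red g) (h : Equi f g) : f = g := by
  have hdg : disc g = -N := by rw [equi_disc h, hd]
  have hag : 0 < g.1 := equi_pos hN hd ha h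
  have h' := equi_symm h
  have haa : g.1 = f.1 :=
    le_antisymm (amin_le hN hdg hag hg h') (amin_le hN hd ha hf h)
  obtain ⟨U, hU, hfU⟩ := h
  obtain ⟨V, hV, hgV⟩ := h'
  have hcc : g.2.2 = f.2.2 :=
    le_antisymm (c_le hg hag hgV hV haa.symm) (c_le hf ha hfU hU haa)
  have hbsq : g.2.1 * g.2.1 = f.2.1 * f.2.1 := by
    have e1 : disc g = disc f := by rw [hd, hdg]
    simp only [disc] at e1
    rw [haa, hcc] at e1
    linear_combination e1
  have hbb : g.2.1 = f.2.1 ∨ g.2.1 = -f.2.1 := mul_self_eq_mul_self_iff.mp hbsq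
  have hmain : g.2.1 = f.2.1 := by
    rcases hbb with hb | hb
    · exact hb
    · rcases eq_or_ne f.2.1 0 with h0 | h0
      · rw [hb, h0, neg_zero]
      · exfalso
        rcases lt_trichotomy f.2.1 0 with hfneg | hzero | hfpos
        · have hfb : f.2.1 = -g.2.1 := by rw [hb]; ring
          have hgb : g.2.1 ≠ 0 := by rw [hb]; simpa using h0
          exact bneg hg hf hag hgV hV haa.symm hcc.symm hfb hgb hfneg
        · exact h0 hzero
        · have hgneg : g.2.1 < 0 := by rw [hb]; linarith
          exact bneg hf hg ha hfU hU haa hcc hb h0 hgneg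
  exact (Prod.ext haa (Prod.ext hmain hcc)).symm

lemma fact_S (a b c : ℤ) : fact (a,b,c) (0,-1,1,0) = (c,-b,a) := by
  simp only [fact, fval, Prod.mk.injEq]
  refine ⟨by ring, by ring, by ring⟩

lemma fact_T (a b c k : ℤ) : fact (a,b,c) (1,k,0,1) = (a, b + 2*a*k, a*k^2 + b*k + c) := by
  simp only [fact, fval, Prod.mk.injEq]
  refine ⟨by ring, by ring, by ring⟩

lemma exists_red {N : ℤ} (hN : 0 < N) {f : F3} (hd : disc f = -N) (ha : 0 < f.1) :
    ∃ g, Red g ∧ Equi f g := by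
  classical
  have hPex : ∃ n : ℕ, ∃ g : F3, Equi f g ∧ g.1 = (n : ℤ) + 1 :=
    ⟨(f.1 - 1).toNat, f, equi_refl f, by omega⟩
  obtain ⟨g₀, hg₀, hg₀1⟩ := Nat.find_spec hPex
  have hmin : ∀ h : F3, Equi f h → g₀.1 ≤ h.1 := by
    intro h hh
    have hp : 0 < h.1 := equi_pos hN hd ha hh
    have hfind := Nat.find_min' hPex (m := (h.1 - 1).toNat) ⟨h, hh, by omega⟩
    omega
  obtain ⟨a₀, b₀, c₀⟩ := g₀
  simp only at hg₀1
  have ha₀ : 0 < a₀ := equi_pos hN hd ha hg₀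
  have hS : Equi f (c₀, -b₀, a₀) :=
    equi_trans hg₀ ⟨(0,-1,1,0), by norm_num [mdet], fact_S a₀ b₀ c₀⟩
  have hca : a₀ ≤ c₀ := hmin _ hS
  obtain ⟨k, hk1, hk2⟩ : ∃ k : ℤ, -a₀ < b₀ + 2*a₀*k ∧ b₀ + 2*a₀*k ≤ a₀ := by
    set q := (b₀ + a₀) / (2*a₀) with hq
    have hne : (2*a₀) ≠ 0 := by linarith
    have h0 : 0 ≤ (b₀+a₀) % (2*a₀) := Int.emod_nonneg _ hne
    have h1 : (b₀+a₀) % (2*a₀) < 2*a₀ := Int.emod_lt_of_pos _ (by linarith)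
    have h2 : (b₀+a₀) % (2*a₀) = b₀ + a₀ - 2*a₀*q := by
      rw [hq, Int.emod_def]
    rcases eq_or_lt_of_le h0 with he | hlt
    · exact ⟨-q + 1, by nlinarith, by nlinarith⟩
    · exact ⟨-q, by nlinarith, by nlinarith⟩
  have hT : Equi f (a₀, b₀ + 2*a₀*k, a₀*k^2 + b₀*k + c₀) :=
    equi_trans hg₀ ⟨(1,k,0,1), by norm_num [mdet], fact_T a₀ b₀ c₀ k⟩
  set b₁ := b₀ + 2*a₀*k with hb₁
  set c₁ := a₀*k^2 + b₀*k + c₀ with hc₁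
  have hTS : Equi f (c₁, -b₁, a₀) :=
    equi_trans hT ⟨(0,-1,1,0), by norm_num [mdet], fact_S _ _ _⟩
  have hac₁ : a₀ ≤ c₁ := hmin _ hTS
  by_cases hfin : a₀ = c₁ ∧ b₁ < 0
  · obtain ⟨hfe, hfb⟩ := hfin
    refine ⟨(c₁, -b₁, a₀), ⟨?_, ?_, ?_⟩, hTS⟩
    · show |(-b₁)| ≤ c₁; rw [abs_neg]; rw [← hfe]; rw [abs_le]; constructor <;> linarith
    · show c₁ ≤ a₀; linarith
    · intro _; show (0:ℤ) ≤ -b₁; linarith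
  · refine ⟨(a₀, b₁, c₁), ⟨?_, hac₁, ?_⟩, hT⟩
    · show |b₁| ≤ a₀; rw [abs_le]; constructor <;> linarith
    · intro hh
      show (0:ℤ) ≤ b₁
      by_contra hbneg
      push_neg at hbneg
      rcases hh with hh | hh
      · have : b₁ = -a₀ := by
          rcases abs_cases b₁ with ⟨he, _⟩ | ⟨he, _⟩ <;> simp only at hh <;> linarith
        linarith
      · exact hfin ⟨hh, hbneg⟩

noncomputable def red (f : F3) : F3 :=
  if h : ∃ g, Red g ∧ Equi f g then h.choose else f

lemma red_spec {N : ℤ} (hN : 0 < N) {f : F3} (hd : disc f = -N) (ha : 0 < f.1) :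
    Red (red f) ∧ Equi f (red f) := by
  have h := exists_red hN hd ha
  unfold red
  rw [dif_pos h]
  exact ⟨h.choose_spec.1, h.choose_spec.2⟩

lemma red_eq_of_equi {N : ℤ} (hN : 0 < N) {f g : F3} (hd : disc f = -N) (ha : 0 < f.1)
    (hg : Red g) (h : Equi f g) : red f = g := by
  obtain ⟨h1, h2⟩ := red_spec hN hd ha
  have hdr : disc (red f) = -N := by rw [equi_disc h2, hd]
  have har : 0 < (red f).1 := equi_pos hN hd ha h2
  exact red_unique hN hdr har h1 hg (equi_trans (equi_symm h2) h)

lemma red_eq_self {N : ℤ} (hN : 0 < N) {f : F3} (hd : disc f = -N) (ha : 0 < f.1)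
    (hf : Red f) : red f = f :=
  red_eq_of_equi hN hd ha hf (equi_refl f)

lemma red_congr {N : ℤ} (hN : 0 < N) {f g : F3} (hd : disc f = -N) (ha : 0 < f.1)
    (h : Equi f g) : red f = red g := by
  have hdg : disc g = -N := by rw [equi_disc h, hd]
  have hag : 0 < g.1 := equi_pos hN hd ha h
  obtain ⟨h1, h2⟩ := red_spec hN hdg hag
  exact red_eq_of_equi hN hd ha h1 (equi_trans h h2)

/-! ### mod 3 arithmetic -/

lemma dvd3_iff (x : ℤ) : (3:ℤ) ∣ x ↔ (x : ZMod 3) = 0 := by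
  rw [ZMod.intCast_zmod_eq_zero_iff_dvd]; norm_num

lemma castM_eq_one {M : ℤ} (hM3 : M % 3 = 1) : ((M : ZMod 3)) = 1 := by
  have h : (3:ℤ) ∣ (M - 1) := by omega
  have h2 := (dvd3_iff _).mp h
  push_cast at h2
  linear_combination h2

lemma aniso {M : ℤ} (hM3 : M % 3 = 1) {G : F3} (hd : disc G = -M) {x y : ℤ}
    (h : (3:ℤ) ∣ fval G x y) : (3:ℤ) ∣ x ∧ (3:ℤ) ∣ y := by
  obtain ⟨α,β,γ⟩ := G
  simp only [disc] at hd
  simp only [fval] at h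
  have hM : ((M : ZMod 3)) = 1 := castM_eq_one hM3
  have key : ∀ (a b c u v : ZMod 3), b^2 - 4*a*c = -1 →
      a*u^2 + b*u*v + c*v^2 = 0 → u = 0 ∧ v = 0 := by decide
  have hd3 : ((β:ZMod 3)^2 - 4*(α:ZMod 3)*(γ:ZMod 3) = -1) := by
    have h2 : (3:ℤ) ∣ (β^2 - 4*α*γ - (-M)) := by rw [hd]; ring_nf; exact dvd_zero 3
    have h3 := (dvd3_iff _).mp h2
    push_cast at h3
    rw [hM] at h3
    linear_combination h3
  have h3 : ((α:ZMod 3)*(x:ZMod 3)^2 + (β:ZMod 3)*(x:ZMod 3)*(y:ZMod 3) + (γ:ZMod 3)*(y:ZMod 3)^2 = 0) := by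
    have h4 := (dvd3_iff _).mp h
    push_cast at h4
    linear_combination h4
  obtain ⟨hx, hy⟩ := key _ _ _ _ _ hd3 h3
  exact ⟨(dvd3_iff x).mpr hx, (dvd3_iff y).mpr hy⟩

/-! ### Type A forms and descent -/

def NS (t : F3) : Prop := ¬((3:ℤ) ∣ t.1 ∧ (3:ℤ) ∣ t.2.2)

def TypeA (F : F3) : Prop := (9:ℤ) ∣ F.1 ∧ (3:ℤ) ∣ F.2.1 ∧ ¬ (3:ℤ) ∣ F.2.2

def down (F : F3) : F3 := (F.1/9, F.2.1/3, F.2.2)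

lemma fact_fst (f : F3) (U : M4) : (fact f U).1 = fval f U.1 U.2.2.1 := rfl
lemma fact_trd (f : F3) (U : M4) : (fact f U).2.2 = fval f U.2.1 U.2.2.2 := rfl
lemma fact_snd (f : F3) (U : M4) : (fact f U).2.1
    = 2*f.1*U.1*U.2.1 + f.2.1*(U.1*U.2.2.2+U.2.1*U.2.2.1) + 2*f.2.2*U.2.2.1*U.2.2.2 := rfl

lemma typeA_decomp {F : F3} (h : TypeA F) :
    ∃ α β γ : ℤ, F = (9*α, 3*β, γ) ∧ ¬(3:ℤ) ∣ γ ∧ down F = (α, β, γ) := by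
  obtain ⟨⟨α, hα⟩, ⟨β, hβ⟩, hγ⟩ := h
  refine ⟨α, β, F.2.2, ?_, hγ, ?_⟩
  · exact Prod.ext hα (Prod.ext hβ rfl)
  · simp only [down, hα, hβ]
    rw [Int.mul_ediv_cancel_left α (by norm_num), Int.mul_ediv_cancel_left β (by norm_num)]

lemma prime_three : Prime (3:ℤ) := by norm_num

lemma dvd_b_of_dvd_ac {M : ℤ} {t : F3} (hd : disc t = -(9*M)) (h3a : (3:ℤ) ∣ t.1)
    (h3c : (3:ℤ) ∣ t.2.2) : (3:ℤ) ∣ t.2.1 := by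
  obtain ⟨a,b,c⟩ := t
  simp only [disc] at hd
  simp only at h3a h3c ⊢
  have h1 : (3:ℤ) ∣ b^2 := by
    have : b^2 = 4*a*c - 9*M := by linarith
    rw [this]
    obtain ⟨a', rfl⟩ := h3a
    exact ⟨4*a'*c - 3*M, by ring⟩
  have := prime_three.dvd_of_dvd_pow (n := 2) h1
  simpa using this

lemma dvd_fval {d : ℤ} {f : F3} (h1 : d ∣ f.1) (h2 : d ∣ f.2.1) (h3 : d ∣ f.2.2)
    (x y : ℤ) : d ∣ fval f x y := by
  obtain ⟨u, hu⟩ := h1; obtain ⟨v, hv⟩ := h2; obtain ⟨w, hw⟩ := h3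
  exact ⟨u*x^2 + v*x*y + w*y^2, by simp only [fval, hu, hv, hw]; ring⟩

lemma scaled_transfer {t F : F3} (h : Equi t F) (h1 : (3:ℤ) ∣ F.1)
    (h2 : (3:ℤ) ∣ F.2.1) (h3 : (3:ℤ) ∣ F.2.2) : (3:ℤ) ∣ t.1 ∧ (3:ℤ) ∣ t.2.2 := by
  obtain ⟨V, hV, hFV⟩ := equi_symm h
  constructor
  · rw [← hFV, fact_fst]; exact dvd_fval h1 h2 h3 _ _
  · rw [← hFV, fact_trd]; exact dvd_fval h1 h2 h3 _ _

lemma exists_zero_dir {M : ℤ} {F : F3} (hd : disc F = -(9*M)) :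
    ∃ U : M4, mdet U = 1 ∧ (3:ℤ) ∣ (fact F U).1 := by
  obtain ⟨a,b,c⟩ := F
  simp only [disc] at hd
  have key : ∀ a b c : ZMod 3, b^2 - 4*a*c = 0 →
      a = 0 ∨ c = 0 ∨ a + b + c = 0 ∨ a + 2*b + 4*c = 0 := by decide
  have hd3 : ((b:ZMod 3)^2 - 4*(a:ZMod 3)*(c:ZMod 3) = 0) := by
    have h2 : (3:ℤ) ∣ (b^2 - 4*a*c) := by rw [hd]; exact ⟨-3*M, by ring⟩
    have h3 := (dvd3_iff _).mp h2
    push_cast at h3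
    linear_combination h3
  rcases key _ _ _ hd3 with h | h | h | h
  · exact ⟨mone, by norm_num [mdet, mone], by
      rw [fact_mone]
      exact (dvd3_iff a).mpr h⟩
  · refine ⟨(0,-1,1,0), by norm_num [mdet], ?_⟩
    rw [fact_S]
    exact (dvd3_iff c).mpr h
  · refine ⟨(1,0,1,1), by norm_num [mdet], ?_⟩
    rw [fact_fst]
    have : fval (a,b,c) 1 1 = a + b + c := by simp only [fval]; ring
    rw [this]
    refine (dvd3_iff _).mpr ?_
    push_cast
    linear_combination h
  · refine ⟨(1,0,2,1), by norm_num [mdet], ?_⟩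
    rw [fact_fst]
    have : fval (a,b,c) 1 2 = a + 2*b + 4*c := by simp only [fval]; ring
    rw [this]
    refine (dvd3_iff _).mpr ?_
    push_cast
    linear_combination h

lemma norm_typeA {M : ℤ} {t : F3} (hd : disc t = -(9*M)) (hns : NS t) :
    ∃ F, Equi t F ∧ TypeA F := by
  obtain ⟨U, hU, h3a⟩ := exists_zero_dir hd
  set F := fact t U with hF
  have hEq : Equi t F := ⟨U, hU, rfl⟩
  have hdF : disc F = -(9*M) := by rw [equi_disc hEq, hd]
  have h3b : (3:ℤ) ∣ F.2.1 := by
    obtain ⟨a,b,c⟩ := F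
    simp only [disc] at hdF
    simp only at h3a ⊢
    have h1 : (3:ℤ) ∣ b^2 := by
      have hbc : b^2 = 4*a*c - 9*M := by linarith
      rw [hbc]
      obtain ⟨a', rfl⟩ := h3a
      exact ⟨4*a'*c - 3*M, by ring⟩
    simpa using prime_three.dvd_of_dvd_pow (n := 2) h1
  have h3c : ¬ (3:ℤ) ∣ F.2.2 := by
    intro hc
    exact hns (scaled_transfer hEq h3a h3b hc)
  refine ⟨F, hEq, ?_, h3b, h3c⟩
  -- 9 ∣ F.1
  obtain ⟨a,b,c⟩ := F
  simp only at h3a h3b h3c ⊢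
  obtain ⟨a₁, rfl⟩ := h3a
  obtain ⟨b₁, rfl⟩ := h3b
  simp only [disc] at hdF
  have h4 : 4*(a₁*c) = 3*(b₁^2 + M) := by linarith
  have h5 : (3:ℤ) ∣ 4*(a₁*c) := ⟨b₁^2 + M, h4⟩
  have h6 : (3:ℤ) ∣ a₁*c := by
    rcases (Prime.dvd_mul prime_three).mp h5 with h | h
    · norm_num at h
    · exact h
  rcases (Prime.dvd_mul prime_three).mp h6 with h | h
  · obtain ⟨a₂, rfl⟩ := h
    exact ⟨a₂, by ring⟩
  · exact absurd h h3c

lemma m4ext {w x y z w' x' y' z' : ℤ} (h1 : w = w') (h2 : x = x') (h3 : y = y')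
    (h4 : z = z') : ((w,x,y,z) : M4) = (w',x',y',z') := by
  subst h1 h2 h3 h4; rfl

lemma down_equi {F F' : F3} (hA : TypeA F) (hA' : TypeA F') (h : Equi F F') :
    Equi (down F) (down F') := by
  obtain ⟨α, β, γ, hFe, hγ, hdown⟩ := typeA_decomp hA
  obtain ⟨α', β', γ', hFe', hγ', hdown'⟩ := typeA_decomp hA'
  obtain ⟨V, hV, hFV⟩ := h
  obtain ⟨v1,v2,v3,v4⟩ := V
  subst hFe hFe'
  rw [hdown, hdown']
  have e1 : 9*α' = 9*α*v1^2 + 3*β*(v1*v3) + γ*v3^2 := by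
    have h1 := congrArg Prod.fst hFV
    simp only [fact_fst, fval] at h1
    linear_combination -h1
  have e2 : 3*β' = 18*α*(v1*v2) + 3*β*(v1*v4+v2*v3) + 2*γ*(v3*v4) := by
    have h1 := congrArg (fun z => z.2.1) hFV
    simp only [fact_snd] at h1
    linear_combination -h1
  have e3 : γ' = 9*α*v2^2 + 3*β*(v2*v4) + γ*v4^2 := by
    have h1 := congrArg (fun z => z.2.2) hFV
    simp only [fact_trd, fval] at h1
    linear_combination -h1
  have h3 : (3:ℤ) ∣ v3 := by
    have hd : (3:ℤ) ∣ γ*v3^2 := ⟨3*α' - (3*α*v1^2 + β*(v1*v3)), by linarith⟩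
    rcases (Prime.dvd_mul prime_three).mp hd with h | h
    · exact absurd h hγ
    · exact prime_three.dvd_of_dvd_pow h
  obtain ⟨w, rfl⟩ := h3
  refine ⟨(v1, 3*v2, w, v4), ?_, ?_⟩
  · simp only [mdet] at hV ⊢; linarith
  · refine Prod.ext ?_ (Prod.ext ?_ ?_)
    · show fval (α,β,γ) v1 w = α'
      refine mul_left_cancel₀ (by norm_num : (9:ℤ) ≠ 0) ?_
      simp only [fval]
      linear_combination -e1
    · show 2*α*v1*(3*v2) + β*(v1*v4+(3*v2)*w) + 2*γ*w*v4 = β'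
      refine mul_left_cancel₀ (by norm_num : (3:ℤ) ≠ 0) ?_
      linear_combination -e2
    · show fval (α,β,γ) (3*v2) v4 = γ'
      simp only [fval]
      linear_combination -e3

lemma rigidity {M : ℤ} (hM3 : M % 3 = 1) {G : F3} (hd : disc G = -M) {B : M4}
    (hB : fact G B = (9*G.1, 9*G.2.1, 9*G.2.2)) :
    ∃ A : M4, B = (3*A.1, 3*A.2.1, 3*A.2.2.1, 3*A.2.2.2) ∧ fact G A = G := by
  obtain ⟨P,Q,R,S⟩ := B
  have h1 : (3:ℤ) ∣ fval G P R := by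
    have := congrArg Prod.fst hB
    simp only [fact_fst] at this
    exact this ▸ ⟨3*G.1, by ring⟩
  have h2 : (3:ℤ) ∣ fval G Q S := by
    have := congrArg (fun z => z.2.2) hB
    simp only [fact_trd] at this
    exact this ▸ ⟨3*G.2.2, by ring⟩
  obtain ⟨hP, hR⟩ := aniso hM3 hd h1
  obtain ⟨hQ, hS⟩ := aniso hM3 hd h2
  obtain ⟨p, rfl⟩ := hP
  obtain ⟨q, rfl⟩ := hQ
  obtain ⟨r, rfl⟩ := hR
  obtain ⟨s, rfl⟩ := hS
  refine ⟨(p,q,r,s), rfl, ?_⟩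
  obtain ⟨α,β,γ⟩ := G
  have c1 := congrArg Prod.fst hB
  have c2 := congrArg (fun z => z.2.1) hB
  have c3 := congrArg (fun z => z.2.2) hB
  simp only [fact_fst, fact_snd, fact_trd, fval] at c1 c2 c3
  refine Prod.ext ?_ (Prod.ext ?_ ?_)
  · show fval (α,β,γ) p r = α
    refine mul_left_cancel₀ (by norm_num : (9:ℤ) ≠ 0) ?_
    simp only [fval]
    linear_combination c1
  · show 2*α*p*q + β*(p*s+q*r) + 2*γ*r*s = β
    refine mul_left_cancel₀ (by norm_num : (9:ℤ) ≠ 0) ?_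
    linear_combination c2
  · show fval (α,β,γ) q s = γ
    refine mul_left_cancel₀ (by norm_num : (9:ℤ) ≠ 0) ?_
    simp only [fval]
    linear_combination c3

lemma min_vectors {G : F3} (hr : Red G) (ha : 0 < G.1) {x y : ℤ}
    (h : fval G x y = G.1) :
    (y = 0 ∧ (x = 1 ∨ x = -1)) ∨
    (x = 0 ∧ G.2.2 = G.1 ∧ (y = 1 ∨ y = -1)) ∨
    (G.2.1 = G.1 ∧ G.2.2 = G.1 ∧ ((x = 1 ∧ y = -1) ∨ (x = -1 ∧ y = 1))) := by
  rcases eq_or_ne y 0 with rfl | hy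
  · left
    refine ⟨rfl, ?_⟩
    obtain ⟨a,b,c⟩ := G
    simp only [fval] at h
    simp only at ha
    have hx2 : x * x = 1 := by nlinarith
    exact mul_self_eq_one_iff.mp hx2
  · have hcc : G.2.2 = G.1 := le_antisymm (h ▸ fval_ge_c hr ha hy) hr.2.1
    rcases eq_or_ne x 0 with rfl | hx
    · right; left
      refine ⟨rfl, hcc, ?_⟩
      obtain ⟨a,b,c⟩ := G
      simp only [fval] at h
      simp only at ha hcc
      have hy2 : y * y = 1 := by nlinarith
      exact mul_self_eq_one_iff.mp hy2
    · right; right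
      have h3 := fval_ge3 hr ha hx hy
      rw [h] at h3
      have hba : |G.2.1| = G.1 := by
        have g1 := hr.1
        have g2 := hr.2.1
        exact le_antisymm g1 (by linarith)
      have hbpos : 0 ≤ G.2.1 := hr.2.2 (Or.inl hba)
      have hbb : G.2.1 = G.1 := by rw [← abs_of_nonneg hbpos]; exact hba
      refine ⟨hbb, hcc, ?_⟩
      obtain ⟨a,b,c⟩ := G
      simp only at hbb hcc ha
      subst hbb
      simp only [fval] at h
      rw [hcc] at h
      have hsum : x^2 + x*y + y^2 = 1 := by
        have h9 : b * (x^2 + x*y + y^2) = b * 1 := by linear_combination h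
        exact mul_left_cancel₀ (by linarith : b ≠ 0) h9
      have hx2 : 1 ≤ x^2 := by rcases lt_or_gt_of_ne hx with h'|h' <;> nlinarith
      have hy2 : 1 ≤ y^2 := by rcases lt_or_gt_of_ne hy with h'|h' <;> nlinarith
      have hxy : x*y = -1 := by nlinarith [sq_nonneg (x+y)]
      have hs : x + y = 0 := by nlinarith [sq_nonneg (x+y)]
      have hxx : x * x = 1 := by nlinarith
      rcases mul_self_eq_one_iff.mp hxx with h' | h'
      · exact Or.inl ⟨h', by omega⟩
      · exact Or.inr ⟨h', by omega⟩

lemma aut_classify {G : F3} (ha : 0 < G.1) (hr : Red G) {U : M4}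
    (hU : mdet U = 1) (hfix : fact G U = G) :
    U = (1,0,0,1) ∨ U = (-1,0,0,-1) ∨
    (G.2.1 = 0 ∧ G.2.2 = G.1 ∧ (U = (0,-1,1,0) ∨ U = (0,1,-1,0))) ∨
    (G.2.1 = G.1 ∧ G.2.2 = G.1 ∧
      (U = (0,-1,1,1) ∨ U = (0,1,-1,-1) ∨ U = (1,1,-1,0) ∨ U = (-1,-1,1,0))) := by
  obtain ⟨p,q,r,s⟩ := U
  have h1 : fval G p r = G.1 := by
    have := congrArg Prod.fst hfix
    simp only [fact_fst] at this
    exact this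
  have hbeq : 2*G.1*p*q + G.2.1*(p*s+q*r) + 2*G.2.2*r*s = G.2.1 := by
    have := congrArg (fun z => z.2.1) hfix
    simp only [fact_snd] at this
    exact this
  simp only [mdet] at hU
  obtain ⟨a,b,c⟩ := G
  simp only at h1 hbeq ha hU ⊢
  rcases min_vectors hr ha h1 with ⟨rfl, hp⟩ | ⟨rfl, hca, hy⟩ | ⟨hba, hca, hxy⟩
  · -- r = 0
    rcases hp with rfl | rfl
    · have hs : s = 1 := by linarith
      subst hs
      have hq : q = 0 := by
        have h2 : 2*a*q = 0 := by linarith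
        rcases mul_eq_zero.mp h2 with h' | h'
        · linarith
        · exact h'
      subst hq; left; rfl
    · have hs : s = -1 := by linarith
      subst hs
      have hq : q = 0 := by
        have h2 : 2*a*q = 0 := by linarith
        rcases mul_eq_zero.mp h2 with h' | h'
        · linarith
        · exact h'
      subst hq; right; left; rfl
  · -- p = 0, c = a
    simp only at hca
    have hbabs : |b| ≤ a := hr.1
    rcases hy with rfl | rfl
    · have hq : q = -1 := by linarith
      subst hq
      have hcs : c * s = b := by linarith
      have hsle : -1 ≤ s ∧ s ≤ 1 := by
        constructor <;> nlinarith [abs_nonneg b, abs_le.mp hbabs]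
      obtain ⟨hs1, hs2⟩ := hsle
      interval_cases s
      · exfalso
        have hb : b = -c := by linarith
        have hbabs2 : |b| = a := by rw [hb, abs_neg, abs_of_pos (by linarith : (0:ℤ) < c), hca]
        have := hr.2.2 (Or.inl hbabs2)
        simp only at this
        omega
      · have hb : b = 0 := by linarith
        right; right; left
        exact ⟨hb, hca, Or.inl rfl⟩
      · have hb : b = c := by linarith
        right; right; right
        exact ⟨by omega, hca, Or.inl rfl⟩
    · have hq : q = 1 := by linarith
      subst hq
      have hcs : c * s = -b := by linarith
      have hsle : -1 ≤ s ∧ s ≤ 1 := by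
        constructor <;> nlinarith [abs_nonneg b, abs_le.mp hbabs]
      obtain ⟨hs1, hs2⟩ := hsle
      interval_cases s
      · have hb : b = c := by linarith
        right; right; right
        exact ⟨by omega, hca, Or.inr (Or.inl rfl)⟩
      · have hb : b = 0 := by linarith
        right; right; left
        exact ⟨hb, hca, Or.inr rfl⟩
      · exfalso
        have hb : b = -c := by linarith
        have hbabs2 : |b| = a := by rw [hb, abs_neg, abs_of_pos (by linarith : (0:ℤ) < c), hca]
        have := hr.2.2 (Or.inl hbabs2)
        simp only at this
        omega
  · -- b = a, c = a
    simp only at hba hca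
    rw [hba, hca] at hbeq
    right; right; right
    refine ⟨hba, hca, ?_⟩
    rcases hxy with ⟨rfl, rfl⟩ | ⟨rfl, rfl⟩
    · -- p = 1, r = -1 : det: s + q = 1
      have hsq : s + q = 1 := by linarith
      have hqs : q - s = 1 := by
        have h2 : a * (q - s) = a * 1 := by linear_combination hbeq
        exact mul_left_cancel₀ (by linarith : a ≠ 0) h2
      have hq : q = 1 := by omega
      have hs : s = 0 := by omega
      subst hq; subst hs
      right; right; left; rfl
    · -- p = -1, r = 1 : det: -s - q = 1
      have hsq : s + q = -1 := by linarith
      have hqs : s - q = 1 := by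
        have h2 : a * (s - q) = a * 1 := by linear_combination hbeq
        exact mul_left_cancel₀ (by linarith : a ≠ 0) h2
      have hq : q = -1 := by omega
      have hs : s = 0 := by omega
      subst hq; subst hs
      right; right; right; rfl

lemma hnf3 {W : M4} (hW : mdet W = 3) :
    ∃ V : M4, mdet V = 1 ∧ (W = mmul (3,0,0,1) V ∨ W = mmul (1,0,0,3) V ∨
      W = mmul (1,0,1,3) V ∨ W = mmul (1,0,2,3) V) := by
  obtain ⟨p,q,r,s⟩ := W
  simp only [mdet] at hW
  have key : ∀ p q r s : ZMod 3, p*s - q*r = 0 →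
      (p = 0 ∧ q = 0) ∨ (r = 0 ∧ s = 0) ∨ (r = p ∧ s = q) ∨ (r = 2*p ∧ s = 2*q) := by
    decide
  have h0 : ((p:ZMod 3)*(s:ZMod 3) - (q:ZMod 3)*(r:ZMod 3) = 0) := by
    have h' : (3:ℤ) ∣ (p*s - q*r) := ⟨1, by linarith⟩
    have h2 := (dvd3_iff _).mp h'
    push_cast at h2
    linear_combination h2
  have cast_sub : ∀ u v : ℤ, (u:ZMod 3) = (v:ZMod 3) → (3:ℤ) ∣ (u - v) := by
    intro u v huv
    refine (dvd3_iff _).mpr ?_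
    push_cast
    rw [huv]; ring
  rcases key _ _ _ _ h0 with ⟨ha, hb⟩ | ⟨ha, hb⟩ | ⟨ha, hb⟩ | ⟨ha, hb⟩
  · obtain ⟨p', rfl⟩ : (3:ℤ) ∣ p := by
      have := cast_sub p 0 (by simpa using ha); simpa using this
    obtain ⟨q', rfl⟩ : (3:ℤ) ∣ q := by
      have := cast_sub q 0 (by simpa using hb); simpa using this
    refine ⟨(p', q', r, s), ?_, Or.inl ?_⟩
    · refine mul_left_cancel₀ (by norm_num : (3:ℤ) ≠ 0) ?_
      simp only [mdet]
      linear_combination hW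
    · have hm : mmul ((3:ℤ),(0:ℤ),(0:ℤ),(1:ℤ)) (p',q',r,s)
          = (3*p' + 0*r, 3*q' + 0*s, 0*p' + 1*r, 0*q' + 1*s) := rfl
      rw [hm]
      exact m4ext (by ring) (by ring) (by ring) (by ring)
  · obtain ⟨r', rfl⟩ : (3:ℤ) ∣ r := by
      have := cast_sub r 0 (by simpa using ha); simpa using this
    obtain ⟨s', rfl⟩ : (3:ℤ) ∣ s := by
      have := cast_sub s 0 (by simpa using hb); simpa using this
    refine ⟨(p, q, r', s'), ?_, Or.inr (Or.inl ?_)⟩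
    · refine mul_left_cancel₀ (by norm_num : (3:ℤ) ≠ 0) ?_
      simp only [mdet]
      linear_combination hW
    · have hm : mmul ((1:ℤ),(0:ℤ),(0:ℤ),(3:ℤ)) (p,q,r',s')
          = (1*p + 0*r', 1*q + 0*s', 0*p + 3*r', 0*q + 3*s') := rfl
      rw [hm]
      exact m4ext (by ring) (by ring) (by ring) (by ring)
  · obtain ⟨r', hr'⟩ : (3:ℤ) ∣ (r - p) := cast_sub r p ha
    obtain ⟨s', hs'⟩ : (3:ℤ) ∣ (s - q) := cast_sub s q hb
    refine ⟨(p, q, r', s'), ?_, Or.inr (Or.inr (Or.inl ?_))⟩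
    · refine mul_left_cancel₀ (by norm_num : (3:ℤ) ≠ 0) ?_
      simp only [mdet]
      linear_combination hW - p*hs' + q*hr'
    · have hm : mmul ((1:ℤ),(0:ℤ),(1:ℤ),(3:ℤ)) (p,q,r',s')
          = (1*p + 0*r', 1*q + 0*s', 1*p + 3*r', 1*q + 3*s') := rfl
      rw [hm]
      exact m4ext (by ring) (by ring) (by linarith) (by linarith)
  · obtain ⟨r', hr'⟩ : (3:ℤ) ∣ (r - 2*p) := by
      have := cast_sub r (2*p) (by push_cast; rw [ha])
      simpa using this
    obtain ⟨s', hs'⟩ : (3:ℤ) ∣ (s - 2*q) := by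
      have := cast_sub s (2*q) (by push_cast; rw [hb])
      simpa using this
    refine ⟨(p, q, r', s'), ?_, Or.inr (Or.inr (Or.inr ?_))⟩
    · refine mul_left_cancel₀ (by norm_num : (3:ℤ) ≠ 0) ?_
      simp only [mdet]
      linear_combination hW - p*hs' + q*hr'
    · have hm : mmul ((1:ℤ),(0:ℤ),(2:ℤ),(3:ℤ)) (p,q,r',s')
          = (1*p + 0*r', 1*q + 0*s', 2*p + 3*r', 2*q + 3*s') := rfl
      rw [hm]
      exact m4ext (by ring) (by ring) (by linarith) (by linarith)

/-! ### counting set-up -/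

noncomputable def wt (t : F3) : ℚ :=
  if t.2.1 = t.1 ∧ t.1 = t.2.2 then 1/3 else if t.2.1 = 0 ∧ t.1 = t.2.2 then 1/2 else 1

noncomputable def ZRS (N : ℤ) : Finset F3 :=
  ((Finset.Icc 1 N) ×ˢ (Finset.Icc (-N) N) ×ˢ (Finset.Icc 1 N)).filter
    (fun t => disc t = -N ∧ Red t)

lemma mem_ZRS {N : ℤ} (hN : 0 < N) {t : F3} :
    t ∈ ZRS N ↔ disc t = -N ∧ 0 < t.1 ∧ Red t := by
  obtain ⟨a,b,c⟩ := t
  simp only [ZRS, Finset.mem_filter, Finset.mem_product, Finset.mem_Icc]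
  constructor
  · rintro ⟨⟨h1, h2, h3⟩, h4, h5⟩
    exact ⟨h4, by linarith [h1.1], h5⟩
  · rintro ⟨h4, hpos, h5⟩
    have hb := h5.1
    have hac := h5.2.1
    simp only [disc] at h4
    simp only at hb hac hpos
    have hb2 : b^2 ≤ a^2 := by nlinarith [sq_abs b, abs_le.mp hb]
    have h3a : 3*a^2 ≤ N := by nlinarith
    have haN : a ≤ N := by nlinarith
    have hcN : c ≤ N := by nlinarith
    have hbN : -N ≤ b ∧ b ≤ N := by
      obtain ⟨hb1, hb2'⟩ := abs_le.mp hb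
      constructor <;> linarith
    exact ⟨⟨⟨hpos, haN⟩, hbN, by linarith, hcN⟩, h4, h5⟩

lemma mmul_assoc (X Y Z : M4) : mmul (mmul X Y) Z = mmul X (mmul Y Z) := by
  obtain ⟨a,b,c,d⟩ := X; obtain ⟨e,f,g,h⟩ := Y; obtain ⟨i,j,k,l⟩ := Z
  exact m4ext (by simp only [mmul]; ring) (by simp only [mmul]; ring)
    (by simp only [mmul]; ring) (by simp only [mmul]; ring)

lemma fact_3I (f : F3) : fact f (3,0,0,3) = (9*f.1, 9*f.2.1, 9*f.2.2) := by
  obtain ⟨a,b,c⟩ := f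
  exact Prod.ext (by simp only [fact_fst, fval]; ring)
    (Prod.ext (by simp only [fact_snd]; ring) (by simp only [fact_trd, fval]; ring))

lemma mmul_3I (X : M4) : mmul X (3,0,0,3) = (3*X.1, 3*X.2.1, 3*X.2.2.1, 3*X.2.2.2) := by
  obtain ⟨a,b,c,d⟩ := X
  exact m4ext (by simp only [mmul]; ring) (by simp only [mmul]; ring)
    (by simp only [mmul]; ring) (by simp only [mmul]; ring)

lemma mmul_3A (A Y : M4) : mmul (3*A.1,3*A.2.1,3*A.2.2.1,3*A.2.2.2) Y
    = (3*(mmul A Y).1, 3*(mmul A Y).2.1, 3*(mmul A Y).2.2.1, 3*(mmul A Y).2.2.2) := by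
  obtain ⟨a,b,c,d⟩ := A; obtain ⟨e,f,g,h⟩ := Y
  exact m4ext (by simp only [mmul]; ring) (by simp only [mmul]; ring)
    (by simp only [mmul]; ring) (by simp only [mmul]; ring)

lemma m4cancel3 {X Y : M4}
    (h : ((3*X.1,3*X.2.1,3*X.2.2.1,3*X.2.2.2) : M4) = (3*Y.1,3*Y.2.1,3*Y.2.2.1,3*Y.2.2.2)) :
    X = Y := by
  obtain ⟨a,b,c,d⟩ := X; obtain ⟨e,f,g,h'⟩ := Y
  simp only [Prod.mk.injEq] at h
  exact m4ext (by linarith [h.1]) (by linarith [h.2.1]) (by linarith [h.2.2.1])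
    (by linarith [h.2.2.2])

lemma mdet_madj (U : M4) : mdet (madj U) = mdet U := by
  obtain ⟨p,q,r,s⟩ := U
  simp only [mdet, madj]; ring

lemma collide {M : ℤ} (hM3 : M % 3 = 1) {G : F3} (hd : disc G = -M)
    {L L' : M4} (hL : mdet L = 3) (hL' : mdet L' = 3)
    (h : Equi (fact G L) (fact G L')) :
    ∃ A V : M4, mdet A = 1 ∧ fact G A = G ∧ mdet V = 1 ∧ mmul L V = mmul A L' := by
  obtain ⟨V, hV, hfV⟩ := h
  have hBfact : fact G (mmul (mmul L V) (madj L')) = (9*G.1, 9*G.2.1, 9*G.2.2) := by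
    rw [fact_mmul, fact_mmul, hfV, ← fact_mmul, mmul_madj, hL', fact_3I]
  obtain ⟨A, hBA, hGA⟩ := rigidity hM3 hd hBfact
  have hdetB : mdet (mmul (mmul L V) (madj L')) = 9 := by
    rw [mdet_mmul, mdet_mmul, hL, hV, mdet_madj, hL']; ring
  have hdetA : mdet A = 1 := by
    rw [hBA] at hdetB
    obtain ⟨a,b,c,d⟩ := A
    simp only [mdet] at hdetB ⊢
    linarith
  refine ⟨A, V, hdetA, hGA, hV, ?_⟩
  apply m4cancel3
  calc (3*(mmul L V).1, 3*(mmul L V).2.1, 3*(mmul L V).2.2.1, 3*(mmul L V).2.2.2)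
      = mmul (mmul L V) (3,0,0,3) := (mmul_3I _).symm
    _ = mmul (mmul L V) (mmul (madj L') L') := by rw [madj_mmul, hL']
    _ = mmul (mmul (mmul L V) (madj L')) L' := (mmul_assoc _ _ _).symm
    _ = mmul (3*A.1,3*A.2.1,3*A.2.2.1,3*A.2.2.2) L' := by rw [← hBA]
    _ = _ := mmul_3A A L'

/-! ### the descent map Ψ and fibers -/

noncomputable def Psi (t : F3) : F3 :=
  if h : ∃ F, Equi t F ∧ TypeA F then red (down h.choose) else t

lemma mmul_id_right (X : M4) : mmul X (1,0,0,1) = X := by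
  obtain ⟨a,b,c,d⟩ := X
  exact m4ext (by simp only [mmul]; ring) (by simp only [mmul]; ring)
    (by simp only [mmul]; ring) (by simp only [mmul]; ring)

lemma fval01 (f : F3) : fval f 0 1 = f.2.2 := by simp only [fval]; ring
lemma fval10 (f : F3) : fval f 1 0 = f.1 := by simp only [fval]; ring

lemma ns_equi {M : ℤ} {t F : F3} (hdt : disc t = -(9*M)) (h : Equi t F) (hns : NS t) :
    NS F := by
  rintro ⟨h1, h2⟩
  have hdF : disc F = -(9*M) := by rw [equi_disc h, hdt]
  exact hns (scaled_transfer h h1 (dvd_b_of_dvd_ac hdF h1 h2) h2)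

lemma up0_eq (G : F3) : fact G (3,0,0,1) = (9*G.1, 3*G.2.1, G.2.2) := by
  obtain ⟨α,β,γ⟩ := G
  exact Prod.ext (by simp only [fact_fst, fval]; ring)
    (Prod.ext (by simp only [fact_snd]; ring) (by simp only [fact_trd, fval]; ring))

lemma upk_eq (G : F3) (k : ℤ) : fact G (1,0,k,3)
    = (fval G 1 k, 3*(G.2.1 + 2*G.2.2*k), 9*G.2.2) := by
  obtain ⟨α,β,γ⟩ := G
  exact Prod.ext (by simp only [fact_fst, fval]; try ring)
    (Prod.ext (by simp only [fact_snd]; try ring) (by simp only [fact_trd, fval]; try ring))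

lemma wk_eq (G : F3) (k : ℤ) : fact G (0,-1,3,-k)
    = (9*G.2.2, -3*(G.2.1 + 2*G.2.2*k), fval G 1 k) := by
  obtain ⟨α,β,γ⟩ := G
  exact Prod.ext (by simp only [fact_fst, fval]; ring)
    (Prod.ext (by simp only [fact_snd]; ring) (by simp only [fact_trd, fval]; ring))

lemma down_mk (x y z : ℤ) : down (9*x, 3*y, z) = (x,y,z) := by
  simp only [down]
  rw [Int.mul_ediv_cancel_left x (by norm_num), Int.mul_ediv_cancel_left y (by norm_num)]

section FiberSetup

variable {M : ℤ} (hM : 0 < M) (hM3 : M % 3 = 1)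
variable {G : F3} (hdG : disc G = -M) (haG : 0 < G.1) (hrG : Red G)

include hM3 hdG in
lemma not_dvd_c : ¬ (3:ℤ) ∣ G.2.2 := by
  intro h
  have := (aniso hM3 hdG (x := 0) (y := 1) (by rw [fval01]; exact h)).2
  norm_num at this

include hM3 hdG in
lemma not_dvd_a : ¬ (3:ℤ) ∣ G.1 := by
  intro h
  have := (aniso hM3 hdG (x := 1) (y := 0) (by rw [fval10]; exact h)).1
  norm_num at this

include hM3 hdG in
lemma not_dvd_fval1k (k : ℤ) : ¬ (3:ℤ) ∣ fval G 1 k := by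
  intro h
  have := (aniso hM3 hdG h).1
  norm_num at this

include hM3 hdG in
lemma up0_typeA : TypeA (fact G (3,0,0,1)) := by
  rw [up0_eq]
  exact ⟨⟨G.1, rfl⟩, ⟨G.2.1, rfl⟩, not_dvd_c (G := G) hM3 hdG⟩

include hM3 hdG in
lemma wk_typeA (k : ℤ) : TypeA (fact G (0,-1,3,-k)) := by
  rw [wk_eq]
  exact ⟨⟨G.2.2, rfl⟩, ⟨-(G.2.1 + 2*G.2.2*k), by ring⟩, not_dvd_fval1k (G := G) hM3 hdG k⟩

include hM3 hdG in
lemma up_ns (L : M4) (hL : L = (3,0,0,1) ∨ ∃ k:ℤ, L = (1,0,k,3)) : NS (fact G L) := by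
  rcases hL with rfl | ⟨k, rfl⟩
  · rintro ⟨-, hc⟩
    rw [up0_eq] at hc
    exact not_dvd_c hM3 hdG hc
  · rintro ⟨ha, -⟩
    rw [upk_eq] at ha
    exact not_dvd_fval1k hM3 hdG k ha

include hM hdG haG in
lemma up_pos (L : M4) (hL : L = (3,0,0,1) ∨ ∃ k:ℤ, L = (1,0,k,3)) :
    0 < (fact G L).1 := by
  rcases hL with rfl | ⟨k, rfl⟩
  · rw [fact_fst]
    exact fval_pos hdG hM haG (by norm_num)
  · rw [fact_fst]
    exact fval_pos hdG hM haG (by norm_num)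

include hdG in
lemma up_disc (L : M4) (hL3 : mdet L = 3) : disc (fact G L) = -(9*M) := by
  rw [disc_fact, hL3, hdG]; ring

include hM hM3 hdG haG hrG in
lemma psi_red_up (L W : M4) (hL3 : mdet L = 3)
    (hL : L = (3,0,0,1) ∨ ∃ k:ℤ, L = (1,0,k,3))
    (hWA : TypeA (fact G W)) (hLW : Equi (fact G L) (fact G W))
    (hdownE : Equi G (down (fact G W))) :
    Psi (red (fact G L)) = G := by
  have h9M : (0:ℤ) < 9*M := by linarith
  have hdL : disc (fact G L) = -(9*M) := up_disc hdG L hL3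
  have hpL : 0 < (fact G L).1 := up_pos hM hdG haG L hL
  obtain ⟨hrt, het⟩ := red_spec h9M hdL hpL
  set t := red (fact G L) with ht
  have hex : ∃ F, Equi t F ∧ TypeA F :=
    ⟨fact G W, equi_trans (equi_symm het) hLW, hWA⟩
  rw [Psi, dif_pos hex]
  obtain ⟨hEq0, hTA0⟩ := hex.choose_spec
  have hdd : Equi (down hex.choose) (down (fact G W)) :=
    down_equi hTA0 hWA (equi_trans (equi_symm hEq0) (equi_trans (equi_symm het) hLW))
  have hDG : Equi (down hex.choose) G := equi_trans hdd (equi_symm hdownE)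
  have hdisc : disc (down hex.choose) = -M := by
    rw [← equi_disc hDG]; exact hdG
  have hpos : 0 < (down hex.choose).1 := by
    obtain ⟨α, β, γ, hFe, hγ, hdn⟩ := typeA_decomp hTA0
    have h1 : 0 < hex.choose.1 := equi_pos h9M hdL hpL (equi_trans het hEq0)
    rw [hFe] at h1
    simp only at h1
    rw [hdn]
    simp only
    linarith
  exact red_eq_of_equi hM hdisc hpos hrG hDG

include hM hM3 hdG haG hrG in
lemma psi_fiber_subset {t : F3} (hdt : disc t = -(9*M)) (hpt : 0 < t.1) (hrt : Red t)
    (hnst : NS t) (hPsi : Psi t = G) :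
    t = red (fact G (3,0,0,1)) ∨ t = red (fact G (1,0,0,3)) ∨
    t = red (fact G (1,0,1,3)) ∨ t = red (fact G (1,0,2,3)) := by
  have h9M : (0:ℤ) < 9*M := by linarith
  have hex : ∃ F, Equi t F ∧ TypeA F := norm_typeA hdt hnst
  rw [Psi, dif_pos hex] at hPsi
  obtain ⟨hEq0, hTA0⟩ := hex.choose_spec
  set F₀ := hex.choose with hF₀
  obtain ⟨α, β, γ, hFe, hγ, hdn⟩ := typeA_decomp hTA0
  have hdF₀ : disc F₀ = -(9*M) := by rw [equi_disc hEq0, hdt]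
  have hpF₀ : 0 < F₀.1 := equi_pos h9M hdt hpt hEq0
  have hddisc : disc (down F₀) = -M := by
    rw [hdn]
    rw [hFe] at hdF₀
    simp only [disc] at hdF₀ ⊢
    refine mul_left_cancel₀ (by norm_num : (9:ℤ) ≠ 0) ?_
    linear_combination hdF₀
  have hdpos : 0 < (down F₀).1 := by
    rw [hFe] at hpF₀
    simp only at hpF₀
    rw [hdn]
    simp only
    linarith
  obtain ⟨hrd, hed⟩ := red_spec hM hddisc hdpos
  rw [hPsi] at hed
  obtain ⟨U, hU, hfU⟩ := hed
  have hGadj : fact G (madj U) = down F₀ := by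
    rw [← hfU, ← fact_mmul, mmul_madj, hU]
    exact fact_mone _
  have hF0eq : F₀ = fact (down F₀) (3,0,0,1) := by
    rw [hdn, hFe, up0_eq]
  have hW3 : mdet (mmul (madj U) (3,0,0,1)) = 3 := by
    rw [mdet_mmul, mdet_madj, hU]
    norm_num [mdet]
  obtain ⟨V, hV, hcase⟩ := hnf3 hW3
  have hkey : ∀ L : M4, mmul (madj U) (3,0,0,1) = mmul L V → t = red (fact G L) := by
    intro L hLV
    have h1 : fact G (mmul L V) = F₀ := by
      rw [← hLV, fact_mmul, hGadj, ← hF0eq]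
    have h2 : Equi (fact G L) t := by
      refine equi_trans ⟨V, hV, ?_⟩ (equi_symm hEq0)
      rw [← fact_mmul, h1]
    exact (red_eq_of_equi h9M (equi_disc (equi_symm h2) ▸ hdt) (equi_pos h9M hdt hpt (equi_symm h2))
      hrt h2).symm
  rcases hcase with h | h | h | h
  · exact Or.inl (hkey _ h)
  · exact Or.inr (Or.inl (hkey _ h))
  · exact Or.inr (Or.inr (Or.inl (hkey _ h)))
  · exact Or.inr (Or.inr (Or.inr (hkey _ h)))

end FiberSetup

lemma mmul_id_left (X : M4) : mmul (1,0,0,1) X = X := by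
  obtain ⟨a,b,c,d⟩ := X
  exact m4ext (by simp only [mmul]; ring) (by simp only [mmul]; ring)
    (by simp only [mmul]; ring) (by simp only [mmul]; ring)

lemma collide' {M : ℤ} (hM3 : M % 3 = 1) {G : F3} (hd : disc G = -M)
    {L L' V : M4} (hL : mdet L = 3) (hL' : mdet L' = 3)
    (hV : mdet V = 1) (hfV : fact (fact G L) V = fact G L') :
    ∃ A : M4, mdet A = 1 ∧ fact G A = G ∧ mmul L V = mmul A L' := by
  have hBfact : fact G (mmul (mmul L V) (madj L')) = (9*G.1, 9*G.2.1, 9*G.2.2) := by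
    rw [fact_mmul, fact_mmul, hfV, ← fact_mmul, mmul_madj, hL', fact_3I]
  obtain ⟨A, hBA, hGA⟩ := rigidity hM3 hd hBfact
  have hdetB : mdet (mmul (mmul L V) (madj L')) = 9 := by
    rw [mdet_mmul, mdet_mmul, hL, hV, mdet_madj, hL']; ring
  have hdetA : mdet A = 1 := by
    rw [hBA] at hdetB
    obtain ⟨a,b,c,d⟩ := A
    simp only [mdet] at hdetB ⊢
    linarith
  refine ⟨A, hdetA, hGA, ?_⟩
  apply m4cancel3
  calc (3*(mmul L V).1, 3*(mmul L V).2.1, 3*(mmul L V).2.2.1, 3*(mmul L V).2.2.2)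
      = mmul (mmul L V) (3,0,0,3) := (mmul_3I _).symm
    _ = mmul (mmul L V) (mmul (madj L') L') := by rw [madj_mmul, hL']
    _ = mmul (mmul (mmul L V) (madj L')) L' := (mmul_assoc _ _ _).symm
    _ = mmul (3*A.1,3*A.2.1,3*A.2.2.1,3*A.2.2.2) L' := by rw [← hBA]
    _ = _ := mmul_3A A L'

lemma fact_R_aut (x : ℤ) : fact (x,x,x) (0,-1,1,1) = (x,x,x) := by
  exact Prod.ext (by simp only [fact_fst, fval]; ring)
    (Prod.ext (by simp only [fact_snd]; ring) (by simp only [fact_trd, fval]; ring))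

lemma fact_S_aut (x : ℤ) : fact (x,0,x) (0,-1,1,0) = (x,0,x) := by
  exact Prod.ext (by simp only [fact_fst, fval]; ring)
    (Prod.ext (by simp only [fact_snd]; ring) (by simp only [fact_trd, fval]; ring))

lemma conj_rec {W R V' : M4} (hW : mdet W = 1)
    (hV' : V' = mmul (mmul W R) (madj W)) : R = mmul (madj W) (mmul V' W) := by
  rw [hV', mmul_assoc, madj_mmul, hW, mmul_id_right, ← mmul_assoc, madj_mmul, hW,
    mmul_id_left]

lemma mmul_neg_id (X : M4) : mmul (-1,0,0,-1) X = (-X.1, -X.2.1, -X.2.2.1, -X.2.2.2) := by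
  obtain ⟨a,b,c,d⟩ := X
  exact m4ext (by simp only [mmul]; ring) (by simp only [mmul]; ring)
    (by simp only [mmul]; ring) (by simp only [mmul]; ring)

lemma mmul_neg_right (X Y : M4) : mmul X (-Y.1,-Y.2.1,-Y.2.2.1,-Y.2.2.2)
    = (-(mmul X Y).1, -(mmul X Y).2.1, -(mmul X Y).2.2.1, -(mmul X Y).2.2.2) := by
  obtain ⟨a,b,c,d⟩ := X; obtain ⟨e,f,g,h⟩ := Y
  exact m4ext (by simp only [mmul]; ring) (by simp only [mmul]; ring)
    (by simp only [mmul]; ring) (by simp only [mmul]; ring)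

section FiberSetup2

variable {M : ℤ} (hM : 0 < M) (hM3 : M % 3 = 1)
variable {G : F3} (hdG : disc G = -M) (haG : 0 < G.1) (hrG : Red G)

include hM3 hdG in
lemma no_333 : ¬(G.2.1 = G.1 ∧ G.2.2 = G.1) := by
  rintro ⟨h1, h2⟩
  obtain ⟨a,b,c⟩ := G
  simp only at h1 h2
  simp only [disc] at hdG
  rw [h1, h2] at hdG
  have hdvd : (3:ℤ) ∣ M := ⟨a^2, by linear_combination hdG⟩
  omega

include hM hM3 hdG haG hrG in
lemma up_wt_one (L : M4) (hL3 : mdet L = 3)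
    (hL : L = (3,0,0,1) ∨ ∃ k:ℤ, L = (1,0,k,3))
    (hVI : ∀ A V : M4, mdet A = 1 → fact G A = G → mdet V = 1 → mmul L V = mmul A L →
      V = (1,0,0,1) ∨ V = (-1,0,0,-1)) :
    wt (red (fact G L)) = 1 := by
  have h9M : (0:ℤ) < 9*M := by linarith
  have hdL : disc (fact G L) = -(9*M) := up_disc hdG L hL3
  have hpL : 0 < (fact G L).1 := up_pos hM hdG haG L hL
  obtain ⟨hrt, het⟩ := red_spec h9M hdL hpL
  set t := red (fact G L) with ht
  have haut : ∀ R : M4, mdet R = 1 → fact t R = t →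
      R = (1,0,0,1) ∨ R = (-1,0,0,-1) := by
    intro R hdR hfR
    obtain ⟨W₀, hW₀, hfW₀⟩ := het
    have hV'fact : fact (fact G L) (mmul (mmul W₀ R) (madj W₀)) = fact G L := by
      rw [fact_mmul, fact_mmul, hfW₀, hfR, ← hfW₀, ← fact_mmul, mmul_madj, hW₀]
      exact fact_mone _
    have hdV' : mdet (mmul (mmul W₀ R) (madj W₀)) = 1 := by
      rw [mdet_mmul, mdet_mmul, hW₀, hdR, mdet_madj, hW₀]; ring
    obtain ⟨A, hdA, hGA, hLV⟩ := collide' hM3 hdG hL3 hL3 hdV' hV'fact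
    have hRrec : R = mmul (madj W₀) (mmul (mmul (mmul W₀ R) (madj W₀)) W₀) :=
      conj_rec hW₀ rfl
    rcases hVI A _ hdA hGA hdV' hLV with hE | hE
    · left
      rw [hRrec, hE, mmul_id_left, madj_mmul, hW₀]
    · right
      rw [hRrec, hE]
      have : mmul ((-1:ℤ),(0:ℤ),(0:ℤ),(-1:ℤ)) W₀
          = (-W₀.1, -W₀.2.1, -W₀.2.2.1, -W₀.2.2.2) := mmul_neg_id W₀
      rw [this, mmul_neg_right, madj_mmul, hW₀]
      rfl
  rw [wt]
  split_ifs with h1 h2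
  · exfalso
    have hts : t = (t.1, t.1, t.1) := by
      obtain ⟨x,y,z⟩ := t
      obtain ⟨hy, hz⟩ := h1
      exact Prod.ext rfl (Prod.ext hy hz.symm)
    have hfR : fact t (0,-1,1,1) = t := by rw [hts]; exact fact_R_aut t.1
    rcases haut (0,-1,1,1) (by norm_num [mdet]) hfR with h | h <;>
      simp [Prod.mk.injEq] at h
  · exfalso
    have hts : t = (t.1, 0, t.1) := by
      obtain ⟨x,y,z⟩ := t
      obtain ⟨hy, hz⟩ := h2
      exact Prod.ext rfl (Prod.ext hy hz.symm)
    have hfR : fact t (0,-1,1,0) = t := by rw [hts]; exact fact_S_aut t.1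
    rcases haut (0,-1,1,0) (by norm_num [mdet]) hfR with h | h <;>
      simp [Prod.mk.injEq] at h
  · rfl

include hM3 hdG haG hrG in
lemma up_not_equi {L L' : M4} (hL3 : mdet L = 3) (hL'3 : mdet L' = 3)
    (hcomp : ∀ A V : M4, mdet A = 1 → fact G A = G → mdet V = 1 →
      mmul L V = mmul A L' → False) :
    ¬ Equi (fact G L) (fact G L') := by
  rintro ⟨V, hV, hfV⟩
  obtain ⟨A, hdA, hGA, hLV⟩ := collide' hM3 hdG hL3 hL'3 hV hfV
  exact hcomp A V hdA hGA hV hLV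

end FiberSetup2

section FiberSetup3

variable {M : ℤ} (hM : 0 < M) (hM3 : M % 3 = 1)
variable {G : F3} (hdG : disc G = -M) (haG : 0 < G.1) (hrG : Red G)

include hM hM3 hdG haG hrG in
lemma mem_fiber (L : M4) (hL3 : mdet L = 3)
    (hL : L = (3,0,0,1) ∨ ∃ k:ℤ, L = (1,0,k,3)) :
    red (fact G L) ∈ (ZRS (9*M)).filter (fun t => NS t ∧ Psi t = G) := by
  have h9M : (0:ℤ) < 9*M := by linarith
  have hdL : disc (fact G L) = -(9*M) := up_disc hdG L hL3
  have hpL : 0 < (fact G L).1 := up_pos hM hdG haG L hL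
  obtain ⟨hrt, het⟩ := red_spec h9M hdL hpL
  have hmem : red (fact G L) ∈ ZRS (9*M) := by
    rw [mem_ZRS h9M]
    exact ⟨by rw [equi_disc het, hdL], equi_pos h9M hdL hpL het, hrt⟩
  have hns : NS (red (fact G L)) := ns_equi hdL het (up_ns hM3 hdG L hL)
  have hpsi : Psi (red (fact G L)) = G := by
    rcases hL with rfl | ⟨k, rfl⟩
    · refine psi_red_up hM hM3 hdG haG hrG _ (3,0,0,1) hL3 (Or.inl rfl)
        (up0_typeA hM3 hdG) (equi_refl _) ?_
      have hde : down (fact G (3,0,0,1)) = G := by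
        rw [up0_eq, down_mk]
      rw [hde]
      exact equi_refl G
    · refine psi_red_up hM hM3 hdG haG hrG _ (0,-1,3,-k) hL3 (Or.inr ⟨k, rfl⟩)
        (wk_typeA hM3 hdG k) ⟨(0,-1,1,0), by norm_num [mdet], ?_⟩ ?_
      · rw [← fact_mmul]
        congr 1
        exact m4ext (by ring) (by ring) (by ring) (by ring)
      · have he : fact G (0,-1,3,-k)
            = (9*G.2.2, 3*(-(G.2.1 + 2*G.2.2*k)), fval G 1 k) := by
          rw [wk_eq]
          exact Prod.ext rfl (Prod.ext (by ring) rfl)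
        rw [he, down_mk]
        refine ⟨(0,-1,1,-k), by norm_num [mdet], ?_⟩
        exact Prod.ext (by simp only [fact_fst, fval]; ring)
          (Prod.ext (by simp only [fact_snd]; ring)
            (by simp only [fact_trd, fval]; ring))
  rw [Finset.mem_filter]
  exact ⟨hmem, hns, hpsi⟩

include hM3 hdG haG hrG in
lemma aut_options {A : M4} (hdA : mdet A = 1) (hGA : fact G A = G)
    (hGne : ¬(G.2.1 = 0 ∧ G.2.2 = G.1)) :
    A = (1,0,0,1) ∨ A = (-1,0,0,-1) := by
  rcases aut_classify haG hrG hdA hGA with h | h | ⟨hb0, hca, _⟩ | ⟨hba, hca, _⟩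
  · exact Or.inl h
  · exact Or.inr h
  · exact absurd ⟨hb0, hca⟩ hGne
  · exact absurd ⟨hba, hca⟩ (no_333 hM3 hdG)

include hM3 hdG haG hrG in
lemma aut_options2 {A : M4} (hdA : mdet A = 1) (hGA : fact G A = G) :
    A = (1,0,0,1) ∨ A = (-1,0,0,-1) ∨
      (G.2.1 = 0 ∧ G.2.2 = G.1 ∧ (A = (0,-1,1,0) ∨ A = (0,1,-1,0))) := by
  rcases aut_classify haG hrG hdA hGA with h | h | ⟨hb0, hca, h⟩ | ⟨hba, hca, _⟩
  · exact Or.inl h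
  · exact Or.inr (Or.inl h)
  · exact Or.inr (Or.inr ⟨hb0, hca, h⟩)
  · exact absurd ⟨hba, hca⟩ (no_333 hM3 hdG)

include hM hM3 hdG haG hrG in
lemma red_up_ne_of {L L' : M4} (hL3 : mdet L = 3) (hL'3 : mdet L' = 3)
    (hcomp : ∀ A V : M4,
      (A = (1,0,0,1) ∨ A = (-1,0,0,-1) ∨
        (G.2.1 = 0 ∧ G.2.2 = G.1 ∧ (A = (0,-1,1,0) ∨ A = (0,1,-1,0)))) →
      mdet V = 1 → mmul L V = mmul A L' → False)
    (hL : L = (3,0,0,1) ∨ ∃ k:ℤ, L = (1,0,k,3))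
    (hL' : L' = (3,0,0,1) ∨ ∃ k:ℤ, L' = (1,0,k,3)) :
    red (fact G L) ≠ red (fact G L') := by
  intro h
  have h9M : (0:ℤ) < 9*M := by linarith
  have hdL : disc (fact G L) = -(9*M) := up_disc hdG L hL3
  have hdL' : disc (fact G L') = -(9*M) := up_disc hdG L' hL'3
  have hpL : 0 < (fact G L).1 := up_pos hM hdG haG L hL
  have hpL' : 0 < (fact G L').1 := up_pos hM hdG haG L' hL'
  obtain ⟨hrt, het⟩ := red_spec h9M hdL hpL
  obtain ⟨hrt', het'⟩ := red_spec h9M hdL' hpL'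
  have hEq : Equi (fact G L) (fact G L') :=
    equi_trans het (h ▸ equi_symm het')
  obtain ⟨V, hV, hfV⟩ := hEq
  obtain ⟨A, hdA, hGA, hLV⟩ := collide' hM3 hdG hL3 hL'3 hV hfV
  exact hcomp A V (aut_options2 hM3 hdG haG hrG hdA hGA) hV hLV

include hM hM3 hdG haG hrG in
lemma up_wt_one' (L : M4) (hL3 : mdet L = 3)
    (hL : L = (3,0,0,1) ∨ ∃ k:ℤ, L = (1,0,k,3))
    (hcomp : ∀ A V : M4,
      (A = (1,0,0,1) ∨ A = (-1,0,0,-1) ∨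
        (G.2.1 = 0 ∧ G.2.2 = G.1 ∧ (A = (0,-1,1,0) ∨ A = (0,1,-1,0)))) →
      mdet V = 1 → mmul L V = mmul A L → V = (1,0,0,1) ∨ V = (-1,0,0,-1)) :
    wt (red (fact G L)) = 1 := by
  refine up_wt_one hM hM3 hdG haG hrG L hL3 hL ?_
  intro A V hdA hGA hV hLV
  exact hcomp A V (aut_options2 hM3 hdG haG hrG hdA hGA) hV hLV

end FiberSetup3

section FiberSetup4

variable {M : ℤ} (hM : 0 < M) (hM3 : M % 3 = 1)
variable {G : F3} (hdG : disc G = -M) (haG : 0 < G.1) (hrG : Red G)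

include hM hM3 hdG haG hrG in
lemma eq01 (hb0 : G.2.1 = 0) (hca : G.2.2 = G.1) :
    red (fact G (3,0,0,1)) = red (fact G (1,0,0,3)) := by
  have h9M : (0:ℤ) < 9*M := by linarith
  have hdL : disc (fact G (3,0,0,1)) = -(9*M) := up_disc hdG _ (by norm_num [mdet])
  have hpL : 0 < (fact G (3,0,0,1)).1 := up_pos hM hdG haG _ (Or.inl rfl)
  apply red_congr h9M hdL hpL
  have e0 : fact G (3,0,0,1) = (9*G.1, 0, G.1) := by
    rw [up0_eq, hb0, hca]
    norm_num
  have e1 : fact G (1,0,0,3) = (G.1, 0, 9*G.1) := by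
    rw [upk_eq]
    exact Prod.ext (fval10 G) (Prod.ext (by rw [hb0]; ring) (by rw [hca]))
  refine ⟨(0,-1,1,0), by norm_num [mdet], ?_⟩
  rw [e0, e1]
  have h := fact_S (9*G.1) 0 G.1
  simpa using h

include hM hM3 hdG haG hrG in
lemma eq23 (hb0 : G.2.1 = 0) (hca : G.2.2 = G.1) :
    red (fact G (1,0,1,3)) = red (fact G (1,0,2,3)) := by
  have h9M : (0:ℤ) < 9*M := by linarith
  have hdL : disc (fact G (1,0,1,3)) = -(9*M) := up_disc hdG _ (by norm_num [mdet])
  have hpL : 0 < (fact G (1,0,1,3)).1 := up_pos hM hdG haG _ (Or.inr ⟨1, rfl⟩)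
  apply red_congr h9M hdL hpL
  have e2 : fact G (1,0,1,3) = (2*G.1, 6*G.1, 9*G.1) := by
    rw [upk_eq]
    refine Prod.ext ?_ (Prod.ext ?_ ?_)
    · show fval G 1 1 = 2*G.1
      simp only [fval]
      rw [show G.2.1 = 0 from hb0, show G.2.2 = G.1 from hca]; ring
    · show 3*(G.2.1 + 2*G.2.2*1) = 6*G.1
      rw [hb0, hca]; ring
    · show 9*G.2.2 = 9*G.1
      rw [hca]
  have e3 : fact G (1,0,2,3) = (5*G.1, 12*G.1, 9*G.1) := by
    rw [upk_eq]
    refine Prod.ext ?_ (Prod.ext ?_ ?_)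
    · show fval G 1 2 = 5*G.1
      simp only [fval]
      rw [show G.2.1 = 0 from hb0, show G.2.2 = G.1 from hca]; ring
    · show 3*(G.2.1 + 2*G.2.2*2) = 12*G.1
      rw [hb0, hca]; ring
    · show 9*G.2.2 = 9*G.1
      rw [hca]
  refine ⟨(-2,-3,1,1), by norm_num [mdet], ?_⟩
  rw [e2, e3]
  exact Prod.ext (by simp only [fact_fst, fval]; ring)
    (Prod.ext (by simp only [fact_snd]; ring) (by simp only [fact_trd, fval]; ring))

include hM hM3 hdG haG hrG in
lemma wt_t0 : wt (red (fact G (3,0,0,1))) = 1 := by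
  refine up_wt_one' hM hM3 hdG haG hrG _ (by norm_num [mdet]) (Or.inl rfl) ?_
  rintro A V (rfl | rfl | ⟨hb0, hca, rfl | rfl⟩) hV hLV <;>
    obtain ⟨v1,v2,v3,v4⟩ := V <;>
    simp only [mmul, mdet, Prod.mk.injEq] at hLV hV
  · left; exact m4ext (by omega) (by omega) (by omega) (by omega)
  · right; exact m4ext (by omega) (by omega) (by omega) (by omega)
  · exfalso; omega
  · exfalso; omega

include hM hM3 hdG haG hrG in
lemma wt_t1 : wt (red (fact G (1,0,0,3))) = 1 := by
  refine up_wt_one' hM hM3 hdG haG hrG _ (by norm_num [mdet]) (Or.inr ⟨0, rfl⟩) ?_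
  rintro A V (rfl | rfl | ⟨hb0, hca, rfl | rfl⟩) hV hLV <;>
    obtain ⟨v1,v2,v3,v4⟩ := V <;>
    simp only [mmul, mdet, Prod.mk.injEq] at hLV hV
  · left; exact m4ext (by omega) (by omega) (by omega) (by omega)
  · right; exact m4ext (by omega) (by omega) (by omega) (by omega)
  · exfalso; omega
  · exfalso; omega

include hM hM3 hdG haG hrG in
lemma wt_t2 : wt (red (fact G (1,0,1,3))) = 1 := by
  refine up_wt_one' hM hM3 hdG haG hrG _ (by norm_num [mdet]) (Or.inr ⟨1, rfl⟩) ?_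
  rintro A V (rfl | rfl | ⟨hb0, hca, rfl | rfl⟩) hV hLV <;>
    obtain ⟨v1,v2,v3,v4⟩ := V <;>
    simp only [mmul, mdet, Prod.mk.injEq] at hLV hV
  · left; exact m4ext (by omega) (by omega) (by omega) (by omega)
  · right; exact m4ext (by omega) (by omega) (by omega) (by omega)
  · exfalso; omega
  · exfalso; omega

include hM hM3 hdG haG hrG in
lemma wt_t3 : wt (red (fact G (1,0,2,3))) = 1 := by
  refine up_wt_one' hM hM3 hdG haG hrG _ (by norm_num [mdet]) (Or.inr ⟨2, rfl⟩) ?_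
  rintro A V (rfl | rfl | ⟨hb0, hca, rfl | rfl⟩) hV hLV <;>
    obtain ⟨v1,v2,v3,v4⟩ := V <;>
    simp only [mmul, mdet, Prod.mk.injEq] at hLV hV
  · left; exact m4ext (by omega) (by omega) (by omega) (by omega)
  · right; exact m4ext (by omega) (by omega) (by omega) (by omega)
  · exfalso; omega
  · exfalso; omega

include hM hM3 hdG haG hrG in
lemma ne02 : red (fact G (3,0,0,1)) ≠ red (fact G (1,0,1,3)) := by
  refine red_up_ne_of hM hM3 hdG haG hrG (by norm_num [mdet]) (by norm_num [mdet]) ?_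
    (Or.inl rfl) (Or.inr ⟨1, rfl⟩)
  rintro A V (rfl | rfl | ⟨hb0, hca, rfl | rfl⟩) hV hLV <;>
    obtain ⟨v1,v2,v3,v4⟩ := V <;>
    simp only [mmul, mdet, Prod.mk.injEq] at hLV hV <;>
    omega

include hM hM3 hdG haG hrG in
lemma ne_gen (hGne : ¬(G.2.1 = 0 ∧ G.2.2 = G.1)) {L L' : M4}
    (hL3 : mdet L = 3) (hL'3 : mdet L' = 3)
    (hL : L = (3,0,0,1) ∨ ∃ k:ℤ, L = (1,0,k,3))
    (hL' : L' = (3,0,0,1) ∨ ∃ k:ℤ, L' = (1,0,k,3))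
    (hcompI : ∀ V : M4, mdet V = 1 →
      mmul L V = mmul (1,0,0,1) L' → False)
    (hcompN : ∀ V : M4, mdet V = 1 →
      mmul L V = mmul (-1,0,0,-1) L' → False) :
    red (fact G L) ≠ red (fact G L') := by
  refine red_up_ne_of hM hM3 hdG haG hrG hL3 hL'3 ?_ hL hL'
  rintro A V (rfl | rfl | ⟨hb0, hca, _⟩) hV hLV
  · exact hcompI V hV hLV
  · exact hcompN V hV hLV
  · exact hGne ⟨hb0, hca⟩

end FiberSetup4

section FiberSetup5

variable {M : ℤ} (hM : 0 < M) (hM3 : M % 3 = 1)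
variable {G : F3} (hdG : disc G = -M) (haG : 0 < G.1) (hrG : Red G)

include hM hM3 hdG haG hrG in
lemma fiber_sum :
    ∑ t ∈ (ZRS (9*M)).filter (fun t => NS t ∧ Psi t = G), wt t = 4 * wt G := by
  have h9M : (0:ℤ) < 9*M := by linarith
  have hm0 := mem_fiber hM hM3 hdG haG hrG (3,0,0,1) (by norm_num [mdet]) (Or.inl rfl)
  have hm1 := mem_fiber hM hM3 hdG haG hrG (1,0,0,3) (by norm_num [mdet]) (Or.inr ⟨0, rfl⟩)
  have hm2 := mem_fiber hM hM3 hdG haG hrG (1,0,1,3) (by norm_num [mdet]) (Or.inr ⟨1, rfl⟩)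
  have hm3 := mem_fiber hM hM3 hdG haG hrG (1,0,2,3) (by norm_num [mdet]) (Or.inr ⟨2, rfl⟩)
  have hsubset : ∀ t ∈ (ZRS (9*M)).filter (fun t => NS t ∧ Psi t = G),
      t = red (fact G (3,0,0,1)) ∨ t = red (fact G (1,0,0,3)) ∨
      t = red (fact G (1,0,1,3)) ∨ t = red (fact G (1,0,2,3)) := by
    intro t ht
    rw [Finset.mem_filter, mem_ZRS h9M] at ht
    exact psi_fiber_subset hM hM3 hdG haG hrG ht.1.1 ht.1.2.1 ht.1.2.2 ht.2.1 ht.2.2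
  have hw0 := wt_t0 hM hM3 hdG haG hrG
  have hw2 := wt_t2 hM hM3 hdG haG hrG
  have hn02 := ne02 hM hM3 hdG haG hrG
  by_cases hcase : G.2.1 = 0 ∧ G.2.2 = G.1
  · obtain ⟨hb0, hca⟩ := hcase
    have he01 := eq01 hM hM3 hdG haG hrG hb0 hca
    have he23 := eq23 hM hM3 hdG haG hrG hb0 hca
    have hset : (ZRS (9*M)).filter (fun t => NS t ∧ Psi t = G)
        = {red (fact G (3,0,0,1)), red (fact G (1,0,1,3))} := by
      apply Finset.ext
      intro t
      simp only [Finset.mem_insert, Finset.mem_singleton]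
      constructor
      · intro ht
        rcases hsubset t ht with rfl | h | rfl | h
        · exact Or.inl rfl
        · exact Or.inl (h.trans he01.symm)
        · exact Or.inr rfl
        · exact Or.inr (h.trans he23.symm)
      · rintro (rfl | rfl)
        · exact hm0
        · exact hm2
    rw [hset, Finset.sum_insert (by simpa using hn02), Finset.sum_singleton, hw0, hw2]
    have hwG : wt G = 1/2 := by
      rw [wt, if_neg, if_pos ⟨hb0, hca.symm⟩]
      rintro ⟨h1, -⟩
      rw [hb0] at h1
      omega
    rw [hwG]
    norm_num
  · have hn01 : red (fact G (3,0,0,1)) ≠ red (fact G (1,0,0,3)) := by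
      refine ne_gen hM hM3 hdG haG hrG hcase (by norm_num [mdet]) (by norm_num [mdet])
        (Or.inl rfl) (Or.inr ⟨0, rfl⟩) ?_ ?_ <;>
      · intro V hV h
        obtain ⟨v1,v2,v3,v4⟩ := V
        simp only [mmul, mdet, Prod.mk.injEq] at h hV
        omega
    have hn03 : red (fact G (3,0,0,1)) ≠ red (fact G (1,0,2,3)) := by
      refine ne_gen hM hM3 hdG haG hrG hcase (by norm_num [mdet]) (by norm_num [mdet])
        (Or.inl rfl) (Or.inr ⟨2, rfl⟩) ?_ ?_ <;>
      · intro V hV h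
        obtain ⟨v1,v2,v3,v4⟩ := V
        simp only [mmul, mdet, Prod.mk.injEq] at h hV
        omega
    have hn12 : red (fact G (1,0,0,3)) ≠ red (fact G (1,0,1,3)) := by
      refine ne_gen hM hM3 hdG haG hrG hcase (by norm_num [mdet]) (by norm_num [mdet])
        (Or.inr ⟨0, rfl⟩) (Or.inr ⟨1, rfl⟩) ?_ ?_ <;>
      · intro V hV h
        obtain ⟨v1,v2,v3,v4⟩ := V
        simp only [mmul, mdet, Prod.mk.injEq] at h hV
        omega
    have hn13 : red (fact G (1,0,0,3)) ≠ red (fact G (1,0,2,3)) := by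
      refine ne_gen hM hM3 hdG haG hrG hcase (by norm_num [mdet]) (by norm_num [mdet])
        (Or.inr ⟨0, rfl⟩) (Or.inr ⟨2, rfl⟩) ?_ ?_ <;>
      · intro V hV h
        obtain ⟨v1,v2,v3,v4⟩ := V
        simp only [mmul, mdet, Prod.mk.injEq] at h hV
        omega
    have hn23 : red (fact G (1,0,1,3)) ≠ red (fact G (1,0,2,3)) := by
      refine ne_gen hM hM3 hdG haG hrG hcase (by norm_num [mdet]) (by norm_num [mdet])
        (Or.inr ⟨1, rfl⟩) (Or.inr ⟨2, rfl⟩) ?_ ?_ <;>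
      · intro V hV h
        obtain ⟨v1,v2,v3,v4⟩ := V
        simp only [mmul, mdet, Prod.mk.injEq] at h hV
        omega
    have hset : (ZRS (9*M)).filter (fun t => NS t ∧ Psi t = G)
        = {red (fact G (3,0,0,1)), red (fact G (1,0,0,3)),
           red (fact G (1,0,1,3)), red (fact G (1,0,2,3))} := by
      apply Finset.ext
      intro t
      simp only [Finset.mem_insert, Finset.mem_singleton]
      constructor
      · intro ht
        exact hsubset t ht
      · rintro (rfl | rfl | rfl | rfl)
        · exact hm0
        · exact hm1
        · exact hm2
        · exact hm3
    have hw1 := wt_t1 hM hM3 hdG haG hrG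
    have hw3 := wt_t3 hM hM3 hdG haG hrG
    rw [hset]
    rw [Finset.sum_insert (by simp [hn01, hn02, hn03]),
      Finset.sum_insert (by simp [hn12, hn13]),
      Finset.sum_insert (by simp [hn23]), Finset.sum_singleton,
      hw0, hw1, hw2, hw3]
    have hwG : wt G = 1 := by
      rw [wt, if_neg, if_neg]
      · rintro ⟨h1, h2⟩
        exact hcase ⟨h1, h2.symm⟩
      · rintro ⟨h1, h2⟩
        exact no_333 hM3 hdG ⟨h1, h2.symm⟩
    rw [hwG]
    norm_num

end FiberSetup5

/-! ### scaled part and the global sum -/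

lemma wt_mk (a b c : ℤ) : wt (a,b,c)
    = if b = a ∧ a = c then (1:ℚ)/3 else if b = 0 ∧ a = c then 1/2 else 1 := rfl

lemma wt_scale (x y z : ℤ) : wt (3*x,3*y,3*z) = wt (x,y,z) := by
  rw [wt_mk, wt_mk]
  have e1 : ((3*y : ℤ) = 3*x ∧ (3*x : ℤ) = 3*z) ↔ (y = x ∧ x = z) := by omega
  have e2 : ((3*y : ℤ) = 0 ∧ (3*x : ℤ) = 3*z) ↔ (y = 0 ∧ x = z) := by omega
  rw [if_congr e1 rfl (if_congr e2 rfl rfl)]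

lemma red_mk (a b c : ℤ) : Red (a,b,c) ↔ (|b| ≤ a ∧ a ≤ c ∧ ((|b| = a ∨ a = c) → 0 ≤ b)) :=
  Iff.rfl

lemma red_scale {x y z : ℤ} : Red (3*x,3*y,3*z) ↔ Red (x,y,z) := by
  have habs : |(3:ℤ)*y| = 3*|y| := by
    rw [abs_mul]
    norm_num
  rw [red_mk, red_mk, habs]
  constructor
  · rintro ⟨h1, h2, h3⟩
    refine ⟨by linarith, by linarith, fun h => ?_⟩
    rcases h with h | h
    · have := h3 (Or.inl (by linarith))
      linarith
    · have := h3 (Or.inr (by linarith))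
      linarith
  · rintro ⟨h1, h2, h3⟩
    refine ⟨by linarith, by linarith, fun h => ?_⟩
    rcases h with h | h
    · have := h3 (Or.inl (by linarith))
      linarith
    · have := h3 (Or.inr (by linarith))
      linarith

lemma scaled_decomp {M : ℤ} (hM : 0 < M) {t : F3}
    (ht : t ∈ (ZRS (9*M)).filter (fun t => ¬ NS t)) :
    ∃ x y z : ℤ, t = (3*x,3*y,3*z) ∧ (x,y,z) ∈ ZRS M := by
  have h9M : (0:ℤ) < 9*M := by linarith
  rw [Finset.mem_filter, mem_ZRS h9M] at ht
  obtain ⟨⟨hdt, hpt, hrt⟩, hns⟩ := ht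
  rw [NS, not_not] at hns
  obtain ⟨hda, hdc⟩ := hns
  have hdb := dvd_b_of_dvd_ac hdt hda hdc
  obtain ⟨x, hx⟩ := hda
  obtain ⟨y, hy⟩ := hdb
  obtain ⟨z, hz⟩ := hdc
  have hte : t = (3*x, 3*y, 3*z) := by
    obtain ⟨a,b,c⟩ := t
    simp only at hx hy hz
    rw [hx, hy, hz]
  refine ⟨x, y, z, hte, ?_⟩
  rw [mem_ZRS hM]
  rw [hte] at hdt hpt hrt
  refine ⟨?_, ?_, red_scale.mp hrt⟩
  · simp only [disc] at hdt ⊢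
    refine mul_left_cancel₀ (by norm_num : (9:ℤ) ≠ 0) ?_
    linear_combination hdt
  · simp only at hpt ⊢
    linarith

lemma scaled_sum {M : ℤ} (hM : 0 < M) :
    ∑ t ∈ (ZRS (9*M)).filter (fun t => ¬ NS t), wt t = ∑ G ∈ ZRS M, wt G := by
  have h9M : (0:ℤ) < 9*M := by linarith
  refine Finset.sum_nbij' (i := fun t : F3 => (t.1/3, t.2.1/3, t.2.2/3))
    (j := fun G : F3 => (3*G.1, 3*G.2.1, 3*G.2.2)) ?_ ?_ ?_ ?_ ?_
  · intro t ht
    obtain ⟨x, y, z, rfl, hmem⟩ := scaled_decomp hM ht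
    simp only
    rw [Int.mul_ediv_cancel_left x (by norm_num), Int.mul_ediv_cancel_left y (by norm_num),
      Int.mul_ediv_cancel_left z (by norm_num)]
    exact hmem
  · intro G hG
    rw [mem_ZRS hM] at hG
    obtain ⟨hdG, hpG, hrG⟩ := hG
    rw [Finset.mem_filter, mem_ZRS h9M]
    refine ⟨⟨?_, ?_, ?_⟩, ?_⟩
    · obtain ⟨a,b,c⟩ := G
      simp only [disc] at hdG ⊢
      linarith
    · simp only
      linarith
    · obtain ⟨a,b,c⟩ := G
      exact red_scale.mpr hrG
    · intro hns
      exact hns ⟨⟨G.1, rfl⟩, ⟨G.2.2, rfl⟩⟩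
  · intro t ht
    obtain ⟨x, y, z, rfl, hmem⟩ := scaled_decomp hM ht
    simp only
    rw [Int.mul_ediv_cancel_left x (by norm_num), Int.mul_ediv_cancel_left y (by norm_num),
      Int.mul_ediv_cancel_left z (by norm_num)]
  · intro G hG
    simp only
    rw [Int.mul_ediv_cancel_left _ (by norm_num : (3:ℤ) ≠ 0),
      Int.mul_ediv_cancel_left _ (by norm_num : (3:ℤ) ≠ 0),
      Int.mul_ediv_cancel_left _ (by norm_num : (3:ℤ) ≠ 0)]
  · intro t ht
    obtain ⟨x, y, z, rfl, hmem⟩ := scaled_decomp hM ht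
    simp only
    rw [Int.mul_ediv_cancel_left x (by norm_num), Int.mul_ediv_cancel_left y (by norm_num),
      Int.mul_ediv_cancel_left z (by norm_num)]
    exact (wt_scale x y z)

lemma psi_maps {M : ℤ} (hM : 0 < M) (hM3 : M % 3 = 1) :
    ∀ t ∈ (ZRS (9*M)).filter (fun t => NS t), Psi t ∈ ZRS M := by
  intro t ht
  have h9M : (0:ℤ) < 9*M := by linarith
  rw [Finset.mem_filter, mem_ZRS h9M] at ht
  obtain ⟨⟨hdt, hpt, hrt⟩, hnst⟩ := ht
  have hex : ∃ F, Equi t F ∧ TypeA F := norm_typeA hdt hnst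
  rw [Psi, dif_pos hex]
  obtain ⟨hEq0, hTA0⟩ := hex.choose_spec
  obtain ⟨α, β, γ, hFe, hγ, hdn⟩ := typeA_decomp hTA0
  have hdF₀ : disc hex.choose = -(9*M) := by rw [equi_disc hEq0, hdt]
  have hpF₀ : 0 < hex.choose.1 := equi_pos h9M hdt hpt hEq0
  have hddisc : disc (down hex.choose) = -M := by
    rw [hdn]
    rw [hFe] at hdF₀
    simp only [disc] at hdF₀ ⊢
    refine mul_left_cancel₀ (by norm_num : (9:ℤ) ≠ 0) ?_
    linear_combination hdF₀
  have hdpos : 0 < (down hex.choose).1 := by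
    rw [hFe] at hpF₀
    simp only at hpF₀
    rw [hdn]
    simp only
    linarith
  obtain ⟨hrd, hed⟩ := red_spec hM hddisc hdpos
  rw [mem_ZRS hM]
  exact ⟨by rw [equi_disc hed, hddisc], equi_pos hM hddisc hdpos hed, hrd⟩

lemma sum_ZRS_9M {M : ℤ} (hM : 0 < M) (hM3 : M % 3 = 1) :
    ∑ t ∈ ZRS (9*M), wt t = 5 * ∑ G ∈ ZRS M, wt G := by
  have hsplit := Finset.sum_filter_add_sum_filter_not (ZRS (9*M)) (fun t => NS t) wt
  have hNS : ∑ t ∈ (ZRS (9*M)).filter (fun t => NS t), wt t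
      = ∑ G ∈ ZRS M, 4 * wt G := by
    rw [← Finset.sum_fiberwise_of_maps_to (g := Psi) (psi_maps hM hM3) wt]
    refine Finset.sum_congr rfl ?_
    intro G hG
    rw [mem_ZRS hM] at hG
    rw [Finset.filter_filter]
    exact fiber_sum hM hM3 hG.1 hG.2.1 hG.2.2
  have hSC := scaled_sum (M := M) hM
  calc ∑ t ∈ ZRS (9*M), wt t
      = ∑ t ∈ (ZRS (9*M)).filter (fun t => NS t), wt t
        + ∑ t ∈ (ZRS (9*M)).filter (fun t => ¬ NS t), wt t := hsplit.symm
    _ = ∑ G ∈ ZRS M, 4 * wt G + ∑ G ∈ ZRS M, wt G := by rw [hNS, hSC]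
    _ = 5 * ∑ G ∈ ZRS M, wt G := by
        rw [← Finset.sum_add_distrib]
        rw [Finset.mul_sum]
        refine Finset.sum_congr rfl ?_
        intro x _
        ring

lemma hcn_eq {n : ℕ} (hn : 0 < n) :
    hurwitzClassNumber n = ∑ t ∈ ZRS (n:ℤ), wt t := by
  rw [hurwitzClassNumber, if_neg (Nat.pos_iff_ne_zero.mp hn)]
  refine Finset.sum_nbij' (i := fun t : ℕ × ℤ × ℕ => (((t.1:ℤ), t.2.1, (t.2.2:ℤ)) : F3))
    (j := fun t : F3 => ((t.1.toNat, t.2.1, t.2.2.toNat) : ℕ × ℤ × ℕ)) ?_ ?_ ?_ ?_ ?_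
  · intro a ha
    simp only [Finset.mem_filter, Finset.mem_product, Finset.mem_Icc] at ha
    obtain ⟨⟨⟨ha1, ha2⟩, ⟨hb1, hb2⟩, hc1, hc2⟩, hd, hr1, hr2, hr3⟩ := ha
    simp only [ZRS, Finset.mem_filter, Finset.mem_product, Finset.mem_Icc]
    refine ⟨⟨⟨by exact_mod_cast ha1, by exact_mod_cast ha2⟩, ⟨hb1, hb2⟩,
      by exact_mod_cast hc1, by exact_mod_cast hc2⟩, ?_, ?_, ?_, ?_⟩
    · exact hd
    · exact hr1
    · show (a.1:ℤ) ≤ (a.2.2:ℤ)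
      exact_mod_cast hr2
    · intro h
      refine hr3 ?_
      rcases h with h | h
      · exact Or.inl h
      · have h' : (a.1:ℤ) = (a.2.2:ℤ) := h
        exact Or.inr (by exact_mod_cast h')
  · intro t ht
    simp only [ZRS, Finset.mem_filter, Finset.mem_product, Finset.mem_Icc] at ht
    obtain ⟨⟨⟨ha1, ha2⟩, ⟨hb1, hb2⟩, hc1, hc2⟩, hd, hr1, hr2, hr3⟩ := ht
    simp only [Finset.mem_filter, Finset.mem_product, Finset.mem_Icc]
    have e1 : ((t.1.toNat : ℤ)) = t.1 := Int.toNat_of_nonneg (by linarith)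
    have e3 : ((t.2.2.toNat : ℤ)) = t.2.2 := Int.toNat_of_nonneg (by linarith)
    refine ⟨⟨⟨?_, ?_⟩, ⟨hb1, hb2⟩, ?_, ?_⟩, ?_, ?_, ?_, ?_⟩
    · omega
    · omega
    · omega
    · omega
    · rw [e1, e3]; exact hd
    · rw [e1]; exact hr1
    · omega
    · intro h
      refine hr3 ?_
      rcases h with h | h
      · exact Or.inl (by rw [← e1]; exact h)
      · exact Or.inr (by omega)
  · intro a _
    refine Prod.ext ?_ (Prod.ext rfl ?_) <;> simp
  · intro t ht
    simp only [ZRS, Finset.mem_filter, Finset.mem_product, Finset.mem_Icc] at ht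
    refine Prod.ext ?_ (Prod.ext rfl ?_)
    · exact Int.toNat_of_nonneg (by linarith [ht.1.1.1])
    · exact Int.toNat_of_nonneg (by linarith [ht.1.2.2.1])
  · intro a _
    rw [wt_mk]
    have e1 : (a.2.1 = (a.1:ℤ) ∧ a.1 = a.2.2) ↔ (a.2.1 = (a.1:ℤ) ∧ (a.1:ℤ) = (a.2.2:ℤ)) := by
      omega
    have e2 : (a.2.1 = 0 ∧ a.1 = a.2.2) ↔ (a.2.1 = 0 ∧ (a.1:ℤ) = (a.2.2:ℤ)) := by
      omega
    rw [if_congr e1 rfl (if_congr e2 rfl rfl)]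

end HCN

/-- For every integer n ≥ 0, H(3 ^ 3·n + 3 ^ 2) ≡ 0 (mod 5). -/
theorem hurwitz_congruence_stmt1 :
    ∀ n : ℕ, RatModZero 5 (hurwitzClassNumber (3 ^ 3 * n + 3 ^ 2)) := by
  intro n
  have hn : 0 < 3 ^ 3 * n + 3 ^ 2 := by positivity
  rw [HCN.hcn_eq hn]
  have hcast : ((3 ^ 3 * n + 3 ^ 2 : ℕ) : ℤ) = 9 * (3 * (n:ℤ) + 1) := by push_cast; ring
  rw [hcast]
  have hM0 : (0:ℤ) < 3 * (n:ℤ) + 1 := by positivity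
  have hM3 : (3 * (n:ℤ) + 1) % 3 = 1 := by omega
  rw [HCN.sum_ZRS_9M hM0 hM3]
  set S := ∑ G ∈ HCN.ZRS (3 * (n:ℤ) + 1), HCN.wt G with hS
  refine ⟨S, by push_cast; ring, ?_⟩
  classical
  set z : ℤ := ∑ G ∈ HCN.ZRS (3 * (n:ℤ) + 1),
      (if G.2.1 = G.1 ∧ G.1 = G.2.2 then 2 else if G.2.1 = 0 ∧ G.1 = G.2.2 then 3 else 6)
    with hz
  have h6 : S = (z : ℚ) / 6 := by
    have h1 : S = ∑ G ∈ HCN.ZRS (3 * (n:ℤ) + 1),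
        ((if G.2.1 = G.1 ∧ G.1 = G.2.2 then (2:ℤ)
          else if G.2.1 = 0 ∧ G.1 = G.2.2 then 3 else 6) : ℚ)/6 := by
      refine Finset.sum_congr rfl ?_
      intro t _
      simp only [HCN.wt]
      split_ifs <;> norm_num
    rw [h1, ← Finset.sum_div]
    congr 1
    rw [hz, Int.cast_sum]
    refine Finset.sum_congr rfl ?_
    intro x _
    split_ifs <;> norm_num
  have hden : S.den ∣ 6 := by
    rw [h6]
    have hdi : ((z : ℚ)/6) = Rat.divInt z 6 := by
      rw [Rat.divInt_eq_div]; norm_num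
    rw [hdi]
    exact_mod_cast Rat.den_dvd z 6
  intro hcon
  have : (5:ℕ) ∣ 6 := dvd_trans hcon hden
  norm_num at this
end

section
/- Let C, m, d be positive integers and α, x, y integers with C | m, gcd(αC, m/C) = 1, d | (m/C), and αCx + (m/C)y = 1. Then the set of residues u modulo m with gcd(m, 1 + αCu) = d equals the set of residues of the form −x + sd + (m/C)r modulo m, where s ranges over 0 ≤ s < m/(Cd) with gcd(s, m/(Cd)) = 1 and r ranges over 0 ≤ r < C. -/
private lemma igcd_add_mul (a b c : ℤ) : Int.gcd a (b + a * c) = Int.gcd a b := by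
  apply Nat.dvd_antisymm
  · rw [← Int.natCast_dvd_natCast]
    refine Int.dvd_coe_gcd (Int.gcd_dvd_left _ _) ?_
    have h1 : (↑(Int.gcd a (b + a * c)) : ℤ) ∣ b + a * c := Int.gcd_dvd_right _ _
    have h2 : (↑(Int.gcd a (b + a * c)) : ℤ) ∣ a * c := (Int.gcd_dvd_left _ _).mul_right c
    simpa using dvd_sub h1 h2
  · rw [← Int.natCast_dvd_natCast]
    refine Int.dvd_coe_gcd (Int.gcd_dvd_left _ _) ?_
    exact dvd_add (Int.gcd_dvd_right _ _) ((Int.gcd_dvd_left _ _).mul_right c)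

private lemma igcd_mul_cancel {a c : ℤ} (b : ℤ) (h : Int.gcd a c = 1) :
    Int.gcd (a * b) c = Int.gcd b c := by
  simp only [Int.gcd, Int.natAbs_mul]
  exact Nat.Coprime.gcd_mul_left_cancel _ h

private lemma igcd_mul_cancel_right {a c : ℤ} (b : ℤ) (h : Int.gcd a c = 1) :
    Int.gcd c (a * b) = Int.gcd c b := by
  rw [Int.gcd_comm, igcd_mul_cancel b h, Int.gcd_comm]

/-- residue class lemma à la Radu: with `C ∣ m`, `gcd(αC, m/C) = 1`,
`d ∣ m/C` and `αCx + (m/C)y = 1`, the residues `u mod m` with `gcd(m, 1 + αCu) = d`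
are exactly those of the form `-x + s d + (m/C) r` with `0 ≤ s < m/(Cd)`,
`gcd(s, m/(Cd)) = 1` and `0 ≤ r < C`. -/
theorem radu_residue_classes (C m d : ℕ) (hC : 0 < C) (hm : 0 < m) (hd : 0 < d)
    (α x y : ℤ) (hCm : C ∣ m) (hcop : Int.gcd (α * C) ((m / C : ℕ) : ℤ) = 1)
    (hdm : d ∣ m / C) (hbez : α * C * x + ((m / C : ℕ) : ℤ) * y = 1) :
    {v : ZMod m | ∃ u : ℤ, (u : ZMod m) = v ∧ Int.gcd (m : ℤ) (1 + α * C * u) = d} =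
      {v : ZMod m | ∃ s r : ℤ, 0 ≤ s ∧ s < ((m / (C * d) : ℕ) : ℤ) ∧
        Int.gcd s ((m / (C * d) : ℕ) : ℤ) = 1 ∧ 0 ≤ r ∧ r < (C : ℤ) ∧
        v = ((-x + s * d + ((m / C : ℕ) : ℤ) * r : ℤ) : ZMod m)} := by
  obtain ⟨N, hN⟩ := hCm
  obtain ⟨k, hk⟩ := hdm
  have hNval : m / C = N := by rw [hN]; exact Nat.mul_div_cancel_left N hC
  rw [hNval] at hcop hbez hk
  have hkd : m / (C * d) = k := by
    rw [← Nat.div_div_eq_div_mul, hNval, hk, Nat.mul_div_cancel_left k hd]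
  rw [hNval, hkd]
  have hNpos : 0 < N := by
    rcases Nat.eq_zero_or_pos N with h | h
    · simp [h] at hN; omega
    · exact h
  have hkpos : 0 < k := by
    rcases Nat.eq_zero_or_pos k with h | h
    · rw [h] at hk; omega
    · exact h
  -- integer cast facts
  have hmZ : (m : ℤ) = (C : ℤ) * N := by exact_mod_cast hN
  have hNZ : (N : ℤ) = (d : ℤ) * k := by exact_mod_cast hk
  -- C coprime to N
  -- gcd m z = gcd N z when gcd C z = 1
  have key : ∀ z : ℤ, Int.gcd (C : ℤ) z = 1 → Int.gcd (m : ℤ) z = Int.gcd (N : ℤ) z := by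
    intro z hz
    rw [hmZ]; exact igcd_mul_cancel _ hz
  have hgcdC : ∀ u : ℤ, Int.gcd (C : ℤ) (1 + α * C * u) = 1 := by
    intro u
    have h1 : 1 + α * C * u = 1 + (C : ℤ) * (α * u) := by ring
    rw [h1, igcd_add_mul]
    simp [Int.gcd]
  have hgcdNz : ∀ u : ℤ, Int.gcd (N : ℤ) (1 + α * C * u) = Int.gcd (N : ℤ) (u + x) := by
    intro u
    have h1 : 1 + α * C * u = α * C * (u + x) + (N : ℤ) * y := by linear_combination -hbez
    rw [h1, igcd_add_mul, igcd_mul_cancel_right _ hcop]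
  have hgcdfull : ∀ u : ℤ, Int.gcd (m : ℤ) (1 + α * C * u) = Int.gcd (N : ℤ) (u + x) := by
    intro u; rw [key _ (hgcdC u), hgcdNz u]
  have hsd : ∀ s : ℤ, Int.gcd (N : ℤ) ((d : ℤ) * s) = d * Int.gcd (k : ℤ) s := by
    intro s
    rw [hNZ, Int.gcd_mul_left]
    simp
  ext v
  simp only [Set.mem_setOf_eq]
  constructor
  · rintro ⟨u, rfl, hg⟩
    rw [hgcdfull u] at hg
    set w : ℤ := u + x with hw
    have hdw : (d : ℤ) ∣ w := by
      have := Int.gcd_dvd_right (a := (N : ℤ)) (b := w)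
      rwa [hg] at this
    set w0 : ℤ := w % (m : ℤ) with hw0
    have hmpos : (0 : ℤ) < m := by exact_mod_cast hm
    have hw0nn : 0 ≤ w0 := Int.emod_nonneg _ (by omega)
    have hw0lt : w0 < m := Int.emod_lt_of_pos _ hmpos
    have hw0eq : w0 = w + (N : ℤ) * (-((C : ℤ) * (w / (m : ℤ)))) := by
      rw [hw0, Int.emod_def]
      linear_combination -(w / (m : ℤ)) * hmZ
    have hgw0 : Int.gcd (N : ℤ) w0 = d := by rw [hw0eq, igcd_add_mul, hg]
    have hdw0 : (d : ℤ) ∣ w0 := by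
      have := Int.gcd_dvd_right (a := (N : ℤ)) (b := w0)
      rwa [hgw0] at this
    obtain ⟨t, ht⟩ := hdw0
    have hdZ : (0 : ℤ) < d := by exact_mod_cast hd
    have hkZ : (0 : ℤ) < k := by exact_mod_cast hkpos
    have ht0 : 0 ≤ t := by nlinarith
    have htlt : t < (C : ℤ) * k := by nlinarith [hmZ, hNZ]
    set s : ℤ := t % k with hs
    set r : ℤ := t / k with hr
    have hts : t = s + k * r := by rw [hs, hr]; exact (Int.emod_add_mul_ediv t k).symm
    have hs0 : 0 ≤ s := Int.emod_nonneg _ (by omega)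
    have hslt : s < k := Int.emod_lt_of_pos _ hkZ
    have hr0 : 0 ≤ r := Int.ediv_nonneg ht0 (le_of_lt hkZ)
    have hrlt : r < C := by
      rw [hr, Int.ediv_lt_iff_lt_mul hkZ]
      linarith [htlt]
    have hw0split : w0 = s * d + (N : ℤ) * r := by
      rw [ht, hts, hNZ]; ring
    have hgsk : Int.gcd s (k : ℤ) = 1 := by
      have h1 : Int.gcd (N : ℤ) w0 = d * Int.gcd (k : ℤ) s := by
        have h2 : w0 = (d : ℤ) * s + (N : ℤ) * r := by rw [hw0split]; ring
        rw [h2, igcd_add_mul, hsd]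
      rw [hgw0] at h1
      have : d * Int.gcd (k : ℤ) s = d * 1 := by omega
      have h3 : Int.gcd (k : ℤ) s = 1 := by
        exact Nat.eq_of_mul_eq_mul_left hd (by omega)
      rw [Int.gcd_comm]; exact h3
    refine ⟨s, r, hs0, hslt, hgsk, hr0, hrlt, ?_⟩
    rw [ZMod.intCast_eq_intCast_iff]
    rw [Int.ModEq]
    have : -x + s * d + (N : ℤ) * r = w0 - x := by rw [hw0split]; ring
    rw [this]
    have hmod : (w0 - x) % (m : ℤ) = (w - x) % m := by
      rw [hw0, Int.sub_emod, Int.emod_emod_of_dvd _ dvd_rfl, ← Int.sub_emod]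
    have hux : u = w - x := by rw [hw]; ring
    rw [hux, hmod]
  · rintro ⟨s, r, hs0, hslt, hgsk, hr0, hrlt, rfl⟩
    refine ⟨-x + s * d + (N : ℤ) * r, rfl, ?_⟩
    rw [hgcdfull]
    have h1 : -x + s * d + (N : ℤ) * r + x = (d : ℤ) * s + (N : ℤ) * r := by ring
    rw [h1, igcd_add_mul, hsd, Int.gcd_comm, hgsk, mul_one]
end

section
/- For every even k ≥ 2 and every integer n ≥ 1, the quantity (2k/B_k)·σ_{k−1}(n) is 3-integral, and for k ∈ {2,4,6} it is divisible by 3. -/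
open Finset

instance fact3 : Fact (Nat.Prime 3) := ⟨by norm_num⟩

lemma norm_nat_le_one (n : ℕ) : ‖(n : ℚ_[3])‖ ≤ 1 := by
  have := Padic.norm_int_le_one (p := 3) (n : ℤ)
  simpa using this

lemma norm_nat_eq_one {n : ℕ} (h : ¬ (3 ∣ n)) : ‖(n : ℚ_[3])‖ = 1 := by
  refine le_antisymm (norm_nat_le_one n) ?_
  by_contra hlt
  push_neg at hlt
  have : ‖((n : ℤ) : ℚ_[3])‖ < 1 := by simpa using hlt
  rw [Padic.norm_intCast_lt_one_iff] at this
  exact h (by exact_mod_cast this)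

lemma not_dvd_den_of_norm_le_one {q : ℚ} (h : ‖(q : ℚ_[3])‖ ≤ 1) : ¬ ((3:ℕ) ∣ q.den) := by
  intro hd
  have hden : ((q.den : ℚ)) ≠ 0 := by exact_mod_cast q.den_ne_zero
  have h1 : (q.num : ℚ) = q * q.den := by exact (Rat.mul_den_eq_num q).symm
  have h2 : ((q.num : ℚ_[3])) = (q : ℚ_[3]) * ((q.den : ℕ) : ℚ_[3]) := by
    exact_mod_cast congrArg (fun x : ℚ => (x : ℚ_[3])) h1
  have hdlt : ‖((q.den : ℕ) : ℚ_[3])‖ < 1 := by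
    have : ‖(((q.den : ℕ) : ℤ) : ℚ_[3])‖ < 1 := by
      rw [Padic.norm_intCast_lt_one_iff]; exact_mod_cast hd
    simpa using this
  have hnum : ‖(q.num : ℚ_[3])‖ < 1 := by
    rw [h2, norm_mul]
    calc ‖(q : ℚ_[3])‖ * ‖((q.den : ℕ) : ℚ_[3])‖ ≤ 1 * ‖((q.den : ℕ) : ℚ_[3])‖ := by
          apply mul_le_mul_of_nonneg_right h (norm_nonneg _)
      _ = ‖((q.den : ℕ) : ℚ_[3])‖ := one_mul _
      _ < 1 := hdlt
  rw [Padic.norm_intCast_lt_one_iff] at hnum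
  have h3n : ((3:ℤ)) ∣ q.num := by exact_mod_cast hnum
  have h3na : (3:ℕ) ∣ q.num.natAbs := by omega
  have := Nat.dvd_gcd h3na hd
  rw [q.reduced] at this
  omega

lemma choose_id {k i : ℕ} (h : i ≤ k) :
    (k + 1 - i) * (k + 1).choose i = (k + 1) * k.choose i := by
  have h1 := Nat.add_one_mul_choose_eq k (k - i)
  rw [Nat.choose_symm h] at h1
  have h2 : (k + 1).choose (k - i + 1) = (k + 1).choose i := by
    have e : k - i + 1 = (k + 1) - i := by omega
    rw [e, Nat.choose_symm (by omega)]
  rw [h2] at h1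
  have e : k - i + 1 = k + 1 - i := by omega
  rw [e] at h1
  rw [Nat.mul_comm]
  exact h1.symm

lemma val_le {m : ℕ} (hm : 2 ≤ m) : padicValNat 3 m + 2 ≤ m := by
  have key : ∀ w : ℕ, w + 3 ≤ 3 ^ (w + 1) := by
    intro w
    induction w with
    | zero => norm_num
    | succ t iht =>
      have h2 : 3 ^ (t + 1 + 1) = 3 * 3 ^ (t + 1) := by ring
      omega
  have hle : 3 ^ padicValNat 3 m ≤ m :=
    Nat.le_of_dvd (by omega) pow_padicValNat_dvd
  rcases Nat.eq_zero_or_pos (padicValNat 3 m) with h0 | h0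
  · omega
  · obtain ⟨w, hw⟩ : ∃ w, padicValNat 3 m = w + 1 := ⟨_, (Nat.succ_pred_eq_of_pos h0).symm⟩
    rw [hw] at hle ⊢
    have := key w
    omega

lemma pow_div_norm {m : ℕ} (hm : 2 ≤ m) :
    ‖(((3:ℚ) ^ m / m : ℚ) : ℚ_[3])‖ ≤ 1 / 9 := by
  set v := padicValNat 3 m with hv
  have hm0 : m ≠ 0 := by omega
  have hmsplit : m = 3 ^ v * (m / 3 ^ v) := (Nat.ordProj_mul_ordCompl_eq_self m 3).symm
  set m' := m / 3 ^ v with hm'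
  have hm'nd : ¬ (3 ∣ m') := Nat.not_dvd_ordCompl (by norm_num) hm0
  have hnorm3 : ‖((3:ℕ) : ℚ_[3])‖ = (3:ℝ)⁻¹ := by
    have := Padic.norm_p (p := 3); simpa using this
  have h3 : ‖(3 : ℚ_[3])‖ = (3:ℝ)⁻¹ := by
    have : ((3:ℕ) : ℚ_[3]) = (3 : ℚ_[3]) := by norm_cast
    rw [← this]; exact hnorm3
  have hcast : (((3:ℚ) ^ m / m : ℚ) : ℚ_[3]) = (3 : ℚ_[3]) ^ m / ((m:ℕ) : ℚ_[3]) := by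
    push_cast; ring
  rw [hcast, norm_div, norm_pow, h3]
  have hmnorm : ‖((m:ℕ) : ℚ_[3])‖ = (3:ℝ)⁻¹ ^ v := by
    rw [hmsplit]
    rw [show ((3 ^ v * m' : ℕ) : ℚ_[3]) = ((3:ℕ) : ℚ_[3]) ^ v * ((m' : ℕ) : ℚ_[3]) by push_cast; ring]
    rw [norm_mul, norm_pow, hnorm3, norm_nat_eq_one hm'nd, mul_one]
  rw [hmnorm]
  have hvm : v + 2 ≤ m := val_le hm
  rw [div_eq_mul_inv, ← pow_sub₀ ((3:ℝ)⁻¹) (by norm_num) (by omega)]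
  calc ((3:ℝ)⁻¹) ^ (m - v) ≤ ((3:ℝ)⁻¹) ^ 2 :=
        pow_le_pow_of_le_one (by norm_num) (by norm_num) (by omega)
    _ = 1 / 9 := by norm_num

lemma norm_three : ‖(3 : ℚ_[3])‖ = (3:ℝ)⁻¹ := by
  have h := Padic.norm_p (p := 3)
  have : ((3:ℕ) : ℚ_[3]) = (3 : ℚ_[3]) := by norm_cast
  rw [this] at h
  simpa using h

lemma term_norm_le {k i : ℕ} (hik : i < k) (hb : ‖((bernoulli i : ℚ) : ℚ_[3])‖ ≤ 3) :
    ‖((bernoulli i * ((k+1).choose i : ℕ) * (3:ℚ) ^ (k+1-i) / ((k:ℚ)+1) : ℚ) : ℚ_[3])‖ ≤ 1/3 := by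
  have hm2 : 2 ≤ k + 1 - i := by omega
  have hq : (bernoulli i * ((k+1).choose i : ℕ) * (3:ℚ) ^ (k+1-i) / ((k:ℚ)+1))
      = bernoulli i * (k.choose i : ℕ) * ((3:ℚ) ^ (k+1-i) / ((k+1-i : ℕ) : ℚ)) := by
    have hc : ((k + 1 - i : ℕ) : ℚ) * (((k+1).choose i : ℕ) : ℚ)
        = (((k+1 : ℕ)) : ℚ) * ((k.choose i : ℕ) : ℚ) := by
      exact_mod_cast congrArg (fun x : ℕ => (x:ℚ)) (choose_id hik.le)
    have hk1 : ((k:ℚ) + 1) ≠ 0 := by positivity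
    have hm0 : ((k + 1 - i : ℕ) : ℚ) ≠ 0 := by
      have : (k + 1 - i : ℕ) ≠ 0 := by omega
      exact_mod_cast this
    field_simp
    push_cast at hc ⊢
    linear_combination (bernoulli i) * hc
  rw [hq]
  have hsplit : ((bernoulli i * (k.choose i : ℕ) * ((3:ℚ) ^ (k+1-i) / ((k+1-i : ℕ) : ℚ)) : ℚ) : ℚ_[3])
      = ((bernoulli i : ℚ) : ℚ_[3]) * ((k.choose i : ℕ) : ℚ_[3])
        * (((3:ℚ) ^ (k+1-i) / ((k+1-i : ℕ) : ℚ) : ℚ) : ℚ_[3]) := by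
    push_cast; ring
  rw [hsplit, norm_mul, norm_mul]
  have h1 := norm_nat_le_one (k.choose i)
  have h2 := pow_div_norm hm2
  calc ‖((bernoulli i : ℚ) : ℚ_[3])‖ * ‖((k.choose i : ℕ) : ℚ_[3])‖
        * ‖(((3:ℚ) ^ (k+1-i) / ((k+1-i : ℕ) : ℚ) : ℚ) : ℚ_[3])‖
      ≤ 3 * 1 * (1/9) := by
        apply mul_le_mul _ h2 (norm_nonneg _) (by norm_num)
        exact mul_le_mul hb h1 (norm_nonneg _) (by norm_num)
    _ = 1/3 := by norm_num

lemma ultra_sub_norm {A S : ℚ_[3]} (hA : ‖A‖ = 1) (hS : ‖S‖ ≤ 1/3) : ‖A - S‖ = 1 := by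
  have hub : ‖A - S‖ ≤ 1 := by
    have h := IsUltrametricDist.norm_add_le_max A (-S)
    rw [norm_neg] at h
    have e : A + -S = A - S := by ring
    rw [e] at h
    calc ‖A - S‖ ≤ max ‖A‖ ‖S‖ := h
      _ ≤ 1 := by rw [hA]; exact max_le le_rfl (by linarith)
  have hlb : (1:ℝ) ≤ ‖A - S‖ := by
    have h := IsUltrametricDist.norm_add_le_max (A - S) S
    have e : A - S + S = A := by ring
    rw [e, hA] at h
    rcases le_max_iff.mp h with h' | h'
    · exact h'
    · linarith
  linarith

lemma bern_norm (k : ℕ) : ‖((bernoulli k : ℚ) : ℚ_[3])‖ ≤ 3 ∧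
    (2 ≤ k → Even k → ‖((bernoulli k : ℚ) : ℚ_[3])‖ = 3) := by
  induction k using Nat.strong_induction_on with
  | _ k ih =>
  rcases lt_or_ge k 2 with hk | hk
  · constructor
    · interval_cases k
      · rw [bernoulli_zero]
        rw [show ((1:ℚ) : ℚ_[3]) = 1 by norm_cast, norm_one]; norm_num
      · rw [bernoulli_one]
        rw [show (((-1/2 : ℚ)) : ℚ_[3]) = -(((2:ℕ) : ℚ_[3]))⁻¹ by push_cast; ring]
        rw [norm_neg, norm_inv, norm_nat_eq_one (by norm_num)]
        norm_num
    · intro h; omega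
  · rcases Nat.even_or_odd k with he | ho
    · -- main case
      have key : ‖((bernoulli k : ℚ) : ℚ_[3])‖ = 3 := by
        have hF := sum_range_pow 3 k
        have hL : (∑ x ∈ range 3, (x:ℚ) ^ k) = 1 + 2 ^ k := by
          rw [show (3:ℕ) = 2 + 1 from rfl, Finset.sum_range_succ, Finset.sum_range_succ,
            Finset.sum_range_succ, Finset.sum_range_zero]
          push_cast
          rw [zero_pow (by omega : k ≠ 0)]
          ring
        rw [hL, Finset.sum_range_succ] at hF
        push_cast at hF
        have hfk : bernoulli k * ((k+1).choose k : ℕ) * (3:ℚ) ^ (k+1-k) / ((k:ℚ)+1)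
            = 3 * bernoulli k := by
          rw [Nat.choose_succ_self_right, show k + 1 - k = 1 by omega]
          have hk1 : ((k:ℚ) + 1) ≠ 0 := by positivity
          push_cast
          field_simp
        rw [hfk] at hF
        have h3B : (3 : ℚ) * bernoulli k
            = (1 + 2 ^ k)
              - ∑ i ∈ range k,
                  bernoulli i * ((k+1).choose i : ℕ) * (3:ℚ) ^ (k+1-i) / ((k:ℚ)+1) := by
          linarith [hF]
        have hcast : ((3 * bernoulli k : ℚ) : ℚ_[3])
            = ((1 + 2 ^ k : ℚ) : ℚ_[3])
              - ((∑ i ∈ range k,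
                  bernoulli i * ((k+1).choose i : ℕ) * (3:ℚ) ^ (k+1-i) / ((k:ℚ)+1) : ℚ) : ℚ_[3]) := by
          rw [← Rat.cast_sub]
          exact congrArg _ h3B
        have hA : ‖((1 + 2 ^ k : ℚ) : ℚ_[3])‖ = 1 := by
          rw [show ((1 + 2 ^ k : ℚ) : ℚ_[3]) = ((1 + 2 ^ k : ℕ) : ℚ_[3]) by push_cast; ring]
          apply norm_nat_eq_one
          obtain ⟨j, hj⟩ := he
          intro hdvd
          have h2j : ¬ (3 ∣ 2 ^ j) := by
            intro hh
            have := Nat.Prime.dvd_of_dvd_pow (p := 3) (by norm_num) hh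
            omega
          have hxlt : 2 ^ j % 3 < 3 := Nat.mod_lt _ (by norm_num)
          have hxne : 2 ^ j % 3 ≠ 0 := fun h => h2j (Nat.dvd_of_mod_eq_zero h)
          have hr : 2 ^ j % 3 = 1 ∨ 2 ^ j % 3 = 2 := by omega
          have hmod2 : (1 + 2 ^ k) % 3 = 2 := by
            rw [hj, pow_add, Nat.add_mod, Nat.mul_mod]
            rcases hr with h | h <;> rw [h]
          omega
        have hS : ‖((∑ i ∈ range k,
            bernoulli i * ((k+1).choose i : ℕ) * (3:ℚ) ^ (k+1-i) / ((k:ℚ)+1) : ℚ) : ℚ_[3])‖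
            ≤ 1/3 := by
          rw [Rat.cast_sum]
          apply IsUltrametricDist.norm_sum_le_of_forall_le_of_nonneg (by norm_num)
          intro i hi
          exact term_norm_le (mem_range.mp hi) (ih i (mem_range.mp hi)).1
        have h3Bnorm : ‖((3 * bernoulli k : ℚ) : ℚ_[3])‖ = 1 := by
          rw [hcast]
          exact ultra_sub_norm hA hS
        rw [show ((3 * bernoulli k : ℚ) : ℚ_[3]) = 3 * ((bernoulli k : ℚ) : ℚ_[3]) by push_cast; ring,
          norm_mul, norm_three] at h3Bnorm
        have h3pos : (0:ℝ) < 3 := by norm_num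
        have : (3:ℝ)⁻¹ = 1/3 := by norm_num
        rw [this] at h3Bnorm
        linarith
      exact ⟨key.le, fun _ _ => key⟩
    · have hne : bernoulli k = 0 := by
        rw [bernoulli_eq_bernoulli'_of_ne_one (by omega)]
        exact bernoulli'_eq_zero_of_odd ho (by omega)
      constructor
      · rw [hne]; simp
      · intro _ hev; exact absurd hev (Nat.not_even_iff_odd.mpr ho)

lemma bern_two : bernoulli 2 = 1/6 := by
  rw [bernoulli_eq_bernoulli'_of_ne_one (by norm_num), bernoulli'_two]

lemma bern_four : bernoulli 4 = -1/30 := by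
  rw [bernoulli_eq_bernoulli'_of_ne_one (by norm_num), bernoulli'_four]

lemma bern_six : bernoulli 6 = 1/42 := by
  have h7 := sum_bernoulli' 7
  rw [show (7:ℕ) = 6+1 from rfl] at h7
  simp only [Finset.sum_range_succ, Finset.sum_range_zero] at h7
  rw [bernoulli'_zero, bernoulli'_one, bernoulli'_two, bernoulli'_three, bernoulli'_four,
    bernoulli'_eq_zero_of_odd (by decide : Odd 5) (by norm_num)] at h7
  rw [bernoulli_eq_bernoulli'_of_ne_one (by norm_num)]
  norm_num [Nat.choose] at h7
  linarith

/-- for every even `k ≥ 2` and every `n ≥ 1`, the quantity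
`(2k / B_k) · σ_{k-1}(n)` is 3-integral, and for `k ∈ {2, 4, 6}` it is divisible by 3. -/
theorem eisenstein_coefficient_three_integral (k n : ℕ) (hk : Even k) (hk2 : 2 ≤ k)
    (hn : 1 ≤ n) :
    ¬ (3 ∣ ((2 * k / bernoulli k) * ∑ d ∈ n.divisors, (d : ℚ) ^ (k - 1)).den) ∧
    (k = 2 ∨ k = 4 ∨ k = 6 →
      RatModZero 3 ((2 * k / bernoulli k) * ∑ d ∈ n.divisors, (d : ℚ) ^ (k - 1))) := by
  have hsig : (∑ d ∈ n.divisors, (d : ℚ) ^ (k - 1))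
      = ((∑ d ∈ n.divisors, d ^ (k - 1) : ℕ) : ℚ) := by push_cast; rfl
  set N : ℕ := ∑ d ∈ n.divisors, d ^ (k - 1) with hN
  constructor
  · apply not_dvd_den_of_norm_le_one
    have hb := (bern_norm k).2 hk2 hk
    rw [hsig]
    have hcast : ((2 * (k:ℚ) / bernoulli k * (N:ℚ) : ℚ) : ℚ_[3])
        = ((2 * k : ℕ) : ℚ_[3]) / ((bernoulli k : ℚ) : ℚ_[3]) * ((N : ℕ) : ℚ_[3]) := by
      push_cast; ring
    rw [hcast, norm_mul, norm_div, hb]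
    have h1 := norm_nat_le_one (2 * k)
    have h2 := norm_nat_le_one N
    have hd : ‖((2 * k : ℕ) : ℚ_[3])‖ / 3 ≤ 1/3 := by linarith
    calc ‖((2 * k : ℕ) : ℚ_[3])‖ / 3 * ‖((N : ℕ) : ℚ_[3])‖
        ≤ (1/3) * 1 := mul_le_mul hd h2 (norm_nonneg _) (by norm_num)
      _ ≤ 1 := by norm_num
  · rintro (rfl | rfl | rfl)
    · refine ⟨((8 * N : ℕ) : ℚ), ?_, ?_⟩
      · rw [hsig, bern_two]; push_cast; ring
      · rw [Rat.den_natCast]; norm_num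
    · refine ⟨(((-80) * (N : ℤ) : ℤ) : ℚ), ?_, ?_⟩
      · rw [hsig, bern_four]; push_cast; ring
      · rw [Rat.den_intCast]; norm_num
    · refine ⟨((168 * N : ℕ) : ℚ), ?_, ?_⟩
      · rw [hsig, bern_six]; push_cast; ring
      · rw [Rat.den_natCast]; norm_num
end

section
/- Let a, p, b be as follows: a a positive integer, p a prime with a_p exactly dividing b (where a_p is the p-part of a), m a non-negative integer, and u an integer with p ∤ u and u p^m ≡ 1 (mod a_p^#), where a_p^# = a / a_p. Then b u p^m (Z/(a p^{m+1})Z)^{×2} ⊆ b (Z/aZ)^{×2}. -/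
/-- The square class `b (ℤ/aℤ)^{×2}`: integers `n` with `n ≡ b u² (mod a)` for some `u`
coprime to `a`. -/
def squareClass (a b : ℤ) : Set ℤ :=
  {n : ℤ | ∃ u : ℤ, IsCoprime u a ∧ n ≡ b * u ^ 2 [ZMOD a]}

/-- write `a = p^e · A` with `p ∤ A` (so `a_p = p^e`, `a_p^# = A`), and assume
`a_p` exactly divides `b`. For `m ≥ 0` and `u` with `p ∤ u` and `u p^m ≡ 1 (mod A)`,
one has `b u p^m (ℤ/(a p^(m+1))ℤ)^{×2} ⊆ b (ℤ/aℤ)^{×2}`. -/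
theorem squareClass_inclusion (p : ℕ) (hp : p.Prime) (e : ℕ) (A : ℤ) (hA0 : 0 < A)
    (hA : ¬ (p : ℤ) ∣ A) (b : ℤ) (hb : (p : ℤ) ^ e ∣ b) (hb' : ¬ (p : ℤ) ^ (e + 1) ∣ b)
    (m : ℕ) (u : ℤ) (hu : ¬ (p : ℤ) ∣ u) (huc : u * (p : ℤ) ^ m ≡ 1 [ZMOD A]) :
    squareClass (((p : ℤ) ^ e * A) * (p : ℤ) ^ (m + 1)) (b * u * (p : ℤ) ^ m) ⊆
      squareClass ((p : ℤ) ^ e * A) b := by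
  rintro n ⟨v, hv, hn⟩
  obtain ⟨b', rfl⟩ := hb
  have hpA : IsCoprime ((p : ℤ) ^ e) A :=
    (((Nat.prime_iff_prime_int.mp hp).coprime_iff_not_dvd).mpr hA).pow_left
  obtain ⟨x, y, hxy⟩ := hpA
  -- CRT element: w ≡ v (mod A), w ≡ 1 (mod p^e)
  set w : ℤ := v * (x * (p : ℤ) ^ e) + y * A with hw
  obtain ⟨k, hk⟩ : A ∣ w - v := ⟨y * (1 - v), by linear_combination v * hxy⟩
  obtain ⟨l, hl⟩ : (p : ℤ) ^ e ∣ w - 1 := ⟨x * (v - 1), by linear_combination hxy⟩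
  obtain ⟨d, hd⟩ : A ∣ 1 - u * (p : ℤ) ^ m := huc.dvd
  -- w is coprime to p^e * A
  have hvA : IsCoprime v A :=
    IsCoprime.of_isCoprime_of_dvd_right hv ⟨(p : ℤ) ^ e * (p : ℤ) ^ (m + 1), by ring⟩
  obtain ⟨s, t, hst⟩ := hvA
  have hwA : IsCoprime w A := ⟨s, t - s * k, by linear_combination hst + s * hk⟩
  have hwp : IsCoprime w ((p : ℤ) ^ e) := ⟨1, -l, by linear_combination hl⟩
  refine ⟨w, hwp.mul_right hwA, ?_⟩
  have h1 : n ≡ (p : ℤ) ^ e * b' * u * (p : ℤ) ^ m * v ^ 2 [ZMOD (p : ℤ) ^ e * A] :=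
    hn.of_dvd ⟨(p : ℤ) ^ (m + 1), rfl⟩
  refine h1.trans (Int.modEq_iff_dvd.mpr ?_)
  exact ⟨b' * (k * (w + v) + v ^ 2 * d), by
    linear_combination ((p : ℤ) ^ e * b' * (w + v)) * hk + ((p : ℤ) ^ e * b' * v ^ 2) * hd⟩
end
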